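/- arXiv:1906.03932 — 8 statements merged into one kernel-verified Lean document; each statement's English description precedes it below -/
import Mathlib

section
/- For every integer n ≥ 3, there is no integer relative Heffter array H_{3n}(n;3), i.e. no integer H_t(n;k) with t = 3n and k = 3. -/
/-- Number of filled cells in row `i` of the partially filled array `A`. -/
def rowFilled {m n : ℕ} (A : Fin m → Fin n → Option ℤ) (i : Fin m) : ℕ :=
  (Finset.univ.filter fun j => (A i j).isSome).card

/-- Number of filled cells in column `j` of the partially filled array `A`. -/
def colFilled {m n : ℕ} (A : Fin m → Fin n → Option ℤ) (j : Fin n) : ℕ :=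
  (Finset.univ.filter fun i => (A i j).isSome).card

/-- Sum of the entries of row `i` (empty cells count as `0`). -/
def rowSum {m n : ℕ} (A : Fin m → Fin n → Option ℤ) (i : Fin m) : ℤ :=
  ∑ j, (A i j).getD 0

/-- Sum of the entries of column `j` (empty cells count as `0`). -/
def colSum {m n : ℕ} (A : Fin m → Fin n → Option ℤ) (j : Fin n) : ℤ :=
  ∑ i, (A i j).getD 0

/-- `A` is a square integer relative Heffter array `H_t(n;k)`, written with
integer entries: each row and each column has exactly `k` filled cells, each
row and column sums to `0` in `ℤ`, every entry `x` satisfies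
`1 ≤ |x| ≤ ⌊(2nk+t)/2⌋` with `|x|` not a multiple of `(2nk+t)/t` (i.e. the
class of `x` avoids the subgroup `J` of order `t`), and for every admissible
absolute value exactly one cell contains it (up to sign), so that every class
of `ZMod (2nk+t) \ J` is represented exactly once up to sign. -/
def IsIntHeffter (n k t : ℕ) (A : Fin n → Fin n → Option ℤ) : Prop :=
  (∀ i, rowFilled A i = k) ∧
  (∀ j, colFilled A j = k) ∧
  (∀ i, rowSum A i = 0) ∧
  (∀ j, colSum A j = 0) ∧
  (∀ i j x, A i j = some x →
    1 ≤ x.natAbs ∧ x.natAbs ≤ (2 * n * k + t) / 2 ∧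
      ¬ ((2 * n * k + t) / t ∣ x.natAbs)) ∧
  (∀ x : ℕ, 1 ≤ x → x ≤ (2 * n * k + t) / 2 → ¬ ((2 * n * k + t) / t ∣ x) →
    ∃! p : Fin n × Fin n, A p.1 p.2 = some (x : ℤ) ∨ A p.1 p.2 = some (-(x : ℤ)))

/-- A square partially filled integer array is shiftable if every row and every
column contains as many positive entries as negative entries. -/
def Shiftable {n : ℕ} (A : Fin n → Fin n → Option ℤ) : Prop :=
  (∀ i : Fin n, (Finset.univ.filter fun j => 0 < (A i j).getD 0).card =
      (Finset.univ.filter fun j => (A i j).getD 0 < 0).card) ∧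
  (∀ j : Fin n, (Finset.univ.filter fun i => 0 < (A i j).getD 0).card =
      (Finset.univ.filter fun i => (A i j).getD 0 < 0).card)

/-- `A` is cyclically `k`-diagonal: its filled cells are exactly those of `k`
consecutive cyclic diagonals (cell `(r,c)` lies on diagonal `r - c (mod n)`). -/
def CycDiagonal {n : ℕ} (k : ℕ) (A : Fin n → Fin n → Option ℤ) : Prop :=
  ∃ d : ZMod n, ∀ r c : Fin n, (A r c).isSome ↔
    ∃ j : ℕ, j < k ∧ ((r : ℕ) : ZMod n) - ((c : ℕ) : ZMod n) = d + (j : ZMod n)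

/-- `A` (of size `N` with `s ∣ N`) is cyclically `(s,k)`-diagonal: it is obtained
from a cyclically `k`-diagonal `(N/s) × (N/s)` array by blowing up each cell into
an `s × s` block and then cyclically shifting the columns by some offset. -/
def CycSKDiagonal (s k : ℕ) {N : ℕ} (A : Fin N → Fin N → Option ℤ) : Prop :=
  s ∣ N ∧ ∃ (d : ZMod (N / s)) (off : ℕ), ∀ r c : Fin N, (A r c).isSome ↔
    ∃ j : ℕ, j < k ∧
      (((r : ℕ) / s : ℕ) : ZMod (N / s)) - (((((c : ℕ) + off) % N) / s : ℕ) : ZMod (N / s))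
        = d + (j : ZMod (N / s))

/-- The support of a partially filled integer array: the set of absolute values
of its entries. -/
def suppSet {m n : ℕ} (A : Fin m → Fin n → Option ℤ) : Set ℕ :=
  {a | ∃ i j x, A i j = some x ∧ x.natAbs = a}

/-- The entries of `A` have pairwise distinct absolute values. -/
def DistinctAbs {m n : ℕ} (A : Fin m → Fin n → Option ℤ) : Prop :=
  ∀ i j i' j' x y, A i j = some x → A i' j' = some y →
    x.natAbs = y.natAbs → (i, j) = (i', j')

/-- The skeleton of a partially filled array: the set of its filled positions. -/
def skel {m n : ℕ} (A : Fin m → Fin n → Option ℤ) : Set (Fin m × Fin n) :=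
  {p | (A p.1 p.2).isSome}

/-! Weigh an integer `x` by the one of `±x` that is `≡ 1 (mod 3)`, and by `0` if `3 ∣ x`.
The weight is even, and three integers prime to `3` with sum `0` are congruent mod `3`, so
the weights of such a triple also add up to `0`. Hence in an integer `H_{3n}(n;3)` every
column has total weight `0`, and so does the whole array; but the total weight is also the
sum of the weights of `1, …, ⌊9n/2⌋`, and these partial sums (`-1` per block `3L+1, 3L+2, 3L+3`)
vanish only for the empty range. -/

def mod3Weight (x : ℤ) : ℤ :=
  if x % 3 = 1 then x else if x % 3 = 2 then -x else 0

lemma mod3Weight_neg (x : ℤ) : mod3Weight (-x) = mod3Weight x := by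
  unfold mod3Weight; split_ifs <;> omega

lemma mod3Weight_of_three_dvd {x : ℤ} (hx : 3 ∣ x) : mod3Weight x = 0 := by
  unfold mod3Weight; split_ifs <;> omega

lemma mod3Weight_add_add_eq_zero {x y z : ℤ} (hx : ¬ 3 ∣ x) (hy : ¬ 3 ∣ y) (hz : ¬ 3 ∣ z)
    (h : x + y + z = 0) : mod3Weight x + mod3Weight y + mod3Weight z = 0 := by
  unfold mod3Weight; split_ifs <;> omega

lemma sum_mod3Weight_Icc (M : ℕ) :
    let S := ∑ a ∈ Finset.Icc 1 M, mod3Weight a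
    (M % 3 = 0 → S = -(M / 3 : ℕ)) ∧ (M % 3 = 1 → S = 2 * (M / 3 : ℕ) + 1) ∧
      (M % 3 = 2 → S = -(M / 3 : ℕ) - 1) := by
  induction M with
  | zero => simp
  | succ M ih =>
    simp only at ih ⊢
    rw [Finset.sum_Icc_succ_top (by omega)]
    unfold mod3Weight at *
    split_ifs <;> omega

lemma sum_mod3Weight_Icc_ne_zero {M : ℕ} (hM : 0 < M) :
    ∑ a ∈ Finset.Icc 1 M, mod3Weight a ≠ 0 := by
  have := sum_mod3Weight_Icc M
  omega

section OptionArray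

variable {ι : Type*} [Fintype ι] {β : Type*} [AddCommMonoid β]

lemma sum_getD_eq_sum_filter_isSome (v : ι → Option ℤ) {f : ℤ → β} (hf : f 0 = 0) :
    ∑ i, f ((v i).getD 0) =
      ∑ i ∈ Finset.univ.filter (fun i => (v i).isSome), f ((v i).getD 0) := by
  refine (Finset.sum_filter_of_ne fun i _ hi => ?_).symm
  cases h : v i
  · simp [h, hf] at hi
  · rfl

lemma sum_getD_eq_sum_of_existsUnique (v : ι → Option ℤ) (D : Finset ℕ)
    (hmem : ∀ i x, v i = some x → x.natAbs ∈ D)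
    (huniq : ∀ a ∈ D, ∃! i, v i = some (a : ℤ) ∨ v i = some (-(a : ℤ)))
    {f : ℤ → β} (hf : f 0 = 0) (hneg : ∀ x, f (-x) = f x) :
    ∑ i, f ((v i).getD 0) = ∑ a ∈ D, f a := by
  have filled : ∀ i ∈ Finset.univ.filter (fun i => (v i).isSome), ∃ x, v i = some x :=
    fun i hi => Option.isSome_iff_exists.mp (Finset.mem_filter.mp hi).2
  have some_natAbs {i : ι} {x : ℤ} (h : v i = some x) :
      v i = some (x.natAbs : ℤ) ∨ v i = some (-(x.natAbs : ℤ)) := by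
    rcases Int.natAbs_eq x with hx | hx
    · exact Or.inl (hx ▸ h)
    · exact Or.inr (hx ▸ h)
  rw [sum_getD_eq_sum_filter_isSome v hf]
  refine Finset.sum_bij (fun i _ => ((v i).getD 0).natAbs) ?_ ?_ ?_ ?_
  · intro i hi
    obtain ⟨x, hx⟩ := filled i hi
    simpa [hx] using hmem i x hx
  · intro i hi j hj hij
    obtain ⟨x, hx⟩ := filled i hi
    obtain ⟨y, hy⟩ := filled j hj
    simp only [hx, hy, Option.getD_some] at hij
    refine (huniq _ (hmem i x hx)).unique (some_natAbs hx) ?_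
    simpa [hij] using some_natAbs hy
  · intro a ha
    obtain ⟨i, hi, -⟩ := huniq a ha
    refine ⟨i, ?_, ?_⟩ <;> rcases hi with h | h <;> simp [h]
  · intro i hi
    obtain ⟨x, hx⟩ := filled i hi
    simp only [hx, Option.getD_some, Int.natCast_natAbs]
    rcases abs_choice x with h | h <;> simp [h, hneg]

lemma sum_mod3Weight_getD_eq_zero [DecidableEq ι] (v : ι → Option ℤ)
    (hcard : (Finset.univ.filter fun i => (v i).isSome).card = 3)
    (hsum : ∑ i, (v i).getD 0 = 0) (hndvd : ∀ i x, v i = some x → ¬ 3 ∣ x) :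
    ∑ i, mod3Weight ((v i).getD 0) = 0 := by
  obtain ⟨a, b, c, hab, hac, hbc, hfilled⟩ := Finset.card_eq_three.mp hcard
  have sum_eq {f : ℤ → ℤ} (hf : f 0 = 0) :
      ∑ i, f ((v i).getD 0) = f ((v a).getD 0) + f ((v b).getD 0) + f ((v c).getD 0) := by
    rw [sum_getD_eq_sum_filter_isSome v hf, hfilled, Finset.sum_insert (by simp [hab, hac]),
      Finset.sum_pair hbc, add_assoc]
  have entry_ndvd (i : ι) (hi : i ∈ ({a, b, c} : Finset ι)) : ¬ 3 ∣ (v i).getD 0 := by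
    rw [← hfilled] at hi
    obtain ⟨x, hx⟩ := Option.isSome_iff_exists.mp (Finset.mem_filter.mp hi).2
    simpa [hx] using hndvd i x hx
  rw [sum_eq (mod3Weight_of_three_dvd (dvd_zero 3))]
  exact mod3Weight_add_add_eq_zero (entry_ndvd a (by simp)) (entry_ndvd b (by simp))
    (entry_ndvd c (by simp)) (by simpa using (sum_eq (f := id) rfl).symm.trans hsum)

end OptionArray

/-- for every `n ≥ 3` there is no integer `H_{3n}(n;3)`. -/
theorem no_intHeffter_H3n (n : ℕ) (hn : 3 ≤ n) :
    ¬ ∃ A : Fin n → Fin n → Option ℤ, IsIntHeffter n 3 (3 * n) A := by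
  rintro ⟨A, -, hcolFilled, -, hcolSum, hentry, hunique⟩
  have hJ : (2 * n * 3 + 3 * n) / (3 * n) = 3 := by
    rw [show 2 * n * 3 + 3 * n = 3 * n * 3 by ring, Nat.mul_div_cancel_left _ (by omega)]
  rw [hJ] at hentry hunique
  set M := (2 * n * 3 + 3 * n) / 2 with hM
  set D := (Finset.Icc 1 M).filter (¬ 3 ∣ ·)
  refine sum_mod3Weight_Icc_ne_zero (M := M) (by omega) ?_
  calc ∑ a ∈ Finset.Icc 1 M, mod3Weight a
      = ∑ a ∈ D, mod3Weight a := by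
        refine (Finset.sum_filter_of_ne fun a _ ha => ?_).symm
        exact fun h3 => ha (mod3Weight_of_three_dvd (by exact_mod_cast h3))
    _ = ∑ p : Fin n × Fin n, mod3Weight ((A p.1 p.2).getD 0) := by
        refine (sum_getD_eq_sum_of_existsUnique _ D (fun p x hx => ?_) (fun a ha => ?_)
          (mod3Weight_of_three_dvd (dvd_zero 3)) mod3Weight_neg).symm
        · obtain ⟨h1, h2, h3⟩ := hentry p.1 p.2 x hx
          simp [D, h1, h2, h3]
        · simp only [D, Finset.mem_filter, Finset.mem_Icc] at ha
          exact hunique a ha.1.1 ha.1.2 ha.2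
    _ = ∑ j, ∑ i, mod3Weight ((A i j).getD 0) := by rw [Fintype.sum_prod_type, Finset.sum_comm]
    _ = 0 := Finset.sum_eq_zero fun j _ =>
        sum_mod3Weight_getD_eq_zero _ (hcolFilled j) (hcolSum j) fun i x hx => by
          have := (hentry i j x hx).2.2
          omega
end

section
/- If there exists an integer relative Heffter array H_k(n;k) (the case t = k), then necessarily one of the following holds: (1) k is odd and n ≡ 0 or 3 (mod 4); (2) k ≡ 2 (mod 4) and n is even; (3) k ≡ 0 (mod 4). -/
/-! The entries of an integer `H_k(n;k)` sum to `0`, so the sum of their absolute values is even.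
With `v = (2n+1)k`, these absolute values are the integers in `[1, ⌊v/2⌋]` not divisible by
`v/k = 2n+1`, each taken once. Their sum is therefore explicit: it is `n(2n+1)b²` for `k = 2b`
and `n(n+1)/2 + n(2n+1)b(b+1)` for `k = 2b+1`, and its parity gives the conditions on `n`, `k`. -/

open Finset

theorem Finset.even_sum_natAbs_of_sum_eq_zero {ι : Type*} (s : Finset ι) (f : ι → ℤ)
    (h : ∑ i ∈ s, f i = 0) : Even (∑ i ∈ s, (f i).natAbs) := by
  have hdiff : Even (∑ i ∈ s, (|f i| - f i)) :=
    even_sum _ fun i _ => by simp [Int.even_sub, even_abs]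
  rw [sum_sub_distrib, h, sub_zero] at hdiff
  rw [← Int.even_coe_nat]
  simpa using hdiff

theorem Option.natAbs_getD_eq_iff (o : Option ℤ) {a : ℕ} (ha : a ≠ 0) :
    (o.getD 0).natAbs = a ↔ o = some (a : ℤ) ∨ o = some (-(a : ℤ)) := by
  cases o with
  | none => simp [eq_comm, ha]
  | some x => simp [Int.natAbs_eq_iff]

theorem Finset.sum_Icc_one_id_mul_two (M : ℕ) : (∑ i ∈ Icc 1 M, i) * 2 = M * (M + 1) := by
  induction M with
  | zero => simp
  | succ M ih => rw [sum_Icc_succ_top (by omega), add_mul, ih]; ring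

theorem Finset.sum_Icc_filter_dvd {q : ℕ} (hq : 0 < q) (M : ℕ) :
    ∑ x ∈ Icc 1 M with q ∣ x, x = q * ∑ i ∈ Icc 1 (M / q), i := by
  have himage : {x ∈ Icc 1 M | q ∣ x} = (Icc 1 (M / q)).image (q * ·) := by
    ext x
    simp only [mem_filter, mem_Icc, mem_image]
    constructor
    · rintro ⟨⟨hx1, hxM⟩, i, rfl⟩
      refine ⟨i, ⟨Nat.pos_of_mul_pos_left hx1, ?_⟩, rfl⟩
      exact (Nat.le_div_iff_mul_le hq).2 (by linarith)
    · rintro ⟨i, ⟨hi1, hiM⟩, rfl⟩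
      refine ⟨⟨Nat.mul_pos hq hi1, ?_⟩, dvd_mul_right q i⟩
      have := (Nat.le_div_iff_mul_le hq).1 hiM
      linarith
  rw [himage, sum_image fun a _ b _ hab => Nat.eq_of_mul_eq_mul_left hq hab, mul_sum]

theorem Finset.sum_Icc_filter_not_dvd_mul_two {q : ℕ} (hq : 0 < q) (M : ℕ) :
    (∑ x ∈ Icc 1 M with ¬ q ∣ x, x) * 2 + q * (M / q * (M / q + 1)) = M * (M + 1) := by
  rw [← sum_Icc_one_id_mul_two M, ← sum_filter_add_sum_filter_not (Icc 1 M) (q ∣ ·),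
    sum_Icc_filter_dvd hq, ← sum_Icc_one_id_mul_two (M / q)]
  ring

def admissibleAbs (v t : ℕ) : Finset ℕ := {x ∈ Icc 1 (v / 2) | ¬ v / t ∣ x}

@[simp]
theorem mem_admissibleAbs {v t x : ℕ} :
    x ∈ admissibleAbs v t ↔ (1 ≤ x ∧ x ≤ v / 2) ∧ ¬ v / t ∣ x := by
  simp [admissibleAbs]

namespace IsIntHeffter

variable {n k t : ℕ} {A : Fin n → Fin n → Option ℤ}

theorem sum_entries_eq_zero (hA : IsIntHeffter n k t A) :
    ∑ p : Fin n × Fin n, (A p.1 p.2).getD 0 = 0 := by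
  rw [Fintype.sum_prod_type]
  exact sum_eq_zero fun i _ => hA.2.2.1 i

theorem natAbs_entry_mem_admissibleAbs (hA : IsIntHeffter n k t A) {p : Fin n × Fin n}
    (hp : ((A p.1 p.2).getD 0).natAbs ≠ 0) :
    ((A p.1 p.2).getD 0).natAbs ∈ admissibleAbs (2 * n * k + t) t := by
  cases h : A p.1 p.2 with
  | none => simp [h] at hp
  | some x =>
    obtain ⟨hx1, hxM, hxJ⟩ := hA.2.2.2.2.1 p.1 p.2 x h
    simpa using ⟨⟨hx1, hxM⟩, hxJ⟩

theorem sum_natAbs_entries (hA : IsIntHeffter n k t A) :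
    ∑ p : Fin n × Fin n, ((A p.1 p.2).getD 0).natAbs =
      ∑ x ∈ admissibleAbs (2 * n * k + t) t, x := by
  rw [← sum_filter_ne_zero]
  refine sum_nbij (fun p => ((A p.1 p.2).getD 0).natAbs) ?_ ?_ ?_ fun _ _ => rfl
  · intro p hp
    exact hA.natAbs_entry_mem_admissibleAbs (mem_filter.1 hp).2
  · intro p hp p' _ hpp'
    have hp0 := (mem_filter.1 hp).2
    obtain ⟨⟨ha1, haM⟩, haJ⟩ := mem_admissibleAbs.1 (hA.natAbs_entry_mem_admissibleAbs hp0)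
    obtain ⟨_, -, huniq⟩ := hA.2.2.2.2.2 _ ha1 haM haJ
    exact (huniq p ((Option.natAbs_getD_eq_iff _ hp0).1 rfl)).trans
      (huniq p' ((Option.natAbs_getD_eq_iff _ hp0).1 hpp'.symm)).symm
  · intro a ha
    obtain ⟨⟨ha1, haM⟩, haJ⟩ := mem_admissibleAbs.1 ha
    obtain ⟨p, hp, -⟩ := hA.2.2.2.2.2 a ha1 haM haJ
    have hpa := (Option.natAbs_getD_eq_iff _ (by omega)).2 hp
    exact ⟨p, mem_filter.2 ⟨mem_univ p, by omega⟩, hpa⟩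

theorem even_sum_admissibleAbs (hA : IsIntHeffter n k t A) :
    Even (∑ x ∈ admissibleAbs (2 * n * k + t) t, x) :=
  hA.sum_natAbs_entries ▸ even_sum_natAbs_of_sum_eq_zero _ _ hA.sum_entries_eq_zero

end IsIntHeffter

theorem sum_admissibleAbs_even_order (n b : ℕ) :
    ∑ x ∈ admissibleAbs (2 * n * (2 * b) + 2 * b) (2 * b), x = n * (2 * n + 1) * b * b := by
  rcases b.eq_zero_or_pos with rfl | hb
  · simp [admissibleAbs]
  have hv : 2 * n * (2 * b) + 2 * b = 2 * b * (2 * n + 1) := by ring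
  have hM : (2 * n * (2 * b) + 2 * b) / 2 = (2 * n + 1) * b := by
    rw [hv, mul_assoc, Nat.mul_div_cancel_left _ two_pos, mul_comm]
  have key := sum_Icc_filter_not_dvd_mul_two (q := 2 * n + 1) (by omega) ((2 * n + 1) * b)
  rw [Nat.mul_div_cancel_left _ (by omega)] at key
  rw [admissibleAbs, hM, hv, Nat.mul_div_cancel_left _ (by omega)]
  nlinarith

theorem sum_admissibleAbs_odd_order_mul_two (n b : ℕ) :
    (∑ x ∈ admissibleAbs (2 * n * (2 * b + 1) + (2 * b + 1)) (2 * b + 1), x) * 2 =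
      n * (n + 1) + 2 * n * (2 * n + 1) * (b * (b + 1)) := by
  have hv : 2 * n * (2 * b + 1) + (2 * b + 1) = (2 * b + 1) * (2 * n + 1) := by ring
  have hM : (2 * n * (2 * b + 1) + (2 * b + 1)) / 2 = n + (2 * n + 1) * b := by
    rw [show 2 * n * (2 * b + 1) + (2 * b + 1) = 2 * (n + (2 * n + 1) * b) + 1 by ring]
    omega
  have hc : (n + (2 * n + 1) * b) / (2 * n + 1) = b := by
    rw [Nat.add_mul_div_left _ _ (by omega), Nat.div_eq_of_lt (by omega), zero_add]
  have key := sum_Icc_filter_not_dvd_mul_two (q := 2 * n + 1) (by omega) (n + (2 * n + 1) * b)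
  rw [hc] at key
  rw [admissibleAbs, hM, hv, Nat.mul_div_cancel_left _ (by omega)]
  nlinarith

theorem Nat.four_dvd_mul_succ_self_iff (n : ℕ) :
    4 ∣ n * (n + 1) ↔ n % 4 = 0 ∨ n % 4 = 3 := by
  rw [Nat.dvd_iff_mod_eq_zero, Nat.mul_mod, Nat.add_mod]
  have h := Nat.mod_lt n (by norm_num : 4 > 0)
  interval_cases n % 4 <;> simp

/-- necessary conditions for the existence of an integer `H_k(n;k)`. -/
theorem intHeffter_Hk_necessary (n k : ℕ)
    (h : ∃ A : Fin n → Fin n → Option ℤ, IsIntHeffter n k k A) :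
    (Odd k ∧ (n % 4 = 0 ∨ n % 4 = 3)) ∨
    (k % 4 = 2 ∧ Even n) ∨
    (k % 4 = 0) := by
  obtain ⟨A, hA⟩ := h
  have hS := hA.even_sum_admissibleAbs
  rcases Nat.even_or_odd' k with ⟨b, rfl | rfl⟩
  · rw [sum_admissibleAbs_even_order] at hS
    have hnb : Even n ∨ Even b := by simpa [Nat.even_mul, Nat.even_add_one, parity_simps] using hS
    rcases Nat.even_or_odd b with ⟨c, rfl⟩ | hb
    · exact Or.inr (Or.inr (by omega))
    · obtain ⟨c, rfl⟩ := hb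
      exact Or.inr (Or.inl ⟨by omega, hnb.resolve_right (by simp [parity_simps])⟩)
  · obtain ⟨s, hs⟩ := hS
    obtain ⟨m, hm⟩ := Nat.even_mul_succ_self b
    have h4 : 4 ∣ n * (n + 1) := by
      have := sum_admissibleAbs_odd_order_mul_two n b
      rw [hs, hm] at this
      exact (Nat.dvd_add_right (dvd_mul_right 4 (n * (2 * n + 1) * m))).1 ⟨s, by linarith⟩
    exact Or.inl ⟨odd_two_mul_add_one b, (Nat.four_dvd_mul_succ_self_iff n).1 h4⟩
end

section
/- Let A be a simple relative Heffter array H_t(m,n;s,k), and let v = 2nk + t = 2ms + t. Then there exist a cyclic C_s-decomposition D_r and a cyclic C_k-decomposition D_c of the complete multipartite graph K_{(v/t)×t} (with v/t parts of size t) such that D_r and D_c are orthogonal. -/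
/-- The subgroup of `ZMod v` of order `t` (for `t ∣ v`): the multiples of `v/t`. -/
def relSubgroup (v t : ℕ) : AddSubgroup (ZMod v) :=
  AddSubgroup.zmultiples ((v / t : ℕ) : ZMod v)

/-- `A` is a Heffter array `H_t(m,n;s,k)` over `ZMod (2nk+t)` relative to the
subgroup `J` of order `t`: each row has exactly `s` filled cells, each column
exactly `k`, no entry lies in `J`, for every `x ∉ J` exactly one cell contains
`x` or `-x`, and every row and column sums to `0`. -/
def IsRelHeffter (m n s k t : ℕ)
    (A : Fin m → Fin n → Option (ZMod (2 * n * k + t))) : Prop :=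
  (∀ i, (Finset.univ.filter fun j => (A i j).isSome).card = s) ∧
  (∀ j, (Finset.univ.filter fun i => (A i j).isSome).card = k) ∧
  (∀ i j x, A i j = some x → x ∉ relSubgroup (2 * n * k + t) t) ∧
  (∀ x : ZMod (2 * n * k + t), x ∉ relSubgroup (2 * n * k + t) t →
    ∃! p : Fin m × Fin n, A p.1 p.2 = some x ∨ A p.1 p.2 = some (-x)) ∧
  (∀ i, (∑ j, (A i j).getD 0) = 0) ∧
  (∀ j, (∑ i, (A i j).getD 0) = 0)

/-- A finite multiset of group elements admits a simple ordering: an ordering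
whose partial sums are pairwise distinct. -/
def HasSimpleOrdering {G : Type*} [AddCommGroup G] (s : Multiset G) : Prop :=
  ∃ l : List G, (l : Multiset G) = s ∧ ((l.scanl (· + ·) 0).tail).Nodup

/-- The multiset of entries of row `i`. -/
def rowEntries {m n : ℕ} {G : Type*} (A : Fin m → Fin n → Option G) (i : Fin m) :
    Multiset G :=
  Multiset.filterMap (fun j => A i j) Finset.univ.val

/-- The multiset of entries of column `j`. -/
def colEntries {m n : ℕ} {G : Type*} (A : Fin m → Fin n → Option G) (j : Fin n) :
    Multiset G :=
  Multiset.filterMap (fun i => A i j) Finset.univ.val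

/-- A partially filled array is simple if every row and every column admits a
simple ordering. -/
def SimpleArray {m n : ℕ} {G : Type*} [AddCommGroup G]
    (A : Fin m → Fin n → Option G) : Prop :=
  (∀ i, HasSimpleOrdering (rowEntries A i)) ∧ (∀ j, HasSimpleOrdering (colEntries A j))

/-- `B` is a `(v,t,C_cl,1)`-difference family: a family of `cl`-cycles
(injective maps `ZMod cl → ZMod v`, joined cyclically) whose list of differences
covers each element of `ZMod v` outside the subgroup `J` of order `t` exactly
once, and no element of `J`. -/
def IsCycleDiffFamily (v t ℓ cl : ℕ) (B : Fin ℓ → ZMod cl → ZMod v) : Prop :=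
  (∀ a, Function.Injective (B a)) ∧
  (∀ g : ZMod v, g ∉ relSubgroup v t →
    ∃! p : Fin ℓ × ZMod cl, B p.1 (p.2 + 1) - B p.1 p.2 = g) ∧
  (∀ g : ZMod v, g ∈ relSubgroup v t →
    ¬ ∃ p : Fin ℓ × ZMod cl, B p.1 (p.2 + 1) - B p.1 p.2 = g)

/-- The edge set of the closed cycle `c 0, c 1, ..., c (cl-1), c 0`. -/
def cycleEdgeSet {v cl : ℕ} (c : ZMod cl → ZMod v) : Set (Sym2 (ZMod v)) :=
  {e | ∃ i : ZMod cl, e = Sym2.mk (c i) (c (i + 1))}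

/-- `D` is a cyclic `cl`-cycle decomposition of the complete multipartite graph
`K_{(v/t) × t}` realized on the vertex set `ZMod v` with parts the cosets of the
subgroup `J` of order `t` (adjacency: `x ~ y` iff `x - y ∉ J`): every block of
`D` is the edge set of a `cl`-cycle of the graph, every edge of the graph lies
in exactly one block, and `D` is invariant under the sharply vertex-transitive
translation action of `ZMod v`. -/
def IsCyclicCycleDecomp (v t cl : ℕ) (D : Set (Set (Sym2 (ZMod v)))) : Prop :=
  (∀ E ∈ D, ∃ c : ZMod cl → ZMod v, Function.Injective c ∧
      (∀ i : ZMod cl, c (i + 1) - c i ∉ relSubgroup v t) ∧ E = cycleEdgeSet c) ∧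
  (∀ x y : ZMod v, x - y ∉ relSubgroup v t →
      ∃! E, E ∈ D ∧ Sym2.mk x y ∈ E) ∧
  (∀ E ∈ D, ∀ g : ZMod v, (Sym2.map (· + g)) '' E ∈ D)

/-- Two decompositions (given by their sets of blocks, each block an edge set)
are orthogonal if any two blocks share at most one edge. -/
def OrthogonalDecomps {v : ℕ} (D1 D2 : Set (Set (Sym2 (ZMod v)))) : Prop :=
  ∀ E1 ∈ D1, ∀ E2 ∈ D2, (E1 ∩ E2).Subsingleton

/-!
List each row of the array in a simple ordering `(a₁, …, a_s)`. The closed walk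
`0, a₁, a₁ + a₂, …, a₁ + ⋯ + a_{s-1}` has distinct vertices, so it is an `s`-cycle whose
steps are the row entries. Every `x ∉ J` is an entry up to sign exactly once, so every edge
`{x, y}` of `K_{(v/t) × t}` lies in exactly one translate of exactly one row cycle; the
translate is unique because no `x ∉ J` satisfies `2x = 0`, as `v - t = 2nk` is even. The
columns give the `C_k`-decomposition in the same way. A row cycle and a column cycle sharing
two edges would share two difference classes, but a row and a column have only one entry in
common, that of the cell where they meet.
-/

section SignClass

variable {G : Type*} [AddCommGroup G]

def negPair (x : G) : Sym2 G := s(x, -x)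

lemma negPair_neg (x : G) : negPair (-x) = negPair x := by
  simp [negPair, Sym2.eq_swap]

lemma negPair_eq_negPair_iff {x y : G} : negPair x = negPair y ↔ x = y ∨ x = -y := by
  simp only [negPair, Sym2.eq_iff]
  constructor
  · rintro (⟨h, -⟩ | ⟨h, -⟩) <;> simp [h]
  · rintro (rfl | rfl) <;> simp

def edgeDiff : Sym2 G → Sym2 G :=
  Sym2.lift ⟨fun a b => negPair (b - a), fun a b => by
    simp only [← negPair_neg (a - b), neg_sub]⟩

@[simp]
lemma edgeDiff_mk (a b : G) : edgeDiff s(a, b) = negPair (b - a) := rfl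

lemma exists_mk_add_eq_mk {a b x y : G} (h : negPair (b - a) = negPair (y - x)) :
    ∃ g, s(a + g, b + g) = s(x, y) := by
  rcases negPair_eq_negPair_iff.mp h with h | h
  · refine ⟨x - a, Sym2.eq_iff.mpr (Or.inl ⟨by abel, ?_⟩)⟩
    rw [← sub_add_cancel y x, ← h]; abel
  · refine ⟨y - a, Sym2.eq_iff.mpr (Or.inr ⟨by abel, ?_⟩)⟩
    rw [neg_sub] at h
    rw [← sub_add_cancel x y, ← h]; abel

lemma eq_of_mk_add_eq_mk_add {a b g g' : G} (h : s(a + g, b + g) = s(a + g', b + g'))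
    (hab : (b - a) + (b - a) ≠ 0) : g = g' := by
  rcases Sym2.eq_iff.mp h with ⟨h, -⟩ | ⟨h₁, h₂⟩
  · exact add_left_cancel h
  · have e₁ : b - a = g' - g := sub_eq_sub_iff_add_eq_add.mpr (by rw [h₂, add_comm])
    have e₂ : b - a = g - g' := sub_eq_sub_iff_add_eq_add.mpr (by rw [← h₁, add_comm])
    exact absurd (by rw [congrArg₂ (· + ·) e₁ e₂]; abel) hab

end SignClass

lemma Int.dvd_of_mul_dvd_two_mul {q t a : ℤ} (h : q * t ∣ 2 * a)
    (hpar : Even (q * t) → Even t) : q ∣ a := by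
  by_cases ht : Even t
  · obtain ⟨t', rfl⟩ := ht
    have : 2 * (q * t') ∣ 2 * a := by rwa [show q * (t' + t') = 2 * (q * t') by ring] at h
    exact dvd_of_mul_right_dvd (Int.dvd_of_mul_dvd_mul_left two_ne_zero this)
  · have hq : Odd q := Int.Odd.of_mul_left (Int.not_even_iff_odd.mp (mt hpar ht))
    exact (Int.isCoprime_two_right.mpr hq).dvd_of_dvd_mul_left (dvd_of_mul_right_dvd h)

lemma mem_relSubgroup_of_add_self_eq_zero {v t : ℕ} (htv : t ∣ v) (hpar : Even v → Even t)
    {x : ZMod v} (hx : x + x = 0) : x ∈ relSubgroup v t := by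
  have hv : v / t * t = v := Nat.div_mul_cancel htv
  obtain ⟨a, rfl⟩ : ∃ a : ℤ, (a : ZMod v) = x := ⟨x.cast, ZMod.intCast_zmod_cast x⟩
  have h2a : ((v / t * t : ℕ) : ℤ) ∣ 2 * a := by
    rw [hv, ← ZMod.intCast_zmod_eq_zero_iff_dvd]; push_cast; rw [two_mul, hx]
  obtain ⟨b, rfl⟩ : ((v / t : ℕ) : ℤ) ∣ a := by
    push_cast at h2a
    refine Int.dvd_of_mul_dvd_two_mul h2a fun h => ?_
    rw [← Nat.cast_mul, Int.even_coe_nat, hv] at h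
    exact Int.even_coe_nat _ |>.mpr (hpar h)
  exact AddSubgroup.mem_zmultiples_iff.mpr
    ⟨b, by rw [Int.cast_mul, Int.cast_natCast, zsmul_eq_mul, mul_comm]⟩

section CycleFamilies

open Function

variable {G : Type*} [AddCommGroup G] {s : ℕ} {ι : Type*}

def cycleStep (c : ZMod s → G) (j : ZMod s) : G := c (j + 1) - c j

def diffClasses (c : ZMod s → G) : Set (Sym2 G) := Set.range fun j => negPair (cycleStep c j)

lemma edgeDiff_translate (c : ZMod s → G) (g : G) (j : ZMod s) :
    edgeDiff s(c j + g, c (j + 1) + g) = negPair (cycleStep c j) := by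
  rw [edgeDiff_mk, add_sub_add_right_eq_sub, cycleStep]

/-- A `(v, t, C_s, 1)`-difference family in the usual sense, where differences are counted with
both signs (unlike `IsCycleDiffFamily`): each class `{x, -x}` with `x ∉ J` is the class of exactly
one step of one cycle. -/
structure IsSignedCycleDiffFamily (J : AddSubgroup G) (c : ι → ZMod s → G) : Prop where
  injective : ∀ i, Injective (c i)
  step_not_mem : ∀ i j, cycleStep (c i) j ∉ J
  negPair_step_injective : ∀ i, Injective fun j => negPair (cycleStep (c i) j)
  existsUnique_mem_diffClasses : ∀ x ∉ J, ∃! i, negPair x ∈ diffClasses (c i)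

variable {v t k : ℕ}

def cycleTranslates (c : ι → ZMod s → ZMod v) : Set (Set (Sym2 (ZMod v))) :=
  {E | ∃ i g, E = cycleEdgeSet fun j => c i j + g}

lemma image_map_add_cycleEdgeSet (c : ZMod s → ZMod v) (g : ZMod v) :
    Sym2.map (· + g) '' cycleEdgeSet c = cycleEdgeSet fun j => c j + g := by
  ext e
  constructor
  · rintro ⟨_, ⟨j, rfl⟩, rfl⟩
    exact ⟨j, by simp⟩
  · rintro ⟨j, rfl⟩
    exact ⟨_, ⟨j, rfl⟩, by simp⟩

theorem IsSignedCycleDiffFamily.isCyclicCycleDecomp {c : ι → ZMod s → ZMod v}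
    (hc : IsSignedCycleDiffFamily (relSubgroup v t) c)
    (hinv : ∀ x : ZMod v, x + x = 0 → x ∈ relSubgroup v t) :
    IsCyclicCycleDecomp v t s (cycleTranslates c) := by
  refine ⟨?_, fun x y hxy => ?_, ?_⟩
  · rintro E ⟨i, g, rfl⟩
    refine ⟨_, (add_left_injective g).comp (hc.injective i), fun j => ?_, rfl⟩
    show c i (j + 1) + g - (c i j + g) ∉ _
    rw [add_sub_add_right_eq_sub]
    exact hc.step_not_mem i j
  · have hyx : y - x ∉ relSubgroup v t := by rwa [← neg_sub, neg_mem_iff]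
    obtain ⟨i, ⟨j, hj⟩, hi⟩ := hc.existsUnique_mem_diffClasses (y - x) hyx
    obtain ⟨g, hg⟩ := exists_mk_add_eq_mk hj
    refine ⟨_, ⟨⟨i, g, rfl⟩, j, hg.symm⟩, ?_⟩
    rintro _ ⟨⟨i', g', rfl⟩, j', hj'⟩
    have hstep : negPair (cycleStep (c i') j') = negPair (y - x) := by
      rw [← edgeDiff_translate, ← hj', edgeDiff_mk]
    obtain rfl : i = i' := (hi i' ⟨j', hstep⟩).symm
    obtain rfl : j = j' := (hc.negPair_step_injective i (hstep.trans hj.symm)).symm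
    obtain rfl : g = g' := (eq_of_mk_add_eq_mk_add (hj'.symm.trans hg.symm)
      fun h => hc.step_not_mem i j (hinv _ h)).symm
    rfl
  · rintro _ ⟨i, g, rfl⟩ g'
    exact ⟨i, g + g', by rw [image_map_add_cycleEdgeSet]; simp only [add_assoc]⟩

theorem cycleTranslates_orthogonal {κ : Type*} {c : ι → ZMod s → ZMod v}
    {c' : κ → ZMod k → ZMod v} (hc : ∀ i, Injective fun j => negPair (cycleStep (c i) j))
    (hmeet : ∀ i i', (diffClasses (c i) ∩ diffClasses (c' i')).Subsingleton) :
    OrthogonalDecomps (cycleTranslates c) (cycleTranslates c') := by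
  rintro _ ⟨i, g, rfl⟩ _ ⟨i', g', rfl⟩
    _ ⟨⟨j₁, rfl⟩, j₁', he₁⟩ _ ⟨⟨j₂, rfl⟩, j₂', he₂⟩
  have hclass : ∀ (j : ZMod s) (j' : ZMod k),
      s(c i j + g, c i (j + 1) + g) = s(c' i' j' + g', c' i' (j' + 1) + g') →
      negPair (cycleStep (c i) j) ∈ diffClasses (c i) ∩ diffClasses (c' i') := fun j j' he =>
    ⟨⟨j, rfl⟩, j', by rw [← edgeDiff_translate (c i) g, he, edgeDiff_translate]⟩
  obtain rfl := hc i (hmeet i i' (hclass _ _ he₁) (hclass _ _ he₂))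
  rfl

end CycleFamilies

section PartialSums

open Function

variable {G : Type*} [AddCommGroup G] {s : ℕ} {ι : Type*}

def partialSumCycle (s : ℕ) (l : List G) (j : ZMod s) : G := (l.take j.val).sum

variable [NeZero s] {l : List G}

lemma cycleStep_partialSumCycle (hl : l.length = s) (hsum : l.sum = 0) (j : ZMod s) :
    cycleStep (partialSumCycle s l) j = l[j.val]'(j.val_lt.trans_eq hl.symm) := by
  have hsucc := List.sum_take_succ l j.val (j.val_lt.trans_eq hl.symm)
  have hval : (j + 1).val = (j.val + 1) % s := by
    rw [ZMod.val_add, ZMod.val_one_eq_one_mod, Nat.add_mod_mod]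
  rcases (j.val + 1).lt_or_ge s with h | h
  · rw [cycleStep, partialSumCycle, partialSumCycle, hval, Nat.mod_eq_of_lt h, hsucc,
      add_sub_cancel_left]
  · have hlast : j.val + 1 = s := le_antisymm j.val_lt h
    rw [hlast, List.take_of_length_le hl.le, hsum] at hsucc
    rw [cycleStep, partialSumCycle, partialSumCycle, hval, hlast, Nat.mod_self, List.take_zero,
      List.sum_nil, zero_sub, neg_eq_of_add_eq_zero_right hsucc.symm]

lemma cycleStep_partialSumCycle_mem (hl : l.length = s) (hsum : l.sum = 0) (j : ZMod s) :
    cycleStep (partialSumCycle s l) j ∈ l := by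
  rw [cycleStep_partialSumCycle hl hsum]
  exact List.getElem_mem _

/-- Since the full sum is `0`, the vertices of the cycle are the partial sums of lengths
`1, …, s`, which the simple ordering keeps distinct. -/
lemma partialSumCycle_eq_sum_take (hl : l.length = s) (hsum : l.sum = 0) (j : ZMod s) :
    partialSumCycle s l j = (l.take ((j - 1).val + 1)).sum := by
  have h := cycleStep_partialSumCycle hl hsum (j - 1)
  rw [cycleStep, sub_add_cancel, sub_eq_iff_eq_add] at h
  rw [h, List.sum_take_succ _ _ ((j - 1).val_lt.trans_eq hl.symm), add_comm]
  rfl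

lemma partialSumCycle_injective (hl : l.length = s) (hsum : l.sum = 0)
    (hsimple : (l.scanl (· + ·) 0).tail.Nodup) : Injective (partialSumCycle s l) := by
  change l.partialSums.tail.Nodup at hsimple
  intro a b hab
  rw [partialSumCycle_eq_sum_take hl hsum, partialSumCycle_eq_sum_take hl hsum] at hab
  have ha : (a - 1).val < l.partialSums.tail.length := by simp [hl, (a - 1).val_lt]
  have hb : (b - 1).val < l.partialSums.tail.length := by simp [hl, (b - 1).val_lt]
  have h := (List.Nodup.getElem_inj_iff hsimple (hi := ha) (hj := hb)).mp
    (by simpa only [List.getElem_tail, List.getElem_partialSums] using hab)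
  simpa using ZMod.val_injective s h

lemma mem_diffClasses_partialSumCycle (hl : l.length = s) (hsum : l.sum = 0) {z : Sym2 G} :
    z ∈ diffClasses (partialSumCycle s l) ↔ z ∈ l.map negPair := by
  simp only [diffClasses, Set.mem_range, cycleStep_partialSumCycle hl hsum, List.mem_map]
  constructor
  · rintro ⟨j, rfl⟩
    exact ⟨_, List.getElem_mem _, rfl⟩
  · rintro ⟨x, hx, rfl⟩
    obtain ⟨i, hi, rfl⟩ := List.getElem_of_mem hx
    exact ⟨i, by simp only [ZMod.val_cast_of_lt (hl ▸ hi)]⟩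

lemma negPair_cycleStep_partialSumCycle_injective (hl : l.length = s) (hsum : l.sum = 0)
    (hnodup : (l.map negPair).Nodup) :
    Injective fun j => negPair (cycleStep (partialSumCycle s l) j) := by
  intro a b hab
  simp only [cycleStep_partialSumCycle hl hsum] at hab
  have ha : a.val < (l.map negPair).length := by simp [hl, a.val_lt]
  have hb : b.val < (l.map negPair).length := by simp [hl, b.val_lt]
  exact ZMod.val_injective s <| (hnodup.getElem_inj_iff (hi := ha) (hj := hb)).mp
    (by simpa only [List.getElem_map] using hab)

theorem IsSignedCycleDiffFamily.of_lists {J : AddSubgroup G} {L : ι → List G}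
    (hlen : ∀ i, (L i).length = s) (hsum : ∀ i, (L i).sum = 0)
    (hsimple : ∀ i, ((L i).scanl (· + ·) 0).tail.Nodup) (hJ : ∀ i, ∀ x ∈ L i, x ∉ J)
    (hnodup : ∀ i, ((L i).map negPair).Nodup)
    (hcover : ∀ x ∉ J, ∃! i, negPair x ∈ (L i).map negPair) :
    IsSignedCycleDiffFamily J fun i => partialSumCycle s (L i) where
  injective i := partialSumCycle_injective (hlen i) (hsum i) (hsimple i)
  step_not_mem i j := hJ i _ (cycleStep_partialSumCycle_mem (hlen i) (hsum i) j)
  negPair_step_injective i :=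
    negPair_cycleStep_partialSumCycle_injective (hlen i) (hsum i) (hnodup i)
  existsUnique_mem_diffClasses x hx := by
    simpa only [mem_diffClasses_partialSumCycle (hlen _) (hsum _)] using hcover x hx

end PartialSums

section RowEntries

variable {G : Type*}

lemma Multiset.card_filterMap {α β : Type*} (f : α → Option β) (m : Multiset α) :
    card (m.filterMap f) = m.countP fun a => (f a).isSome := by
  induction m using Multiset.induction with
  | empty => simp
  | cons a m ih => cases h : f a <;> simp [h, ih]

lemma Multiset.sum_filterMap {α : Type*} [AddCommMonoid G] (f : α → Option G)
    (m : Multiset α) :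
    (m.filterMap f).sum = (m.map fun a => (f a).getD 0).sum := by
  induction m using Multiset.induction with
  | empty => simp
  | cons a m ih => cases h : f a <;> simp [h, ih]

variable {m n : ℕ} {A : Fin m → Fin n → Option G}

lemma mem_rowEntries {i : Fin m} {x : G} : x ∈ rowEntries A i ↔ ∃ j, A i j = some x := by
  simp [rowEntries, Multiset.mem_filterMap]

lemma card_rowEntries (i : Fin m) :
    Multiset.card (rowEntries A i) = (Finset.univ.filter fun j => (A i j).isSome).card := by
  rw [rowEntries, Multiset.card_filterMap, Finset.card_def, Finset.filter_val,
    Multiset.countP_eq_card_filter]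

lemma sum_rowEntries [AddCommMonoid G] (i : Fin m) :
    (rowEntries A i).sum = ∑ j, (A i j).getD 0 := by
  rw [rowEntries, Multiset.sum_filterMap]
  rfl

end RowEntries

section Arrays

variable {G : Type*} [AddCommGroup G] {J : AddSubgroup G}

lemma cell_eq_of_negPair_eq {α β : Type*} {A : α → β → Option G}
    (hcover : ∀ x ∉ J, ∃! p : α × β, A p.1 p.2 = some x ∨ A p.1 p.2 = some (-x))
    {p q : α × β} {y z : G} (hy : A p.1 p.2 = some y) (hyJ : y ∉ J)
    (hz : A q.1 q.2 = some z) (h : negPair y = negPair z) : p = q :=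
  (hcover y hyJ).unique (Or.inl hy) <| by
    rcases negPair_eq_negPair_iff.mp h with rfl | rfl
    · exact Or.inl hz
    · rw [neg_neg]; exact Or.inr hz

variable {m n : ℕ} {A : Fin m → Fin n → Option G}

lemma nodup_map_negPair_rowEntries (hJ : ∀ i j x, A i j = some x → x ∉ J)
    (hcover : ∀ x ∉ J, ∃! p : Fin m × Fin n, A p.1 p.2 = some x ∨ A p.1 p.2 = some (-x))
    (i : Fin m) : ((rowEntries A i).map negPair).Nodup := by
  rw [rowEntries, Multiset.map_filterMap]
  refine Multiset.Nodup.filterMap _ (fun j j' z hj hj' => ?_) Finset.univ.nodup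
  obtain ⟨y, hy, rfl⟩ := Option.mem_map.mp hj
  obtain ⟨y', hy', hyy'⟩ := Option.mem_map.mp hj'
  exact congrArg Prod.snd (cell_eq_of_negPair_eq (p := (i, j)) (q := (i, j')) hcover hy
    (hJ i j y hy) hy' hyy'.symm)

theorem exists_signedCycleDiffFamily_of_rows {s : ℕ} [NeZero s]
    (hcard : ∀ i, (Finset.univ.filter fun j => (A i j).isSome).card = s)
    (hJ : ∀ i j x, A i j = some x → x ∉ J)
    (hcover : ∀ x ∉ J, ∃! p : Fin m × Fin n, A p.1 p.2 = some x ∨ A p.1 p.2 = some (-x))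
    (hsum : ∀ i, ∑ j, (A i j).getD 0 = 0)
    (hsimple : ∀ i, HasSimpleOrdering (rowEntries A i)) :
    ∃ c : Fin m → ZMod s → G, IsSignedCycleDiffFamily J c ∧
      ∀ i j, ∃ b, A i b = some (cycleStep (c i) j) := by
  choose L hL hLsimple using hsimple
  have hmem : ∀ i x, x ∈ L i ↔ ∃ b, A i b = some x := fun i x => by
    rw [← Multiset.mem_coe, hL, mem_rowEntries]
  have hlen : ∀ i, (L i).length = s := fun i => by
    rw [← Multiset.coe_card, hL, card_rowEntries, hcard]
  have hLsum : ∀ i, (L i).sum = 0 := fun i => by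
    rw [← Multiset.sum_coe, hL, sum_rowEntries, hsum]
  have hclass : ∀ i z, z ∈ (L i).map negPair ↔ ∃ b y, A i b = some y ∧ negPair y = z :=
    fun i z => by simp only [List.mem_map, hmem]; tauto
  refine ⟨_, .of_lists hlen hLsum hLsimple (fun i x hx => ?_) (fun i => ?_) (fun x hx => ?_),
    fun i j => (hmem i _).mp (cycleStep_partialSumCycle_mem (hlen i) (hLsum i) j)⟩
  · obtain ⟨b, hb⟩ := (hmem i x).mp hx
    exact hJ i b x hb
  · rw [← Multiset.coe_nodup, ← Multiset.map_coe, hL]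
    exact nodup_map_negPair_rowEntries hJ hcover i
  · obtain ⟨p, hp, -⟩ := hcover x hx
    refine existsUnique_of_exists_of_unique ⟨p.1, (hclass _ _).mpr ?_⟩ fun i i' hi hi' => ?_
    · rcases hp with hp | hp
      · exact ⟨p.2, x, hp, rfl⟩
      · exact ⟨p.2, -x, hp, negPair_neg x⟩
    · obtain ⟨b, y, hy, hyx⟩ := (hclass _ _).mp hi
      obtain ⟨b', y', hy', hyx'⟩ := (hclass _ _).mp hi'
      exact congrArg Prod.fst (cell_eq_of_negPair_eq (p := (i, b)) (q := (i', b')) hcover hy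
        (hJ i b y hy) hy' (hyx.trans hyx'.symm))

lemma diffClasses_inter_subsingleton_of_rows_cols {s k : ℕ} {r : Fin m → ZMod s → G}
    {c : Fin n → ZMod k → G} (hJ : ∀ i j x, A i j = some x → x ∉ J)
    (hcover : ∀ x ∉ J, ∃! p : Fin m × Fin n, A p.1 p.2 = some x ∨ A p.1 p.2 = some (-x))
    (hr : ∀ i a, ∃ j, A i j = some (cycleStep (r i) a))
    (hc : ∀ j b, ∃ i, A i j = some (cycleStep (c j) b)) (i : Fin m) (j : Fin n) :
    (diffClasses (r i) ∩ diffClasses (c j)).Subsingleton := by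
  have hcell : ∀ z ∈ diffClasses (r i) ∩ diffClasses (c j),
      ∃ y, A i j = some y ∧ negPair y = z := by
    rintro _ ⟨⟨a, rfl⟩, b, hb⟩
    obtain ⟨j', hj'⟩ := hr i a
    obtain ⟨i', hi'⟩ := hc j b
    obtain rfl : j' = j := congrArg Prod.snd (cell_eq_of_negPair_eq (p := (i, j')) (q := (i', j))
      hcover hj' (hJ _ _ _ hj') hi' hb.symm)
    exact ⟨_, hj', rfl⟩
  intro z hz z' hz'
  obtain ⟨y, hy, rfl⟩ := hcell z hz
  obtain ⟨y', hy', rfl⟩ := hcell z' hz'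
  rw [Option.some.inj (hy.symm.trans hy')]

end Arrays

lemma isCyclicCycleDecomp_empty {v t s : ℕ} (h : ∀ x : ZMod v, x ∈ relSubgroup v t) :
    IsCyclicCycleDecomp v t s ∅ :=
  ⟨by simp, fun x y hxy => absurd (h _) hxy, by simp⟩

theorem simple_relHeffter_gives_orthogonal_cyclic_decomps_general
    (m n s k t : ℕ) (ht : t ∣ 2 * n * k)
    (A : Fin m → Fin n → Option (ZMod (2 * n * k + t)))
    (hA : IsRelHeffter m n s k t A) (hsimple : SimpleArray A) :
    ∃ Dr Dc : Set (Set (Sym2 (ZMod (2 * n * k + t)))),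
      IsCyclicCycleDecomp (2 * n * k + t) t s Dr ∧
      IsCyclicCycleDecomp (2 * n * k + t) t k Dc ∧
      OrthogonalDecomps Dr Dc := by
  obtain ⟨hrow, hcol, hJ, hcover, hrsum, hcsum⟩ := hA
  set J := relSubgroup (2 * n * k + t) t
  by_cases hJtop : ∀ x, x ∈ J
  · exact ⟨∅, ∅, isCyclicCycleDecomp_empty hJtop, isCyclicCycleDecomp_empty hJtop,
      fun _ h => h.elim⟩
  obtain ⟨x, hx⟩ := not_forall.mp hJtop
  obtain ⟨⟨i, j⟩, hij, -⟩ := hcover x hx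
  have hfilled : (A i j).isSome := by rcases hij with h | h <;> simp [h]
  have : NeZero s := ⟨hrow i ▸ Finset.card_ne_zero_of_mem (by simpa using hfilled)⟩
  have : NeZero k := ⟨hcol j ▸ Finset.card_ne_zero_of_mem (by simpa using hfilled)⟩
  have hcover' :
      ∀ x ∉ J, ∃! p : Fin n × Fin m, A p.2 p.1 = some x ∨ A p.2 p.1 = some (-x) :=
    fun x hx => ((Equiv.prodComm _ _).existsUnique_congr fun _ => Iff.rfl).mp (hcover x hx)
  obtain ⟨r, hr, hrA⟩ := exists_signedCycleDiffFamily_of_rows hrow hJ hcover hrsum hsimple.1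
  obtain ⟨c, hc, hcA⟩ := exists_signedCycleDiffFamily_of_rows (A := fun j i => A i j) hcol
    (fun j i => hJ i j) hcover' hcsum hsimple.2
  have hinv : ∀ x : ZMod (2 * n * k + t), x + x = 0 → x ∈ J := fun _ =>
    mem_relSubgroup_of_add_self_eq_zero (dvd_add ht dvd_rfl)
      fun h => (Nat.even_add.mp h).mp ((even_two_mul n).mul_right k)
  exact ⟨_, _, hr.isCyclicCycleDecomp hinv, hc.isCyclicCycleDecomp hinv,
    cycleTranslates_orthogonal hr.negPair_step_injective
      (diffClasses_inter_subsingleton_of_rows_cols hJ hcover hrA hcA)⟩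

/-- a simple relative Heffter array `H_t(m,n;s,k)` yields a cyclic
`C_s`-decomposition and a cyclic `C_k`-decomposition of `K_{(v/t) × t}`
(with `v = 2nk + t = 2ms + t`) which are orthogonal. -/
theorem simple_relHeffter_gives_orthogonal_cyclic_decomps
    (m n s k t : ℕ) (ht : t ∣ 2 * n * k) (hms : m * s = n * k)
    (A : Fin m → Fin n → Option (ZMod (2 * n * k + t)))
    (hA : IsRelHeffter m n s k t A) (hsimple : SimpleArray A) :
    ∃ Dr Dc : Set (Set (Sym2 (ZMod (2 * n * k + t)))),
      IsCyclicCycleDecomp (2 * n * k + t) t s Dr ∧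
      IsCyclicCycleDecomp (2 * n * k + t) t k Dc ∧
      OrthogonalDecomps Dr Dc :=
  simple_relHeffter_gives_orthogonal_cyclic_decomps_general m n s k t ht A hA hsimple
end

section
/- Suppose there exist an integer relative Heffter array A = H_k(n;k) (with entries viewed as integers) and an n×n shiftable partially filled integer array B, with h a positive even integer, such that: (1) each row and each column of B contains exactly h filled cells; (2) the entries of B have pairwise distinct absolute values and supp(B) = [1, (h/2)(2n+1)] \ T, where T = {(2n+1), 2(2n+1), ..., (h/2)(2n+1)} if k is even, and T = {(n+1), (n+1)+(2n+1), ..., (n+1)+((h−2)/2)(2n+1)} if k is odd; (3) the elements in every row and every column of B sum to 0 in Z; (4) skel(A) ∩ skel(B) = ∅. Then there exists an integer relative Heffter array H_{k+h}(n;k+h). -/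
/-!
Put `B` into the empty cells of `A` after moving each of its entries away from `0` by
`M = ⌊k(2n+1)/2⌋`. Shiftability means each row and column gains as many `+M` as `-M`, so line
sums stay `0`. The absolute values of `A` are `[1, M]` minus the multiples of `2n+1`, those of the
shifted `B` are `M + ([1, (h/2)(2n+1)] \ T)`, and `T` consists exactly of the `a` with
`2n+1 ∣ M + a`; together they are `[1, M + (h/2)(2n+1)]` minus the multiples of `2n+1`, the
support of an `H_{k+h}(n;k+h)`.
-/

open Finset

def shiftAway (M : ℕ) (x : ℤ) : ℤ := x + M * x.sign

lemma natAbs_shiftAway (M : ℕ) {x : ℤ} (hx : x ≠ 0) :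
    (shiftAway M x).natAbs = x.natAbs + M := by
  rcases hx.lt_or_gt with h | h
  · rw [shiftAway, Int.sign_eq_neg_one_of_neg h]; omega
  · rw [shiftAway, Int.sign_eq_one_of_pos h]; omega

lemma Finset.sum_sign {ι : Type*} (s : Finset ι) (f : ι → ℤ) :
    ∑ i ∈ s, (f i).sign = #{i ∈ s | 0 < f i} - #{i ∈ s | f i < 0} := by
  have hsign : ∀ x : ℤ, x.sign = (if 0 < x then 1 else 0) - (if x < 0 then 1 else 0) := by
    intro x
    rcases lt_trichotomy x 0 with h | rfl | h
    · simp [h, h.not_gt]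
    · simp
    · simp [h, h.not_gt]
  simp only [hsign, sum_sub_distrib, sum_boole]

section Line

variable {ι : Type*} [Fintype ι] {a b : ι → Option ℤ}

lemma card_isSome_or (hab : ∀ j, (a j).isSome → (b j).isSome → False) :
    #{j | ((a j).or (b j)).isSome} = #{j | (a j).isSome} + #{j | (b j).isSome} := by
  classical
  rw [← card_union_of_disjoint (disjoint_filter.mpr fun j _ ha hb => hab j ha hb)]
  congr 1
  ext j
  simp [Option.isSome_or]

lemma sum_getD_or (hab : ∀ j, (a j).isSome → (b j).isSome → False) :
    ∑ j, ((a j).or (b j)).getD 0 = ∑ j, (a j).getD 0 + ∑ j, (b j).getD 0 := by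
  rw [← sum_add_distrib]
  refine sum_congr rfl fun j _ => ?_
  have := hab j
  cases ha : a j <;> cases hb : b j <;> simp_all

lemma sum_getD_map_shiftAway (M : ℕ) (b : ι → Option ℤ) :
    ∑ j, ((b j).map (shiftAway M)).getD 0 =
      ∑ j, (b j).getD 0 + M * (#{j | 0 < (b j).getD 0} - #{j | (b j).getD 0 < 0}) := by
  have hmap : ∀ y : Option ℤ, (y.map (shiftAway M)).getD 0 = shiftAway M (y.getD 0) := by
    rintro (_ | y) <;> simp [shiftAway]
  simp only [hmap, shiftAway, sum_add_distrib, ← mul_sum, sum_sign]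

end Line

section Arrays

variable {m n : ℕ} {A B : Fin m → Fin n → Option ℤ}

def overlay (A B : Fin m → Fin n → Option ℤ) : Fin m → Fin n → Option ℤ :=
  fun i j => (A i j).or (B i j)

def shiftArray (M : ℕ) (B : Fin m → Fin n → Option ℤ) : Fin m → Fin n → Option ℤ :=
  fun i j => (B i j).map (shiftAway M)

lemma not_isSome_and_isSome (h : Disjoint (skel A) (skel B)) (p : Fin m × Fin n) :
    (A p.1 p.2).isSome → (B p.1 p.2).isSome → False :=
  fun hA hB => Set.disjoint_left.mp h hA hB

lemma rowFilled_overlay (h : Disjoint (skel A) (skel B)) (i : Fin m) :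
    rowFilled (overlay A B) i = rowFilled A i + rowFilled B i :=
  card_isSome_or fun j => not_isSome_and_isSome h (i, j)

lemma colFilled_overlay (h : Disjoint (skel A) (skel B)) (j : Fin n) :
    colFilled (overlay A B) j = colFilled A j + colFilled B j :=
  card_isSome_or fun i => not_isSome_and_isSome h (i, j)

lemma rowSum_overlay (h : Disjoint (skel A) (skel B)) (i : Fin m) :
    rowSum (overlay A B) i = rowSum A i + rowSum B i :=
  sum_getD_or fun j => not_isSome_and_isSome h (i, j)

lemma colSum_overlay (h : Disjoint (skel A) (skel B)) (j : Fin n) :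
    colSum (overlay A B) j = colSum A j + colSum B j :=
  sum_getD_or fun i => not_isSome_and_isSome h (i, j)

lemma eq_some_of_overlay_eq_some {i : Fin m} {j : Fin n} {x : ℤ}
    (hx : overlay A B i j = some x) : A i j = some x ∨ B i j = some x := by
  unfold overlay at hx
  cases hA : A i j <;> simp_all

lemma suppSet_overlay (h : Disjoint (skel A) (skel B)) :
    suppSet (overlay A B) = suppSet A ∪ suppSet B := by
  ext a
  constructor
  · rintro ⟨i, j, x, hx, rfl⟩
    rcases eq_some_of_overlay_eq_some hx with hx | hx
    exacts [Or.inl ⟨i, j, x, hx, rfl⟩, Or.inr ⟨i, j, x, hx, rfl⟩]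
  · rintro (⟨i, j, x, hx, rfl⟩ | ⟨i, j, x, hx, rfl⟩)
    · exact ⟨i, j, x, by simp [overlay, hx], rfl⟩
    · have hA : A i j = none := by
        simpa using fun hA => not_isSome_and_isSome h (i, j) hA (by simp [hx])
      exact ⟨i, j, x, by simp [overlay, hA, hx], rfl⟩

lemma DistinctAbs.overlay (hA : DistinctAbs A) (hB : DistinctAbs B)
    (h : Disjoint (suppSet A) (suppSet B)) : DistinctAbs (overlay A B) := by
  intro i j i' j' x y hx hy hxy
  rcases eq_some_of_overlay_eq_some hx with hx | hx <;>
    rcases eq_some_of_overlay_eq_some hy with hy | hy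
  · exact hA i j i' j' x y hx hy hxy
  · exact (Set.disjoint_left.mp h ⟨i, j, x, hx, hxy⟩ ⟨i', j', y, hy, rfl⟩).elim
  · exact (Set.disjoint_left.mp h ⟨i', j', y, hy, rfl⟩ ⟨i, j, x, hx, hxy⟩).elim
  · exact hB i j i' j' x y hx hy hxy

lemma skel_shiftArray (M : ℕ) : skel (shiftArray M B) = skel B := by
  ext p
  simp [skel, shiftArray]

lemma rowFilled_shiftArray (M : ℕ) (i : Fin m) :
    rowFilled (shiftArray M B) i = rowFilled B i := by
  simp [rowFilled, shiftArray]

lemma colFilled_shiftArray (M : ℕ) (j : Fin n) :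
    colFilled (shiftArray M B) j = colFilled B j := by
  simp [colFilled, shiftArray]

lemma ne_zero_of_eq_some (h0 : 0 ∉ suppSet B) {i : Fin m} {j : Fin n} {x : ℤ}
    (hx : B i j = some x) : x ≠ 0 := by
  rintro rfl
  exact h0 ⟨i, j, 0, hx, rfl⟩

lemma suppSet_shiftArray (M : ℕ) (h0 : 0 ∉ suppSet B) :
    suppSet (shiftArray M B) = (· + M) '' suppSet B := by
  ext a
  simp only [suppSet, shiftArray, Option.map_eq_some_iff, Set.mem_image]
  constructor
  · rintro ⟨i, j, _, ⟨x, hx, rfl⟩, rfl⟩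
    exact ⟨x.natAbs, ⟨i, j, x, hx, rfl⟩, (natAbs_shiftAway M (ne_zero_of_eq_some h0 hx)).symm⟩
  · rintro ⟨_, ⟨i, j, x, hx, rfl⟩, rfl⟩
    exact ⟨i, j, _, ⟨x, hx, rfl⟩, natAbs_shiftAway M (ne_zero_of_eq_some h0 hx)⟩

lemma DistinctAbs.shiftArray (hB : DistinctAbs B) (M : ℕ) (h0 : 0 ∉ suppSet B) :
    DistinctAbs (shiftArray M B) := by
  intro i j i' j' _ _ hx' hy' hxy
  obtain ⟨x, hx, rfl⟩ := Option.map_eq_some_iff.mp hx'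
  obtain ⟨y, hy, rfl⟩ := Option.map_eq_some_iff.mp hy'
  rw [natAbs_shiftAway M (ne_zero_of_eq_some h0 hx),
    natAbs_shiftAway M (ne_zero_of_eq_some h0 hy)] at hxy
  exact hB i j i' j' x y hx hy (Nat.add_right_cancel hxy)

end Arrays

lemma rowSum_shiftArray {n : ℕ} {B : Fin n → Fin n → Option ℤ} (hB : Shiftable B) (M : ℕ)
    (i : Fin n) : rowSum (shiftArray M B) i = rowSum B i := by
  simp only [rowSum, shiftArray]
  rw [sum_getD_map_shiftAway, hB.1 i, sub_self, mul_zero, add_zero]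

lemma colSum_shiftArray {n : ℕ} {B : Fin n → Fin n → Option ℤ} (hB : Shiftable B) (M : ℕ)
    (j : Fin n) : colSum (shiftArray M B) j = colSum B j := by
  simp only [colSum, shiftArray]
  rw [sum_getD_map_shiftAway, hB.2 j, sub_self, mul_zero, add_zero]

/-- The absolute values `IsIntHeffter n k t` requires to occur: `ZMod (2nk+t) \ J` up to sign. -/
def heffterSupport (n k t : ℕ) : Set ℕ :=
  {x | 1 ≤ x ∧ x ≤ (2 * n * k + t) / 2 ∧ ¬ (2 * n * k + t) / t ∣ x}

lemma existsUnique_natAbs_iff {m n : ℕ} {A : Fin m → Fin n → Option ℤ} (S : Set ℕ) :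
    ((∀ i j x, A i j = some x → x.natAbs ∈ S) ∧
      ∀ x ∈ S, ∃! p : Fin m × Fin n, A p.1 p.2 = some (x : ℤ) ∨ A p.1 p.2 = some (-(x : ℤ))) ↔
    DistinctAbs A ∧ suppSet A = S := by
  have hcell : ∀ (p : Fin m × Fin n) (x : ℕ),
      (A p.1 p.2 = some (x : ℤ) ∨ A p.1 p.2 = some (-(x : ℤ))) ↔
        ∃ y, A p.1 p.2 = some y ∧ y.natAbs = x := by
    intro p x
    constructor
    · rintro (h | h) <;> exact ⟨_, h, by simp⟩
    · rintro ⟨y, hy, rfl⟩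
      rcases Int.natAbs_eq y with h | h
      exacts [Or.inl (h ▸ hy), Or.inr (h ▸ hy)]
  simp only [hcell]
  constructor
  · rintro ⟨hmem, huniq⟩
    refine ⟨fun i j i' j' x y hx hy hxy => ?_, ?_⟩
    · exact (huniq _ (hmem i j x hx)).unique ⟨x, hx, rfl⟩ ⟨y, hy, hxy.symm⟩
    · ext a
      refine ⟨?_, fun ha => ?_⟩
      · rintro ⟨i, j, x, hx, rfl⟩
        exact hmem i j x hx
      · obtain ⟨p, hp, -⟩ := huniq a ha
        obtain ⟨y, hy, rfl⟩ := hp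
        exact ⟨p.1, p.2, y, hy, rfl⟩
  · rintro ⟨hdist, rfl⟩
    refine ⟨fun i j x hx => ⟨i, j, x, hx, rfl⟩, ?_⟩
    rintro _ ⟨i, j, x, hx, rfl⟩
    exact ⟨(i, j), ⟨x, hx, rfl⟩, fun q ⟨y, hy, hyx⟩ => hdist _ _ _ _ y x hy hx hyx⟩

lemma isIntHeffter_iff {n k t : ℕ} {A : Fin n → Fin n → Option ℤ} :
    IsIntHeffter n k t A ↔
      (∀ i, rowFilled A i = k) ∧ (∀ j, colFilled A j = k) ∧
      (∀ i, rowSum A i = 0) ∧ (∀ j, colSum A j = 0) ∧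
      DistinctAbs A ∧ suppSet A = heffterSupport n k t := by
  rw [← existsUnique_natAbs_iff]
  simp only [IsIntHeffter, heffterSupport, Set.mem_ofPred_eq, and_imp]

/-- For `t = 0` both sides are empty. -/
lemma heffterSupport_self (n t : ℕ) :
    heffterSupport n t t = {x | 1 ≤ x ∧ x ≤ t * (2 * n + 1) / 2 ∧ ¬ 2 * n + 1 ∣ x} := by
  have ht : 2 * n * t + t = t * (2 * n + 1) := by ring
  rcases t.eq_zero_or_pos with rfl | ht0
  · ext x
    simp only [heffterSupport, Set.mem_ofPred_eq]
    omega
  · rw [heffterSupport, ht, Nat.mul_div_cancel_left _ ht0]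

/-- The set `T` of the theorem: the `a ∈ [1, (h/2)(2n+1)]` for which `a + ⌊k(2n+1)/2⌋` is a
multiple of `2n+1`. -/
def extensionGap (n k h : ℕ) : Set ℕ :=
  if k % 2 = 0 then
    {a : ℕ | ∃ c : ℕ, 1 ≤ c ∧ c ≤ h / 2 ∧ a = c * (2 * n + 1)}
  else
    {a : ℕ | ∃ c : ℕ, c ≤ (h - 2) / 2 ∧ a = (n + 1) + c * (2 * n + 1)}

lemma dvd_add_mul_iff {q m a k₀ : ℕ} (ha : 1 ≤ a) (ham : a ≤ m * q) :
    q ∣ a + k₀ * q ↔ ∃ c, 1 ≤ c ∧ c ≤ m ∧ a = c * q := by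
  rw [Nat.dvd_add_left (dvd_mul_left q k₀)]
  constructor
  · rintro ⟨c, rfl⟩
    have hq : 0 < q := Nat.pos_of_ne_zero (by rintro rfl; simp at ha)
    have hc : 0 < c := Nat.pos_of_ne_zero (by rintro rfl; simp at ha)
    exact ⟨c, hc, Nat.le_of_mul_le_mul_left (by rwa [mul_comm m] at ham) hq, mul_comm q c⟩
  · rintro ⟨c, -, -, rfl⟩
    exact dvd_mul_left q c

lemma dvd_add_mul_add_iff {n m a k₀ : ℕ} (ha : 1 ≤ a) (ham : a ≤ m * (2 * n + 1)) :
    2 * n + 1 ∣ a + (k₀ * (2 * n + 1) + n) ↔ ∃ c, c ≤ m - 1 ∧ a = n + 1 + c * (2 * n + 1) := by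
  rw [← add_assoc, add_right_comm, Nat.dvd_add_left (dvd_mul_left _ k₀)]
  constructor
  · rintro ⟨_ | c, hc⟩
    · omega
    · have hc' : a = n + 1 + c * (2 * n + 1) := by rw [mul_add_one] at hc; linarith
      refine ⟨c, ?_, hc'⟩
      by_contra! hmc
      have := Nat.mul_le_mul_right (2 * n + 1) (show m ≤ c by omega)
      omega
  · rintro ⟨c, -, rfl⟩
    exact ⟨c + 1, by ring⟩

lemma dvd_iff_mem_extensionGap {n k h a : ℕ} (hh : Even h) (ha : 1 ≤ a)
    (hah : a ≤ h / 2 * (2 * n + 1)) :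
    2 * n + 1 ∣ a + k * (2 * n + 1) / 2 ↔ a ∈ extensionGap n k h := by
  obtain ⟨m, rfl⟩ := hh
  have hm : (m + m) / 2 = m := by omega
  rw [hm] at hah
  rcases Nat.even_or_odd' k with ⟨k₀, rfl | rfl⟩
  · rw [mul_assoc, Nat.mul_div_cancel_left _ two_pos]
    simp only [extensionGap, Nat.mul_mod_right, if_true, hm]
    exact dvd_add_mul_iff ha hah
  · have hM : (2 * k₀ + 1) * (2 * n + 1) / 2 = k₀ * (2 * n + 1) + n := by
      rw [show (2 * k₀ + 1) * (2 * n + 1) = 2 * (k₀ * (2 * n + 1) + n) + 1 by ring]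
      omega
    rw [hM]
    simp only [extensionGap, show (2 * k₀ + 1) % 2 ≠ 0 by omega, if_false,
      show (m + m - 2) / 2 = m - 1 by omega]
    exact dvd_add_mul_add_iff ha hah

lemma heffterSupport_extension {n k h : ℕ} (hh : Even h) :
    {x | 1 ≤ x ∧ x ≤ k * (2 * n + 1) / 2 ∧ ¬ 2 * n + 1 ∣ x} ∪
      (· + k * (2 * n + 1) / 2) ''
        {a | (1 ≤ a ∧ a ≤ h / 2 * (2 * n + 1)) ∧ a ∉ extensionGap n k h} =
    {x | 1 ≤ x ∧ x ≤ (k + h) * (2 * n + 1) / 2 ∧ ¬ 2 * n + 1 ∣ x} := by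
  set M := k * (2 * n + 1) / 2
  have hbound : (k + h) * (2 * n + 1) / 2 = M + h / 2 * (2 * n + 1) := by
    obtain ⟨m, rfl⟩ := hh
    rw [add_mul, show (m + m) * (2 * n + 1) = 2 * (m * (2 * n + 1)) by ring,
      Nat.add_mul_div_left _ _ two_pos, show (m + m) / 2 = m by omega]
  ext x
  simp only [Set.mem_union, Set.mem_image, Set.mem_ofPred_eq, hbound]
  constructor
  · rintro (⟨hx1, hxM, hxq⟩ | ⟨a, ⟨⟨ha1, ha2⟩, haT⟩, rfl⟩)
    · exact ⟨hx1, by omega, hxq⟩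
    · exact ⟨by omega, by omega, fun hd => haT ((dvd_iff_mem_extensionGap hh ha1 ha2).mp hd)⟩
  · rintro ⟨hx1, hx2, hxq⟩
    by_cases hxM : x ≤ M
    · exact Or.inl ⟨hx1, hxM, hxq⟩
    · refine Or.inr ⟨x - M, ⟨⟨by omega, by omega⟩, fun haT => hxq ?_⟩, by omega⟩
      have := (dvd_iff_mem_extensionGap hh (by omega) (by omega)).mpr haT
      rwa [Nat.sub_add_cancel (by omega)] at this

theorem intHeffter_extension_general (n k h : ℕ) (hhe : Even h)
    (A B : Fin n → Fin n → Option ℤ)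
    (hA : IsIntHeffter n k k A)
    (hBshift : Shiftable B)
    (hBrow : ∀ i, rowFilled B i = h) (hBcol : ∀ j, colFilled B j = h)
    (hBdist : DistinctAbs B)
    (hBsupp : suppSet B =
      {a : ℕ | (1 ≤ a ∧ a ≤ (h / 2) * (2 * n + 1)) ∧
        a ∉ (if k % 2 = 0 then
              {a : ℕ | ∃ c : ℕ, 1 ≤ c ∧ c ≤ h / 2 ∧ a = c * (2 * n + 1)}
            else
              {a : ℕ | ∃ c : ℕ, c ≤ (h - 2) / 2 ∧ a = (n + 1) + c * (2 * n + 1)} : Set ℕ)})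
    (hBrsum : ∀ i, rowSum B i = 0) (hBcsum : ∀ j, colSum B j = 0)
    (hskel : skel A ∩ skel B = ∅) :
    ∃ C : Fin n → Fin n → Option ℤ, IsIntHeffter n (k + h) (k + h) C := by
  obtain ⟨hArow, hAcol, hArsum, hAcsum, hAdist, hAsupp⟩ := isIntHeffter_iff.mp hA
  rw [heffterSupport_self] at hAsupp
  set M := k * (2 * n + 1) / 2
  have hB0 : 0 ∉ suppSet B := by simp [hBsupp]
  have hskel' : Disjoint (skel A) (skel (shiftArray M B)) := by
    rwa [skel_shiftArray, Set.disjoint_iff_inter_eq_empty]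
  have hsupp : Disjoint (suppSet A) (suppSet (shiftArray M B)) := by
    rw [hAsupp, suppSet_shiftArray M hB0, hBsupp, Set.disjoint_left]
    rintro _ ⟨-, hxM, -⟩ ⟨a, ⟨⟨ha, -⟩, -⟩, rfl⟩
    dsimp only at hxM
    omega
  refine ⟨overlay A (shiftArray M B), isIntHeffter_iff.mpr ⟨fun i => ?_, fun j => ?_, fun i => ?_,
    fun j => ?_, hAdist.overlay (hBdist.shiftArray M hB0) hsupp, ?_⟩⟩
  · rw [rowFilled_overlay hskel', rowFilled_shiftArray, hArow, hBrow]
  · rw [colFilled_overlay hskel', colFilled_shiftArray, hAcol, hBcol]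
  · rw [rowSum_overlay hskel', rowSum_shiftArray hBshift, hArsum, hBrsum, add_zero]
  · rw [colSum_overlay hskel', colSum_shiftArray hBshift, hAcsum, hBcsum, add_zero]
  · rw [suppSet_overlay hskel', suppSet_shiftArray M hB0, hAsupp, hBsupp, heffterSupport_self]
    exact heffterSupport_extension hhe

/-- extension theorem: from an integer `H_k(n;k)` and a shiftable
array `B` with `h` filled cells per row/column, row/column sums zero, support
`[1,(h/2)(2n+1)] \ T` and skeleton disjoint from that of `A`, one gets an
integer `H_{k+h}(n;k+h)`. -/
theorem intHeffter_extension (n k h : ℕ) (hh : 0 < h) (hhe : Even h)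
    (A B : Fin n → Fin n → Option ℤ)
    (hA : IsIntHeffter n k k A)
    (hBshift : Shiftable B)
    (hBrow : ∀ i, rowFilled B i = h) (hBcol : ∀ j, colFilled B j = h)
    (hBdist : DistinctAbs B)
    (hBsupp : suppSet B =
      {a : ℕ | (1 ≤ a ∧ a ≤ (h / 2) * (2 * n + 1)) ∧
        a ∉ (if k % 2 = 0 then
              {a : ℕ | ∃ c : ℕ, 1 ≤ c ∧ c ≤ h / 2 ∧ a = c * (2 * n + 1)}
            else
              {a : ℕ | ∃ c : ℕ, c ≤ (h - 2) / 2 ∧ a = (n + 1) + c * (2 * n + 1)} : Set ℕ)})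
    (hBrsum : ∀ i, rowSum B i = 0) (hBcsum : ∀ j, colSum B j = 0)
    (hskel : skel A ∩ skel B = ∅) :
    ∃ C : Fin n → Fin n → Option ℤ, IsIntHeffter n (k + h) (k + h) C :=
  intHeffter_extension_general n k h hhe A B hA hBshift hBrow hBcol hBdist hBsupp hBrsum hBcsum
    hskel
end

section
/- For every integer n ≥ 4, there exists a shiftable, integer, cyclically 4-diagonal relative Heffter array H_4(n;4) (the case t = k = 4, with support [1, 4n+1] \ {2n+1}). -/
def hprev (n r : ℕ) : ℕ := if r = 0 then n - 1 else r - 1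

def ent (n : ℕ) (r c : Fin n) : Option ℤ :=
  if (r:ℕ) = (c:ℕ) then some (2*((r:ℕ):ℤ)+1)
  else if (r:ℕ) = (c:ℕ)+1 ∨ (r:ℕ)+n = (c:ℕ)+1 then some (-(2*((hprev n (r:ℕ) : ℕ):ℤ)+2))
  else if (r:ℕ) = (c:ℕ)+2 ∨ (r:ℕ)+n = (c:ℕ)+2 then some (4*(n:ℤ)+1-2*((r:ℕ):ℤ))
  else if (r:ℕ) = (c:ℕ)+3 ∨ (r:ℕ)+n = (c:ℕ)+3 then some (-(4*(n:ℤ)-2*((hprev n (r:ℕ) : ℕ):ℤ)))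
  else none

lemma hprev_spec (n r : ℕ) (h : r < n) :
    (r = hprev n r + 1 ∨ (r = 0 ∧ hprev n r + 1 = n)) ∧ hprev n r < n := by
  unfold hprev; split_ifs <;> omega

lemma ent_eq_some_iff {n : ℕ} (hn : 4 ≤ n) (r c : Fin n) (x : ℤ) :
    ent n r c = some x ↔
      ((r:ℕ) = (c:ℕ) ∧ x = 2*((r:ℕ):ℤ)+1) ∨
      (((r:ℕ) = (c:ℕ)+1 ∨ (r:ℕ)+n = (c:ℕ)+1) ∧ x = -(2*((hprev n (r:ℕ):ℕ):ℤ)+2)) ∨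
      (((r:ℕ) = (c:ℕ)+2 ∨ (r:ℕ)+n = (c:ℕ)+2) ∧ x = 4*(n:ℤ)+1-2*((r:ℕ):ℤ)) ∨
      (((r:ℕ) = (c:ℕ)+3 ∨ (r:ℕ)+n = (c:ℕ)+3) ∧ x = -(4*(n:ℤ)-2*((hprev n (r:ℕ):ℕ):ℤ))) := by
  have hr := r.isLt; have hc := c.isLt
  unfold ent
  split_ifs with h0 h1 h2 h3
  · have e1 : ¬((r:ℕ) = (c:ℕ)+1 ∨ (r:ℕ)+n = (c:ℕ)+1) := by omega
    have e2 : ¬((r:ℕ) = (c:ℕ)+2 ∨ (r:ℕ)+n = (c:ℕ)+2) := by omega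
    have e3 : ¬((r:ℕ) = (c:ℕ)+3 ∨ (r:ℕ)+n = (c:ℕ)+3) := by omega
    simp only [Option.some.injEq]
    constructor
    · rintro rfl; exact Or.inl ⟨h0, rfl⟩
    · rintro (⟨_,rfl⟩|⟨h,_⟩|⟨h,_⟩|⟨h,_⟩) <;> [rfl; exact absurd h e1; exact absurd h e2; exact absurd h e3]
  · have e2 : ¬((r:ℕ) = (c:ℕ)+2 ∨ (r:ℕ)+n = (c:ℕ)+2) := by omega
    have e3 : ¬((r:ℕ) = (c:ℕ)+3 ∨ (r:ℕ)+n = (c:ℕ)+3) := by omega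
    simp only [Option.some.injEq]
    constructor
    · rintro rfl; exact Or.inr (Or.inl ⟨h1, rfl⟩)
    · rintro (⟨h,_⟩|⟨_,rfl⟩|⟨h,_⟩|⟨h,_⟩) <;> [exact absurd h h0; rfl; exact absurd h e2; exact absurd h e3]
  · have e3 : ¬((r:ℕ) = (c:ℕ)+3 ∨ (r:ℕ)+n = (c:ℕ)+3) := by omega
    simp only [Option.some.injEq]
    constructor
    · rintro rfl; exact Or.inr (Or.inr (Or.inl ⟨h2, rfl⟩))
    · rintro (⟨h,_⟩|⟨h,_⟩|⟨_,rfl⟩|⟨h,_⟩) <;> [exact absurd h h0; exact absurd h h1; rfl; exact absurd h e3]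
  · simp only [Option.some.injEq]
    constructor
    · rintro rfl; exact Or.inr (Or.inr (Or.inr ⟨h3, rfl⟩))
    · rintro (⟨h,_⟩|⟨h,_⟩|⟨h,_⟩|⟨_,rfl⟩) <;> [exact absurd h h0; exact absurd h h1; exact absurd h h2; rfl]
  · simp [h0, h1, h2, h3]

lemma ent_isSome_iff {n : ℕ} (r c : Fin n) :
    (ent n r c).isSome ↔
      ((r:ℕ) = (c:ℕ)) ∨
      ((r:ℕ) = (c:ℕ)+1 ∨ (r:ℕ)+n = (c:ℕ)+1) ∨
      ((r:ℕ) = (c:ℕ)+2 ∨ (r:ℕ)+n = (c:ℕ)+2) ∨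
      ((r:ℕ) = (c:ℕ)+3 ∨ (r:ℕ)+n = (c:ℕ)+3) := by
  unfold ent
  split_ifs with h0 h1 h2 h3 <;> simp_all

def rc (n : ℕ) (i : Fin n) (j : ℕ) : Fin n :=
  ⟨if j ≤ (i:ℕ) then (i:ℕ) - j else (i:ℕ) + n - j,
   by have := i.isLt; rcases Nat.eq_zero_or_pos j with h|h <;> split_ifs <;> omega⟩

lemma rc_val (n : ℕ) (i : Fin n) (j : ℕ) :
    (rc n i j : ℕ) = if j ≤ (i:ℕ) then (i:ℕ) - j else (i:ℕ) + n - j := rfl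

lemma row_filter_eq {n : ℕ} (hn : 4 ≤ n) (i : Fin n) :
    (Finset.univ.filter fun c => (ent n i c).isSome) =
      {rc n i 0, rc n i 1, rc n i 2, rc n i 3} := by
  ext c
  have hc := c.isLt; have hi := i.isLt
  simp only [Finset.mem_filter, Finset.mem_univ, true_and, Finset.mem_insert,
    Finset.mem_singleton, ent_isSome_iff, Fin.ext_iff, rc_val]
  split_ifs <;> omega

lemma rc_injective {n : ℕ} (hn : 4 ≤ n) (i : Fin n) (j j' : ℕ) (hj : j < 4) (hj' : j' < 4)
    (h : j ≠ j') : rc n i j ≠ rc n i j' := by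
  have hi := i.isLt
  simp only [Ne, Fin.ext_iff, rc_val]
  split_ifs <;> omega

def cr (n : ℕ) (c : Fin n) (j : ℕ) : Fin n :=
  ⟨min (if (c:ℕ) + j < n then (c:ℕ) + j else (c:ℕ) + j - n) (n-1),
   by have := c.isLt; split_ifs <;> omega⟩

lemma cr_val {n : ℕ} (hn : 4 ≤ n) (c : Fin n) (j : ℕ) (hj : j ≤ 3) :
    (cr n c j : ℕ) = if (c:ℕ) + j < n then (c:ℕ) + j else (c:ℕ) + j - n := by
  have := c.isLt
  show min _ _ = _
  split_ifs <;> omega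

lemma col_filter_eq {n : ℕ} (hn : 4 ≤ n) (c : Fin n) :
    (Finset.univ.filter fun r => (ent n r c).isSome) =
      {cr n c 0, cr n c 1, cr n c 2, cr n c 3} := by
  ext r
  have hc := c.isLt; have hr := r.isLt
  simp only [Finset.mem_filter, Finset.mem_univ, true_and, Finset.mem_insert,
    Finset.mem_singleton, ent_isSome_iff, Fin.ext_iff,
    cr_val hn c 0 (by norm_num), cr_val hn c 1 (by norm_num),
    cr_val hn c 2 (by norm_num), cr_val hn c 3 (by norm_num)]
  split_ifs <;> omega

lemma cr_injective {n : ℕ} (hn : 4 ≤ n) (c : Fin n) (j j' : ℕ) (hj : j < 4) (hj' : j' < 4)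
    (h : j ≠ j') : cr n c j ≠ cr n c j' := by
  have hc := c.isLt
  simp only [Ne, Fin.ext_iff, cr_val hn c j (by omega), cr_val hn c j' (by omega)]
  split_ifs <;> omega

-- evaluations along a row
lemma ent_rc0 {n : ℕ} (hn : 4 ≤ n) (i : Fin n) :
    ent n i (rc n i 0) = some (2*((i:ℕ):ℤ)+1) :=
  (ent_eq_some_iff hn _ _ _).mpr (Or.inl ⟨by simp [rc_val], rfl⟩)

lemma ent_rc1 {n : ℕ} (hn : 4 ≤ n) (i : Fin n) :
    ent n i (rc n i 1) = some (-(2*((hprev n (i:ℕ):ℕ):ℤ)+2)) :=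
  (ent_eq_some_iff hn _ _ _).mpr (Or.inr (Or.inl
    ⟨by have := i.isLt; simp only [rc_val]; split_ifs <;> omega, rfl⟩))

lemma ent_rc2 {n : ℕ} (hn : 4 ≤ n) (i : Fin n) :
    ent n i (rc n i 2) = some (4*(n:ℤ)+1-2*((i:ℕ):ℤ)) :=
  (ent_eq_some_iff hn _ _ _).mpr (Or.inr (Or.inr (Or.inl
    ⟨by have := i.isLt; simp only [rc_val]; split_ifs <;> omega, rfl⟩)))

lemma ent_rc3 {n : ℕ} (hn : 4 ≤ n) (i : Fin n) :
    ent n i (rc n i 3) = some (-(4*(n:ℤ)-2*((hprev n (i:ℕ):ℕ):ℤ))) :=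
  (ent_eq_some_iff hn _ _ _).mpr (Or.inr (Or.inr (Or.inr
    ⟨by have := i.isLt; simp only [rc_val]; split_ifs <;> omega, rfl⟩)))

-- evaluations along a column
lemma cr_cond0 {n : ℕ} (hn : 4 ≤ n) (c : Fin n) :
    ((cr n c 0 : ℕ) = (c:ℕ)) := by
  have := c.isLt; rw [cr_val hn c 0 (by norm_num)]; split_ifs <;> omega

lemma ent_cr0 {n : ℕ} (hn : 4 ≤ n) (c : Fin n) :
    ent n (cr n c 0) c = some (2*((c:ℕ):ℤ)+1) := by
  have h0 := cr_cond0 hn c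
  rw [show (2*((c:ℕ):ℤ)+1) = 2*((cr n c 0 : ℕ):ℤ)+1 by rw [h0]]
  exact (ent_eq_some_iff hn _ _ _).mpr (Or.inl ⟨h0, rfl⟩)

lemma hprev_cr1 {n : ℕ} (hn : 4 ≤ n) (c : Fin n) :
    hprev n (cr n c 1 : ℕ) = (c:ℕ) := by
  have := c.isLt
  unfold hprev
  rw [cr_val hn c 1 (by norm_num)]
  split_ifs <;> first | exact (False.elim ‹False›) | omega

lemma hprev_cr3 {n : ℕ} (hn : 4 ≤ n) (c : Fin n) :
    hprev n (cr n c 3 : ℕ) = (cr n c 2 : ℕ) := by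
  have := c.isLt
  unfold hprev
  rw [cr_val hn c 3 (by norm_num), cr_val hn c 2 (by norm_num)]
  split_ifs <;> first | exact (False.elim ‹False›) | omega

lemma ent_cr1 {n : ℕ} (hn : 4 ≤ n) (c : Fin n) :
    ent n (cr n c 1) c = some (-(2*((c:ℕ):ℤ)+2)) := by
  have h := hprev_cr1 hn c
  rw [show (-(2*((c:ℕ):ℤ)+2)) = -(2*((hprev n (cr n c 1 : ℕ):ℕ):ℤ)+2) by rw [h]]
  refine (ent_eq_some_iff hn _ _ _).mpr (Or.inr (Or.inl ⟨?_, rfl⟩))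
  have := c.isLt
  rw [cr_val hn c 1 (by norm_num)]
  split_ifs <;> first | exact (False.elim ‹False›) | omega

lemma ent_cr2 {n : ℕ} (hn : 4 ≤ n) (c : Fin n) :
    ent n (cr n c 2) c = some (4*(n:ℤ)+1-2*((cr n c 2 : ℕ):ℤ)) := by
  refine (ent_eq_some_iff hn _ _ _).mpr (Or.inr (Or.inr (Or.inl ⟨?_, rfl⟩)))
  have := c.isLt
  rw [cr_val hn c 2 (by norm_num)]
  split_ifs <;> omega

lemma ent_cr3 {n : ℕ} (hn : 4 ≤ n) (c : Fin n) :
    ent n (cr n c 3) c = some (-(4*(n:ℤ)-2*((cr n c 2 : ℕ):ℤ))) := by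
  have h := hprev_cr3 hn c
  rw [show (-(4*(n:ℤ)-2*((cr n c 2 : ℕ):ℤ))) = -(4*(n:ℤ)-2*((hprev n (cr n c 3 : ℕ):ℕ):ℤ)) by rw [h]]
  refine (ent_eq_some_iff hn _ _ _).mpr (Or.inr (Or.inr (Or.inr ⟨?_, rfl⟩)))
  have := c.isLt
  rw [cr_val hn c 3 (by norm_num)]
  split_ifs <;> omega



-- scratch: counting/sum lemmas
lemma rowFilled_four {n : ℕ} (hn : 4 ≤ n) (i : Fin n) :
    rowFilled (fun r c => ent n r c) i = 4 := by
  unfold rowFilled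
  rw [row_filter_eq hn i]
  rw [Finset.card_insert_of_notMem, Finset.card_insert_of_notMem,
    Finset.card_insert_of_notMem, Finset.card_singleton]
  · simp only [Finset.mem_singleton]; exact rc_injective hn i 2 3 (by norm_num) (by norm_num) (by norm_num)
  · simp only [Finset.mem_insert, Finset.mem_singleton]
    push_neg
    exact ⟨rc_injective hn i 1 2 (by norm_num) (by norm_num) (by norm_num),
           rc_injective hn i 1 3 (by norm_num) (by norm_num) (by norm_num)⟩
  · simp only [Finset.mem_insert, Finset.mem_singleton]
    push_neg
    exact ⟨rc_injective hn i 0 1 (by norm_num) (by norm_num) (by norm_num),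
           rc_injective hn i 0 2 (by norm_num) (by norm_num) (by norm_num),
           rc_injective hn i 0 3 (by norm_num) (by norm_num) (by norm_num)⟩

lemma colFilled_four {n : ℕ} (hn : 4 ≤ n) (c : Fin n) :
    colFilled (fun r c => ent n r c) c = 4 := by
  unfold colFilled
  rw [col_filter_eq hn c]
  rw [Finset.card_insert_of_notMem, Finset.card_insert_of_notMem,
    Finset.card_insert_of_notMem, Finset.card_singleton]
  · simp only [Finset.mem_singleton]; exact cr_injective hn c 2 3 (by norm_num) (by norm_num) (by norm_num)
  · simp only [Finset.mem_insert, Finset.mem_singleton]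
    push_neg
    exact ⟨cr_injective hn c 1 2 (by norm_num) (by norm_num) (by norm_num),
           cr_injective hn c 1 3 (by norm_num) (by norm_num) (by norm_num)⟩
  · simp only [Finset.mem_insert, Finset.mem_singleton]
    push_neg
    exact ⟨cr_injective hn c 0 1 (by norm_num) (by norm_num) (by norm_num),
           cr_injective hn c 0 2 (by norm_num) (by norm_num) (by norm_num),
           cr_injective hn c 0 3 (by norm_num) (by norm_num) (by norm_num)⟩

lemma rowSum_zero {n : ℕ} (hn : 4 ≤ n) (i : Fin n) :
    rowSum (fun r c => ent n r c) i = 0 := by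
  unfold rowSum
  have hz : ∀ x ∈ Finset.univ, x ∉ ({rc n i 0, rc n i 1, rc n i 2, rc n i 3} : Finset (Fin n)) →
      (ent n i x).getD 0 = 0 := by
    intro x _ hx
    rw [← row_filter_eq hn i] at hx
    simp only [Finset.mem_filter, Finset.mem_univ, true_and] at hx
    rw [Option.not_isSome_iff_eq_none.mp hx]
    rfl
  rw [← Finset.sum_subset (Finset.subset_univ _) hz]
  have hm2 : rc n i 2 ∉ ({rc n i 3} : Finset (Fin n)) := by
    simp only [Finset.mem_singleton]
    exact rc_injective hn i 2 3 (by norm_num) (by norm_num) (by norm_num)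
  have hm1 : rc n i 1 ∉ ({rc n i 2, rc n i 3} : Finset (Fin n)) := by
    simp only [Finset.mem_insert, Finset.mem_singleton]; push_neg
    exact ⟨rc_injective hn i 1 2 (by norm_num) (by norm_num) (by norm_num),
           rc_injective hn i 1 3 (by norm_num) (by norm_num) (by norm_num)⟩
  have hm0 : rc n i 0 ∉ ({rc n i 1, rc n i 2, rc n i 3} : Finset (Fin n)) := by
    simp only [Finset.mem_insert, Finset.mem_singleton]; push_neg
    exact ⟨rc_injective hn i 0 1 (by norm_num) (by norm_num) (by norm_num),
           rc_injective hn i 0 2 (by norm_num) (by norm_num) (by norm_num),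
           rc_injective hn i 0 3 (by norm_num) (by norm_num) (by norm_num)⟩
  rw [Finset.sum_insert hm0, Finset.sum_insert hm1, Finset.sum_insert hm2,
    Finset.sum_singleton, ent_rc0 hn i, ent_rc1 hn i, ent_rc2 hn i, ent_rc3 hn i]
  simp only [Option.getD_some]
  ring

lemma colSum_zero {n : ℕ} (hn : 4 ≤ n) (c : Fin n) :
    colSum (fun r c => ent n r c) c = 0 := by
  unfold colSum
  have hz : ∀ x ∈ Finset.univ, x ∉ ({cr n c 0, cr n c 1, cr n c 2, cr n c 3} : Finset (Fin n)) →
      (ent n x c).getD 0 = 0 := by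
    intro x _ hx
    rw [← col_filter_eq hn c] at hx
    simp only [Finset.mem_filter, Finset.mem_univ, true_and] at hx
    rw [Option.not_isSome_iff_eq_none.mp hx]
    rfl
  rw [← Finset.sum_subset (Finset.subset_univ _) hz]
  have hm2 : cr n c 2 ∉ ({cr n c 3} : Finset (Fin n)) := by
    simp only [Finset.mem_singleton]
    exact cr_injective hn c 2 3 (by norm_num) (by norm_num) (by norm_num)
  have hm1 : cr n c 1 ∉ ({cr n c 2, cr n c 3} : Finset (Fin n)) := by
    simp only [Finset.mem_insert, Finset.mem_singleton]; push_neg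
    exact ⟨cr_injective hn c 1 2 (by norm_num) (by norm_num) (by norm_num),
           cr_injective hn c 1 3 (by norm_num) (by norm_num) (by norm_num)⟩
  have hm0 : cr n c 0 ∉ ({cr n c 1, cr n c 2, cr n c 3} : Finset (Fin n)) := by
    simp only [Finset.mem_insert, Finset.mem_singleton]; push_neg
    exact ⟨cr_injective hn c 0 1 (by norm_num) (by norm_num) (by norm_num),
           cr_injective hn c 0 2 (by norm_num) (by norm_num) (by norm_num),
           cr_injective hn c 0 3 (by norm_num) (by norm_num) (by norm_num)⟩
  rw [Finset.sum_insert hm0, Finset.sum_insert hm1, Finset.sum_insert hm2,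
    Finset.sum_singleton, ent_cr0 hn c, ent_cr1 hn c, ent_cr2 hn c, ent_cr3 hn c]
  simp only [Option.getD_some]
  ring

lemma row_pos_filter {n : ℕ} (hn : 4 ≤ n) (i : Fin n) :
    (Finset.univ.filter fun c => 0 < (ent n i c).getD 0) = {rc n i 0, rc n i 2} := by
  have hi := i.isLt
  obtain ⟨hp1, hp2⟩ := hprev_spec n (i:ℕ) hi
  ext x
  have hx := x.isLt
  simp only [Finset.mem_filter, Finset.mem_univ, true_and, Finset.mem_insert,
    Finset.mem_singleton]
  constructor
  · intro h
    cases ho : ent n i x with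
    | none => rw [ho] at h; simp at h
    | some v =>
      rw [ho] at h; simp only [Option.getD_some] at h
      rw [ent_eq_some_iff hn] at ho
      rcases ho with ⟨hc, hv⟩ | ⟨hc, hv⟩ | ⟨hc, hv⟩ | ⟨hc, hv⟩
      · left; apply Fin.ext; rw [rc_val]; split_ifs <;> omega
      · exfalso; omega
      · right; apply Fin.ext; rw [rc_val]; split_ifs <;> omega
      · exfalso; omega
  · rintro (rfl | rfl)
    · rw [ent_rc0 hn i]; simp only [Option.getD_some]; omega
    · rw [ent_rc2 hn i]; simp only [Option.getD_some]; omega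

lemma row_neg_filter {n : ℕ} (hn : 4 ≤ n) (i : Fin n) :
    (Finset.univ.filter fun c => (ent n i c).getD 0 < 0) = {rc n i 1, rc n i 3} := by
  have hi := i.isLt
  obtain ⟨hp1, hp2⟩ := hprev_spec n (i:ℕ) hi
  ext x
  have hx := x.isLt
  simp only [Finset.mem_filter, Finset.mem_univ, true_and, Finset.mem_insert,
    Finset.mem_singleton]
  constructor
  · intro h
    cases ho : ent n i x with
    | none => rw [ho] at h; simp at h
    | some v =>
      rw [ho] at h; simp only [Option.getD_some] at h
      rw [ent_eq_some_iff hn] at ho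
      rcases ho with ⟨hc, hv⟩ | ⟨hc, hv⟩ | ⟨hc, hv⟩ | ⟨hc, hv⟩
      · exfalso; omega
      · left; apply Fin.ext; rw [rc_val]; split_ifs <;> omega
      · exfalso; omega
      · right; apply Fin.ext; rw [rc_val]; split_ifs <;> omega
  · rintro (rfl | rfl)
    · rw [ent_rc1 hn i]; simp only [Option.getD_some]; omega
    · rw [ent_rc3 hn i]; simp only [Option.getD_some]; omega

lemma col_pos_filter {n : ℕ} (hn : 4 ≤ n) (c : Fin n) :
    (Finset.univ.filter fun r => 0 < (ent n r c).getD 0) = {cr n c 0, cr n c 2} := by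
  have hcv := c.isLt
  ext x
  have hx := x.isLt
  obtain ⟨hp1, hp2⟩ := hprev_spec n (x:ℕ) hx
  simp only [Finset.mem_filter, Finset.mem_univ, true_and, Finset.mem_insert,
    Finset.mem_singleton]
  constructor
  · intro h
    cases ho : ent n x c with
    | none => rw [ho] at h; simp at h
    | some v =>
      rw [ho] at h; simp only [Option.getD_some] at h
      rw [ent_eq_some_iff hn] at ho
      rcases ho with ⟨hc, hv⟩ | ⟨hc, hv⟩ | ⟨hc, hv⟩ | ⟨hc, hv⟩
      · left; apply Fin.ext; rw [cr_val hn c 0 (by norm_num)]; split_ifs <;> omega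
      · exfalso; omega
      · right; apply Fin.ext; rw [cr_val hn c 2 (by norm_num)]; split_ifs <;> omega
      · exfalso; omega
  · rintro (rfl | rfl)
    · rw [ent_cr0 hn c]; simp only [Option.getD_some]; omega
    · rw [ent_cr2 hn c]; simp only [Option.getD_some]
      have := (cr n c 2).isLt; omega

lemma col_neg_filter {n : ℕ} (hn : 4 ≤ n) (c : Fin n) :
    (Finset.univ.filter fun r => (ent n r c).getD 0 < 0) = {cr n c 1, cr n c 3} := by
  have hcv := c.isLt
  ext x
  have hx := x.isLt
  obtain ⟨hp1, hp2⟩ := hprev_spec n (x:ℕ) hx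
  simp only [Finset.mem_filter, Finset.mem_univ, true_and, Finset.mem_insert,
    Finset.mem_singleton]
  constructor
  · intro h
    cases ho : ent n x c with
    | none => rw [ho] at h; simp at h
    | some v =>
      rw [ho] at h; simp only [Option.getD_some] at h
      rw [ent_eq_some_iff hn] at ho
      rcases ho with ⟨hc, hv⟩ | ⟨hc, hv⟩ | ⟨hc, hv⟩ | ⟨hc, hv⟩
      · exfalso; omega
      · left; apply Fin.ext; rw [cr_val hn c 1 (by norm_num)]; split_ifs <;> omega
      · exfalso; omega
      · right; apply Fin.ext; rw [cr_val hn c 3 (by norm_num)]; split_ifs <;> omega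
  · rintro (rfl | rfl)
    · rw [ent_cr1 hn c]; simp only [Option.getD_some]; omega
    · rw [ent_cr3 hn c]; simp only [Option.getD_some]
      have := (cr n c 2).isLt; omega

lemma shiftable_ent {n : ℕ} (hn : 4 ≤ n) : Shiftable (fun r c => ent n r c) := by
  constructor
  · intro i
    rw [row_pos_filter hn i, row_neg_filter hn i]
    rw [Finset.card_insert_of_notMem, Finset.card_insert_of_notMem] <;>
      simp only [Finset.mem_singleton, Finset.card_singleton]
    · exact rc_injective hn i 1 3 (by norm_num) (by norm_num) (by norm_num)
    · exact rc_injective hn i 0 2 (by norm_num) (by norm_num) (by norm_num)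
  · intro c
    rw [col_pos_filter hn c, col_neg_filter hn c]
    rw [Finset.card_insert_of_notMem, Finset.card_insert_of_notMem] <;>
      simp only [Finset.mem_singleton, Finset.card_singleton]
    · exact cr_injective hn c 1 3 (by norm_num) (by norm_num) (by norm_num)
    · exact cr_injective hn c 0 2 (by norm_num) (by norm_num) (by norm_num)

lemma diag_cast {n : ℕ} (rv cv j : ℕ) (h : rv = cv + j ∨ rv + n = cv + j) :
    ((rv : ZMod n) - (cv : ZMod n) = (j : ZMod n)) := by
  rcases h with h | h
  · have : ((rv : ℕ) : ZMod n) = ((cv + j : ℕ) : ZMod n) := by rw [h]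
    push_cast at this
    linear_combination this
  · have : ((rv + n : ℕ) : ZMod n) = ((cv + j : ℕ) : ZMod n) := by rw [h]
    push_cast at this
    rw [ZMod.natCast_self] at this
    linear_combination this
  
lemma diag_uncast {n : ℕ} (hn : 4 ≤ n) (rv cv j : ℕ) (hr : rv < n) (hc : cv < n) (hj : j < n)
    (h : (rv : ZMod n) - (cv : ZMod n) = (j : ZMod n)) :
    rv = cv + j ∨ rv + n = cv + j := by
  have h2 : ((rv : ℕ) : ZMod n) = ((cv + j : ℕ) : ZMod n) := by
    push_cast
    linear_combination h
  have h3 : rv % n = (cv + j) % n := (ZMod.natCast_eq_natCast_iff _ _ _).mp h2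
  rw [Nat.mod_eq_of_lt hr] at h3
  rcases Nat.lt_or_ge (cv + j) n with hlt | hge
  · rw [Nat.mod_eq_of_lt hlt] at h3; omega
  · rw [Nat.mod_eq_sub_mod hge, Nat.mod_eq_of_lt (by omega)] at h3; omega

lemma cycDiag_ent {n : ℕ} (hn : 4 ≤ n) : CycDiagonal 4 (fun r c => ent n r c) := by
  refine ⟨0, fun r c => ?_⟩
  rw [ent_isSome_iff]
  have hr := r.isLt; have hc := c.isLt
  constructor
  · rintro (h | h | h | h)
    · refine ⟨0, by norm_num, ?_⟩
      have hd := diag_cast (n:=n) (r:ℕ) (c:ℕ) 0 (Or.inl (by omega))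
      push_cast at hd ⊢
      linear_combination hd
    · refine ⟨1, by norm_num, ?_⟩
      have hd := diag_cast (n:=n) (r:ℕ) (c:ℕ) 1 h
      push_cast at hd ⊢
      linear_combination hd
    · refine ⟨2, by norm_num, ?_⟩
      have hd := diag_cast (n:=n) (r:ℕ) (c:ℕ) 2 h
      push_cast at hd ⊢
      linear_combination hd
    · refine ⟨3, by norm_num, ?_⟩
      have hd := diag_cast (n:=n) (r:ℕ) (c:ℕ) 3 h
      push_cast at hd ⊢
      linear_combination hd
  · rintro ⟨j, hj, he⟩
    rw [zero_add] at he
    have := diag_uncast hn (r:ℕ) (c:ℕ) j hr hc (by omega) he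
    interval_cases j <;> omega

lemma not_dvd_helper (n m : ℕ) (h1 : 1 ≤ m) (h2 : m ≤ 4*n+1) (h3 : m ≠ 2*n+1) :
    ¬ ((2*n+1) ∣ m) := by
  rintro ⟨k, rfl⟩
  rcases Nat.lt_or_ge k 3 with h | h
  · interval_cases k <;> omega
  · have : (2*n+1) * 3 ≤ (2*n+1) * k := Nat.mul_le_mul_left _ h
    omega

lemma ent_bounds {n : ℕ} (hn : 4 ≤ n) (i j : Fin n) (x : ℤ) (hx : ent n i j = some x) :
    1 ≤ x.natAbs ∧ x.natAbs ≤ (2 * n * 4 + 4) / 2 ∧ ¬ ((2 * n * 4 + 4) / 4 ∣ x.natAbs) := by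
  have hi := i.isLt; have hj := j.isLt
  obtain ⟨hp1, hp2⟩ := hprev_spec n (i:ℕ) hi
  rw [ent_eq_some_iff hn] at hx
  have hq : (2 * n * 4 + 4) / 4 = 2*n+1 := by omega
  rw [hq]
  have key : 1 ≤ x.natAbs ∧ x.natAbs ≤ 4*n+1 ∧ x.natAbs ≠ 2*n+1 := by
    rcases hx with ⟨hc, hv⟩ | ⟨hc, hv⟩ | ⟨hc, hv⟩ | ⟨hc, hv⟩ <;> omega
  refine ⟨key.1, by omega, not_dvd_helper n _ key.1 key.2.1 key.2.2⟩

lemma ent_exists_unique {n : ℕ} (hn : 4 ≤ n) (x : ℕ) (hx1 : 1 ≤ x) (hx2 : x ≤ (2*n*4+4)/2)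
    (hx3 : ¬ ((2*n*4+4)/4 ∣ x)) :
    ∃! p : Fin n × Fin n, ent n p.1 p.2 = some (x:ℤ) ∨ ent n p.1 p.2 = some (-(x:ℤ)) := by
  have hq : (2*n*4+4)/4 = 2*n+1 := by omega
  have hne1 : x ≠ 2*n+1 := by rintro rfl; exact hx3 (by rw [hq])
  have hne2 : x ≠ 4*n+2 := by rintro rfl; refine hx3 ?_; rw [hq]; exact ⟨2, by ring⟩
  have hx2' : x ≤ 4*n+2 := by omega
  by_cases hpar : x % 2 = 1 <;> by_cases hsm : x ≤ 2*n
  · -- odd, small : diagonal 0, cell ((x-1)/2, (x-1)/2), value +x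
    refine ⟨(⟨(x-1)/2, by omega⟩, ⟨(x-1)/2, by omega⟩),
      Or.inl ((ent_eq_some_iff hn _ _ _).mpr (Or.inl
        ⟨rfl, by show (x:ℤ) = 2*((((x-1)/2 : ℕ)):ℤ)+1; omega⟩)), ?_⟩
    intro p hab
    have ha := p.1.isLt; have hb := p.2.isLt
    obtain ⟨hp1, hp2⟩ := hprev_spec n (p.1:ℕ) ha
    have heq : (p.1:ℕ) = (x-1)/2 ∧ (p.2:ℕ) = (x-1)/2 := by
      rcases hab with hab | hab <;> rw [ent_eq_some_iff hn] at hab <;>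
        rcases hab with ⟨hc, hv⟩|⟨hc, hv⟩|⟨hc, hv⟩|⟨hc, hv⟩ <;> omega
    rw [Prod.ext_iff]
    exact ⟨Fin.ext heq.1, Fin.ext heq.2⟩
  · -- odd, large : diagonal 2, value +x
    refine ⟨(⟨(4*n+1-x)/2, by omega⟩,
        ⟨if 2 ≤ (4*n+1-x)/2 then (4*n+1-x)/2 - 2 else (4*n+1-x)/2 + n - 2,
          by split_ifs <;> omega⟩),
      Or.inl ((ent_eq_some_iff hn _ _ _).mpr (Or.inr (Or.inr (Or.inl ⟨?_, ?_⟩)))), ?_⟩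
    · show (4*n+1-x)/2 =
          (if 2 ≤ (4*n+1-x)/2 then (4*n+1-x)/2 - 2 else (4*n+1-x)/2 + n - 2) + 2 ∨
        (4*n+1-x)/2 + n =
          (if 2 ≤ (4*n+1-x)/2 then (4*n+1-x)/2 - 2 else (4*n+1-x)/2 + n - 2) + 2
      split_ifs <;> omega
    · show (x:ℤ) = 4*(n:ℤ)+1-2*((((4*n+1-x)/2 : ℕ)):ℤ)
      omega
    · intro p hab
      have ha := p.1.isLt; have hb := p.2.isLt
      obtain ⟨hp1, hp2⟩ := hprev_spec n (p.1:ℕ) ha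
      have heq : (p.1:ℕ) = (4*n+1-x)/2 ∧
          (p.2:ℕ) = (if 2 ≤ (4*n+1-x)/2 then (4*n+1-x)/2 - 2 else (4*n+1-x)/2 + n - 2) := by
        rcases hab with hab | hab <;> rw [ent_eq_some_iff hn] at hab <;>
          rcases hab with ⟨hc, hv⟩|⟨hc, hv⟩|⟨hc, hv⟩|⟨hc, hv⟩ <;> split_ifs <;> omega
      rw [Prod.ext_iff]
      exact ⟨Fin.ext heq.1, Fin.ext heq.2⟩
  · -- even, small : diagonal 1, value -x
    have hpw : hprev n (if x/2 = n then 0 else x/2) = x/2 - 1 := by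
      unfold hprev
      split_ifs <;> first | omega | simp_all
    refine ⟨(⟨if x/2 = n then 0 else x/2, by split_ifs <;> omega⟩, ⟨x/2-1, by omega⟩),
      Or.inr ((ent_eq_some_iff hn _ _ _).mpr (Or.inr (Or.inl ⟨?_, ?_⟩))), ?_⟩
    · show (if x/2 = n then 0 else x/2) = (x/2-1)+1 ∨
        (if x/2 = n then 0 else x/2) + n = (x/2-1)+1
      split_ifs <;> omega
    · show -(x:ℤ) = -(2*((hprev n (if x/2 = n then 0 else x/2) : ℕ):ℤ)+2)
      rw [hpw]; omega
    · intro p hab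
      have ha := p.1.isLt; have hb := p.2.isLt
      obtain ⟨hp1, hp2⟩ := hprev_spec n (p.1:ℕ) ha
      have heq : (p.1:ℕ) = (if x/2 = n then 0 else x/2) ∧ (p.2:ℕ) = x/2 - 1 := by
        rcases hab with hab | hab <;> rw [ent_eq_some_iff hn] at hab <;>
          rcases hab with ⟨hc, hv⟩|⟨hc, hv⟩|⟨hc, hv⟩|⟨hc, hv⟩ <;> split_ifs <;> omega
      rw [Prod.ext_iff]
      exact ⟨Fin.ext heq.1, Fin.ext heq.2⟩
  · -- even, large : diagonal 3, value -x
    have hpw : hprev n (if x = 2*n+2 then 0 else (4*n-x)/2+1) = (4*n-x)/2 := by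
      unfold hprev
      split_ifs <;> first | omega | simp_all
    refine ⟨(⟨if x = 2*n+2 then 0 else (4*n-x)/2+1, by split_ifs <;> omega⟩,
        ⟨if 3 ≤ (if x = 2*n+2 then 0 else (4*n-x)/2+1)
            then (if x = 2*n+2 then 0 else (4*n-x)/2+1) - 3
            else (if x = 2*n+2 then 0 else (4*n-x)/2+1) + n - 3,
          by split_ifs <;> omega⟩),
      Or.inr ((ent_eq_some_iff hn _ _ _).mpr (Or.inr (Or.inr (Or.inr ⟨?_, ?_⟩)))), ?_⟩
    · show (if x = 2*n+2 then 0 else (4*n-x)/2+1) =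
          (if 3 ≤ (if x = 2*n+2 then 0 else (4*n-x)/2+1)
            then (if x = 2*n+2 then 0 else (4*n-x)/2+1) - 3
            else (if x = 2*n+2 then 0 else (4*n-x)/2+1) + n - 3) + 3 ∨
        (if x = 2*n+2 then 0 else (4*n-x)/2+1) + n =
          (if 3 ≤ (if x = 2*n+2 then 0 else (4*n-x)/2+1)
            then (if x = 2*n+2 then 0 else (4*n-x)/2+1) - 3
            else (if x = 2*n+2 then 0 else (4*n-x)/2+1) + n - 3) + 3
      split_ifs <;> omega
    · show -(x:ℤ) =
        -(4*(n:ℤ)-2*((hprev n (if x = 2*n+2 then 0 else (4*n-x)/2+1) : ℕ):ℤ))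
      rw [hpw]; omega
    · intro p hab
      have ha := p.1.isLt; have hb := p.2.isLt
      obtain ⟨hp1, hp2⟩ := hprev_spec n (p.1:ℕ) ha
      have heq : (p.1:ℕ) = (if x = 2*n+2 then 0 else (4*n-x)/2+1) ∧
          (p.2:ℕ) = (if 3 ≤ (if x = 2*n+2 then 0 else (4*n-x)/2+1)
            then (if x = 2*n+2 then 0 else (4*n-x)/2+1) - 3
            else (if x = 2*n+2 then 0 else (4*n-x)/2+1) + n - 3) := by
        rcases hab with hab | hab <;> rw [ent_eq_some_iff hn] at hab <;>
          rcases hab with ⟨hc, hv⟩|⟨hc, hv⟩|⟨hc, hv⟩|⟨hc, hv⟩ <;> split_ifs <;> omega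
      rw [Prod.ext_iff]
      exact ⟨Fin.ext heq.1, Fin.ext heq.2⟩

/-- for every `n ≥ 4` there exists a shiftable, integer,
cyclically 4-diagonal `H_4(n;4)`. -/
theorem intHeffter_H4_cyc4diag (n : ℕ) (hn : 4 ≤ n) :
    ∃ A : Fin n → Fin n → Option ℤ,
      IsIntHeffter n 4 4 A ∧ Shiftable A ∧ CycDiagonal 4 A := by
  refine ⟨fun r c => ent n r c,
    ⟨fun i => rowFilled_four hn i, fun j => colFilled_four hn j,
     fun i => rowSum_zero hn i, fun j => colSum_zero hn j,
     fun i j x hx => ent_bounds hn i j x hx,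
     fun x h1 h2 h3 => ent_exists_unique hn x h1 h2 h3⟩,
    shiftable_ent hn, cycDiag_ent hn⟩
end

section
/- For every integer n ≥ 4, there exists an n×n shiftable, cyclically 4-diagonal, partially filled integer array B whose entries have pairwise distinct absolute values such that: (1) supp(B) = [1, 4n+2] \ {n+1, 3n+2}; (2) the elements in every row and every column of B sum to 0 in Z. -/
namespace SC4

def bfun (m r : ℕ) : ℕ := (r + (m + 2)) % (m + 4)

lemma bfun_lt (m r : ℕ) : bfun m r < m + 4 := Nat.mod_lt _ (by omega)

lemma bfun_spec (m r : ℕ) (hr : r < m + 4) : (bfun m r + 2) % (m + 4) = r := by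
  unfold bfun
  rw [Nat.mod_add_mod]
  have : r + (m + 2) + 2 = r + (m + 4) := by omega
  rw [this, Nat.add_mod_right, Nat.mod_eq_of_lt hr]

lemma bfun_inj (m : ℕ) {r1 r2 : ℕ} (h1 : r1 < m + 4) (h2 : r2 < m + 4)
    (h : bfun m r1 = bfun m r2) : r1 = r2 := by
  have e1 := bfun_spec m r1 h1
  have e2 := bfun_spec m r2 h2
  rw [h] at e1
  omega

lemma bfun_mod (m b : ℕ) (hb : b < m + 4) : bfun m ((b + 2) % (m + 4)) = b := by
  unfold bfun
  rw [Nat.mod_add_mod]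
  have : b + 2 + (m + 2) = b + (m + 4) := by omega
  rw [this, Nat.add_mod_right, Nat.mod_eq_of_lt hb]

def ent (m : ℕ) (r : Fin (m + 4)) (k : ℕ) : Option ℤ :=
  if k = 0 then some ((r.val + 1 : ℕ) : ℤ)
  else if k = 1 then some (-(((m + 4) + r.val + 2 : ℕ) : ℤ))
  else if k = 2 then some (-((2 * (m + 4) + 2 + bfun m r.val : ℕ) : ℤ))
  else if k = 3 then some ((3 * (m + 4) + 3 + bfun m r.val : ℕ) : ℤ)
  else none

def Barr (m : ℕ) : Fin (m + 4) → Fin (m + 4) → Option ℤ := fun r c => ent m r (r - c).val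

lemma ent_isSome {m : ℕ} (r : Fin (m + 4)) (k : ℕ) : (ent m r k).isSome ↔ k < 4 := by
  unfold ent; split_ifs <;> simp <;> omega

lemma ent_cases {m : ℕ} {r : Fin (m + 4)} {k : ℕ} {x : ℤ} (h : ent m r k = some x) :
    (k = 0 ∧ x = ((r.val + 1 : ℕ) : ℤ)) ∨
    (k = 1 ∧ x = -(((m + 4) + r.val + 2 : ℕ) : ℤ)) ∨
    (k = 2 ∧ x = -((2 * (m + 4) + 2 + bfun m r.val : ℕ) : ℤ)) ∨
    (k = 3 ∧ x = ((3 * (m + 4) + 3 + bfun m r.val : ℕ) : ℤ)) := by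
  unfold ent at h; split_ifs at h with h0 h1 h2 h3 <;> simp_all

lemma ent_getD_pos {m : ℕ} (r : Fin (m + 4)) (k : ℕ) :
    0 < (ent m r k).getD 0 ↔ (k = 0 ∨ k = 3) := by
  unfold ent; split_ifs <;> simp_all <;> omega

lemma ent_getD_neg {m : ℕ} (r : Fin (m + 4)) (k : ℕ) :
    (ent m r k).getD 0 < 0 ↔ (k = 1 ∨ k = 2) := by
  unfold ent; split_ifs <;> simp_all <;> omega

lemma ent_getD_zero {m : ℕ} (r : Fin (m + 4)) {k : ℕ} (h : 4 ≤ k) :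
    (ent m r k).getD 0 = 0 := by
  unfold ent; split_ifs <;> first | rfl | omega

lemma card_pair {α : Type*} [DecidableEq α] {s : Finset α} (a b : α) (hab : a ≠ b)
    (h : ∀ x, x ∈ s ↔ x = a ∨ x = b) : s.card = 2 := by
  have hs : s = {a, b} := Finset.ext fun x => by simp [h x]
  rw [hs, Finset.card_insert_of_notMem (by simp [hab]), Finset.card_singleton]

lemma sub_eq_iff' {m : ℕ} (r c k : Fin (m + 4)) : r - c = k ↔ c = r - k :=
  ⟨fun h => by rw [← h, sub_sub_cancel], fun h => by rw [h, sub_sub_cancel]⟩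

lemma row_sum (m : ℕ) (r : Fin (m + 4)) : rowSum (Barr m) r = 0 := by
  unfold rowSum Barr
  have e := Equiv.sum_comp (Equiv.subLeft r) (fun k : Fin (m + 4) => (ent m r k.val).getD 0)
  simp only [Equiv.subLeft_apply] at e
  rw [e, Fin.sum_univ_eq_sum_range (fun k => (ent m r k).getD 0)]
  rw [← Finset.sum_subset (Finset.range_subset_range.mpr (by omega : 4 ≤ m + 4))
      (fun k _ hk => ent_getD_zero r (by simpa using hk))]
  simp [Finset.sum_range_succ, ent]
  ring

lemma col_sum (m : ℕ) (c : Fin (m + 4)) : colSum (Barr m) c = 0 := by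
  unfold colSum Barr
  have e := Equiv.sum_comp (Equiv.addLeft c) (fun i : Fin (m + 4) => (ent m i (i - c).val).getD 0)
  simp only [Equiv.coe_addLeft] at e
  rw [← e]
  simp only [add_sub_cancel_left]
  have key : ∀ k : Fin (m + 4), (ent m (c + k) k.val).getD 0 =
      (if k.val = 0 then ((c.val + 1 : ℕ) : ℤ)
       else if k.val = 1 then -(((m + 4) + (c.val + 1) % (m + 4) + 2 : ℕ) : ℤ)
       else if k.val = 2 then -((2 * (m + 4) + 2 + c.val : ℕ) : ℤ)
       else if k.val = 3 then ((3 * (m + 4) + 3 + (c.val + 1) % (m + 4) : ℕ) : ℤ)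
       else 0) := by
    intro k
    unfold ent
    split_ifs with e0 e1 e2 e3 <;>
      simp only [Option.getD_some, Option.getD_none]
    · have hv : (c + k).val = c.val := by
        rw [Fin.val_add, e0]
        simp [Nat.mod_eq_of_lt c.isLt]
      rw [hv]
    · have hv : (c + k).val = (c.val + 1) % (m + 4) := by rw [Fin.val_add, e1]
      rw [hv]
    · have hv : bfun m (c + k).val = c.val := by
        rw [Fin.val_add, e2]
        unfold bfun
        rw [Nat.mod_add_mod]
        have h2 : c.val + 2 + (m + 2) = c.val + (m + 4) := by omega
        rw [h2, Nat.add_mod_right, Nat.mod_eq_of_lt c.isLt]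
      rw [hv]
    · have hv : bfun m (c + k).val = (c.val + 1) % (m + 4) := by
        rw [Fin.val_add, e3]
        unfold bfun
        rw [Nat.mod_add_mod]
        have h2 : c.val + 3 + (m + 2) = (c.val + 1) + (m + 4) := by omega
        rw [h2, Nat.add_mod_right]
      rw [hv]
  rw [Finset.sum_congr rfl (fun k _ => key k)]
  rw [Fin.sum_univ_eq_sum_range (fun k =>
      (if k = 0 then ((c.val + 1 : ℕ) : ℤ)
       else if k = 1 then -(((m + 4) + (c.val + 1) % (m + 4) + 2 : ℕ) : ℤ)
       else if k = 2 then -((2 * (m + 4) + 2 + c.val : ℕ) : ℤ)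
       else if k = 3 then ((3 * (m + 4) + 3 + (c.val + 1) % (m + 4) : ℕ) : ℤ)
       else 0))]
  rw [← Finset.sum_subset (Finset.range_subset_range.mpr (by omega : 4 ≤ m + 4))
      (fun k _ hk => ?_)]
  · simp only [Finset.sum_range_succ, Finset.sum_range_zero]
    push_cast
    ring
  · have h4 : 4 ≤ k := by
      have := Finset.mem_range.not.mp hk
      omega
    split_ifs <;> first | rfl | omega

lemma shiftable (m : ℕ) : Shiftable (Barr m) := by
  constructor
  · intro r
    rw [card_pair (r - ⟨0, by omega⟩) (r - ⟨3, by omega⟩) ?_ ?_,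
        card_pair (r - ⟨1, by omega⟩) (r - ⟨2, by omega⟩) ?_ ?_]
    · intro h
      have := sub_right_injective h
      simp [Fin.ext_iff] at this
    · intro x
      simp only [Finset.mem_filter, Finset.mem_univ, true_and, Barr, ent_getD_neg]
      constructor
      · rintro (h | h)
        · exact Or.inl ((sub_eq_iff' r x _).mp (Fin.ext h))
        · exact Or.inr ((sub_eq_iff' r x _).mp (Fin.ext h))
      · rintro (rfl | rfl) <;> [left; right] <;> rw [sub_sub_cancel]
    · intro h
      have := sub_right_injective h
      simp [Fin.ext_iff] at this
    · intro x
      simp only [Finset.mem_filter, Finset.mem_univ, true_and, Barr, ent_getD_pos]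
      constructor
      · rintro (h | h)
        · exact Or.inl ((sub_eq_iff' r x _).mp (Fin.ext h))
        · exact Or.inr ((sub_eq_iff' r x _).mp (Fin.ext h))
      · rintro (rfl | rfl) <;> [left; right] <;> rw [sub_sub_cancel]
  · intro c
    rw [card_pair ((⟨0, by omega⟩ : Fin (m + 4)) + c) ((⟨3, by omega⟩ : Fin (m + 4)) + c) ?_ ?_,
        card_pair ((⟨1, by omega⟩ : Fin (m + 4)) + c) ((⟨2, by omega⟩ : Fin (m + 4)) + c) ?_ ?_]
    · intro h
      have := add_left_injective c h
      simp [Fin.ext_iff] at this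
    · intro x
      simp only [Finset.mem_filter, Finset.mem_univ, true_and, Barr, ent_getD_neg]
      constructor
      · rintro (h | h)
        · exact Or.inl (sub_eq_iff_eq_add.mp (Fin.ext h))
        · exact Or.inr (sub_eq_iff_eq_add.mp (Fin.ext h))
      · rintro (rfl | rfl) <;> [left; right] <;> rw [add_sub_cancel_right]
    · intro h
      have := add_left_injective c h
      simp [Fin.ext_iff] at this
    · intro x
      simp only [Finset.mem_filter, Finset.mem_univ, true_and, Barr, ent_getD_pos]
      constructor
      · rintro (h | h)
        · exact Or.inl (sub_eq_iff_eq_add.mp (Fin.ext h))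
        · exact Or.inr (sub_eq_iff_eq_add.mp (Fin.ext h))
      · rintro (rfl | rfl) <;> [left; right] <;> rw [add_sub_cancel_right]

lemma natCast_sub_val (m : ℕ) (r c : Fin (m + 4)) :
    (((r - c).val : ℕ) : ZMod (m + 4)) = ((r.val : ℕ) : ZMod (m + 4)) - ((c.val : ℕ) : ZMod (m + 4)) := by
  have hv : (r - c).val = ((m + 4) - c.val + r.val) % (m + 4) := by
    rw [Fin.sub_def]
  rw [hv, ZMod.natCast_mod, Nat.cast_add, Nat.cast_sub (le_of_lt c.isLt)]
  have : ((m + 4 : ℕ) : ZMod (m + 4)) = 0 := ZMod.natCast_self _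
  rw [this]
  ring

lemma cyc_diag (m : ℕ) : CycDiagonal 4 (Barr m) := by
  refine ⟨0, fun r c => ?_⟩
  rw [show Barr m r c = ent m r (r - c).val from rfl, ent_isSome]
  constructor
  · intro h
    exact ⟨(r - c).val, h, by rw [zero_add, ← natCast_sub_val]⟩
  · rintro ⟨j, hj, e⟩
    rw [zero_add, ← natCast_sub_val] at e
    have := congrArg ZMod.val e
    rw [ZMod.val_cast_of_lt (r - c).isLt, ZMod.val_cast_of_lt (by omega : j < m + 4)] at this
    omega

lemma cell_eq {m : ℕ} {i i' j j' : Fin (m + 4)} (hi : i.val = i'.val)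
    (h : (i - j).val = (i' - j').val) : (i, j) = (i', j') := by
  have hi2 : i = i' := Fin.ext hi
  subst hi2
  have h2 : i - j = i - j' := Fin.ext h
  have hj : j = j' := sub_right_injective h2
  rw [hj]

lemma distinct_abs (m : ℕ) : DistinctAbs (Barr m) := by
  intro i j i' j' x y hx hy hxy
  have l1 := i.isLt
  have l2 := i'.isLt
  have b1 := bfun_lt m i.val
  have b2 := bfun_lt m i'.val
  rcases ent_cases hx with ⟨hk, rfl⟩ | ⟨hk, rfl⟩ | ⟨hk, rfl⟩ | ⟨hk, rfl⟩ <;>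
    rcases ent_cases hy with ⟨hk', rfl⟩ | ⟨hk', rfl⟩ | ⟨hk', rfl⟩ | ⟨hk', rfl⟩ <;>
    simp only [Int.natAbs_neg, Int.natAbs_natCast] at hxy <;>
    first
      | omega
      | exact cell_eq (by omega) (by rw [hk, hk'])
      | exact cell_eq (bfun_inj m l1 l2 (by omega)) (by rw [hk, hk'])

lemma supp (m : ℕ) : suppSet (Barr m) =
    {a : ℕ | 1 ≤ a ∧ a ≤ 4 * (m + 4) + 2 ∧ a ≠ (m + 4) + 1 ∧ a ≠ 3 * (m + 4) + 2} := by
  ext a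
  constructor
  · rintro ⟨i, j, x, hx, rfl⟩
    have l1 := i.isLt
    have b1 := bfun_lt m i.val
    rcases ent_cases hx with ⟨hk, rfl⟩ | ⟨hk, rfl⟩ | ⟨hk, rfl⟩ | ⟨hk, rfl⟩ <;>
      simp only [Int.natAbs_neg, Int.natAbs_natCast, Set.mem_setOf_eq] <;>
      refine ⟨by omega, by omega, by omega, by omega⟩
  · rintro ⟨h1, h2, h3, h4⟩
    rcases (show a ≤ m + 4 ∨ ((m + 4) + 2 ≤ a ∧ a ≤ 2 * (m + 4) + 1) ∨
        (2 * (m + 4) + 2 ≤ a ∧ a ≤ 3 * (m + 4) + 1) ∨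
        (3 * (m + 4) + 3 ≤ a ∧ a ≤ 4 * (m + 4) + 2) from by omega) with h | h | h | h
    · refine ⟨⟨a - 1, by omega⟩, ⟨a - 1, by omega⟩ - ⟨0, by omega⟩,
        (((a - 1) + 1 : ℕ) : ℤ), ?_, ?_⟩
      · show ent m _ ((⟨a - 1, by omega⟩ - (⟨a - 1, by omega⟩ - ⟨0, by omega⟩) : Fin (m + 4))).val = _
        rw [sub_sub_cancel]
        simp [ent]
      · simp [Int.natAbs_natCast]; omega
    · refine ⟨⟨a - (m + 6), by omega⟩, ⟨a - (m + 6), by omega⟩ - ⟨1, by omega⟩,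
        (-(((m + 4) + (a - (m + 6)) + 2 : ℕ) : ℤ)), ?_, ?_⟩
      · show ent m _ ((⟨a - (m + 6), by omega⟩ -
            (⟨a - (m + 6), by omega⟩ - ⟨1, by omega⟩) : Fin (m + 4))).val = _
        rw [sub_sub_cancel]
        simp [ent]
      · simp [Int.natAbs_neg, Int.natAbs_natCast]; omega
    · have hb : a - (2 * (m + 4) + 2) < m + 4 := by omega
      refine ⟨⟨(a - (2 * (m + 4) + 2) + 2) % (m + 4), Nat.mod_lt _ (by omega)⟩,
        ⟨(a - (2 * (m + 4) + 2) + 2) % (m + 4), Nat.mod_lt _ (by omega)⟩ - ⟨2, by omega⟩,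
        (-((2 * (m + 4) + 2 + (a - (2 * (m + 4) + 2)) : ℕ) : ℤ)), ?_, ?_⟩
      · show ent m _ ((⟨(a - (2 * (m + 4) + 2) + 2) % (m + 4), Nat.mod_lt _ (by omega)⟩ -
            (⟨(a - (2 * (m + 4) + 2) + 2) % (m + 4), Nat.mod_lt _ (by omega)⟩ - ⟨2, by omega⟩) :
            Fin (m + 4))).val = _
        rw [sub_sub_cancel]
        show ent m _ (2 : ℕ) = _
        unfold ent
        norm_num
        rw [bfun_mod m _ hb]
      · simp [Int.natAbs_neg, Int.natAbs_natCast]; omega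
    · have hb : a - (3 * (m + 4) + 3) < m + 4 := by omega
      refine ⟨⟨(a - (3 * (m + 4) + 3) + 2) % (m + 4), Nat.mod_lt _ (by omega)⟩,
        ⟨(a - (3 * (m + 4) + 3) + 2) % (m + 4), Nat.mod_lt _ (by omega)⟩ - ⟨3, by omega⟩,
        (((3 * (m + 4) + 3 + (a - (3 * (m + 4) + 3)) : ℕ) : ℤ)), ?_, ?_⟩
      · show ent m _ ((⟨(a - (3 * (m + 4) + 3) + 2) % (m + 4), Nat.mod_lt _ (by omega)⟩ -
            (⟨(a - (3 * (m + 4) + 3) + 2) % (m + 4), Nat.mod_lt _ (by omega)⟩ - ⟨3, by omega⟩) :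
            Fin (m + 4))).val = _
        rw [sub_sub_cancel]
        show ent m _ (3 : ℕ) = _
        unfold ent
        norm_num
        rw [bfun_mod m _ hb]
      · simp [Int.natAbs_natCast]; omega

end SC4

/-- for every `n ≥ 4` there is an `n × n` shiftable, cyclically
4-diagonal partially filled integer array with pairwise distinct absolute
values, support `[1,4n+2] \ {n+1, 3n+2}`, and zero row and column sums. -/
theorem shiftable_cyc4diag_aux (n : ℕ) (hn : 4 ≤ n) :
    ∃ B : Fin n → Fin n → Option ℤ,
      Shiftable B ∧ CycDiagonal 4 B ∧ DistinctAbs B ∧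
      suppSet B = {a : ℕ | 1 ≤ a ∧ a ≤ 4 * n + 2 ∧ a ≠ n + 1 ∧ a ≠ 3 * n + 2} ∧
      (∀ i, rowSum B i = 0) ∧ (∀ j, colSum B j = 0) := by
  obtain ⟨m, rfl⟩ : ∃ m, n = m + 4 := ⟨n - 4, by omega⟩
  exact ⟨SC4.Barr m, SC4.shiftable m, SC4.cyc_diag m, SC4.distinct_abs m, SC4.supp m,
    SC4.row_sum m, SC4.col_sum m⟩
end

section
/- For every even integer n ≥ 4, there exists a shiftable, integer, cyclically (2,2)-diagonal relative Heffter array H_4(n;4) (the case t = k = 4, with support [1, 4n+1] \ {2n+1}). -/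
/-- inner value function: `ro` = row parity, `i` = block row, `t` = diagonal offset. -/
def hval (m ro i t : ℕ) : Option ℤ :=
  if ro = 0 then
    if t = 0 then some ((2*i+1 : ℕ) : ℤ)
    else if t = 1 then some (-((2*m+2*i+1 : ℕ) : ℤ))
    else if t = 2 then some (-((2*((i+1)%m)+2 : ℕ) : ℤ))
    else if t = 3 then some ((2*m+2*((i+1)%m)+2 : ℕ) : ℤ)
    else none
  else
    if t = 0 then some ((6*m+2*i+3 : ℕ) : ℤ)
    else if t = 1 then some (-((4*m+2*i+3 : ℕ) : ℤ))
    else if t = 2 then some (-((6*m+2*((i+1)%m)+2 : ℕ) : ℤ))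
    else if t = 3 then some ((4*m+2*((i+1)%m)+2 : ℕ) : ℤ)
    else none

def Bf (m r c : ℕ) : Option ℤ := hval m (r%2) (r/2) ((c + 2*m - 2*(r/2)) % (2*m))

lemma mod2m {a M : ℕ} (h : a < 2*M) : a % M = if a < M then a else a - M := by
  split_ifs with h1
  · exact Nat.mod_eq_of_lt h1
  · rw [Nat.mod_eq_sub_mod (le_of_not_gt h1), Nat.mod_eq_of_lt (by omega)]

lemma Tval {m r c : ℕ} (hr : r < 2*m) (hc : c < 2*m) :
    (c + 2*m - 2*(r/2)) % (2*m) =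
      if 2*(r/2) ≤ c then c - 2*(r/2) else c + 2*m - 2*(r/2) := by
  have hi : 2*(r/2) ≤ r := by omega
  rw [mod2m (by omega)]
  split_ifs <;> omega

lemma succ_mod {i m : ℕ} (hi : i < m) :
    (i+1) % m = i+1 ∧ i+1 < m ∨ (i+1) % m = 0 ∧ i+1 = m := by
  rw [mod2m (by omega)]; split_ifs <;> omega

set_option maxHeartbeats 1000000 in
/-- characterization of filled cells and their values -/
lemma Bsome {m r c : ℕ} (hm : 2 ≤ m) (hr : r < 2*m) (hc : c < 2*m) {y : ℤ}
    (h : Bf m r c = some y) :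
    ∃ i, i < m ∧ ∃ i', i' < m ∧ i' = (i+1)%m ∧
      ((r = 2*i ∧ (c = 2*i ∧ y = 2*i+1 ∨ c = 2*i+1 ∧ y = -(2*m+2*i+1) ∨
          c = 2*i' ∧ y = -(2*i'+2) ∨ c = 2*i'+1 ∧ y = 2*m+2*i'+2))
      ∨ (r = 2*i+1 ∧ (c = 2*i ∧ y = 6*m+2*i+3 ∨ c = 2*i+1 ∧ y = -(4*m+2*i+3) ∨
          c = 2*i' ∧ y = -(6*m+2*i'+2) ∨ c = 2*i'+1 ∧ y = 4*m+2*i'+2))) := by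
  unfold Bf hval at h
  rw [Tval hr hc] at h
  have hi : r/2 < m := by omega
  have hip := succ_mod hi
  refine ⟨r/2, hi, (r/2+1)%m, by omega, rfl, ?_⟩
  have hr2 : r % 2 = 0 ∨ r % 2 = 1 := by omega
  rcases hr2 with h2 | h2
  · rw [h2, if_pos rfl] at h
    split_ifs at h <;>
      [(injection h with h; exact Or.inl ⟨by omega, Or.inl ⟨by omega, by omega⟩⟩);
       (injection h with h; exact Or.inl ⟨by omega, Or.inr (Or.inl ⟨by omega, by omega⟩)⟩);
       (injection h with h; exact Or.inl ⟨by omega, Or.inr (Or.inr (Or.inl ⟨by omega, by omega⟩))⟩);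
       (injection h with h; exact Or.inl ⟨by omega, Or.inr (Or.inr (Or.inr ⟨by omega, by omega⟩))⟩);
       (injection h with h; exact Or.inl ⟨by omega, Or.inl ⟨by omega, by omega⟩⟩);
       (injection h with h; exact Or.inl ⟨by omega, Or.inr (Or.inl ⟨by omega, by omega⟩)⟩);
       (injection h with h; exact Or.inl ⟨by omega, Or.inr (Or.inr (Or.inl ⟨by omega, by omega⟩))⟩);
       (injection h with h; exact Or.inl ⟨by omega, Or.inr (Or.inr (Or.inr ⟨by omega, by omega⟩))⟩)]
  · rw [h2, if_neg one_ne_zero] at h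
    split_ifs at h <;>
      [(injection h with h; exact Or.inr ⟨by omega, Or.inl ⟨by omega, by omega⟩⟩);
       (injection h with h; exact Or.inr ⟨by omega, Or.inr (Or.inl ⟨by omega, by omega⟩)⟩);
       (injection h with h; exact Or.inr ⟨by omega, Or.inr (Or.inr (Or.inl ⟨by omega, by omega⟩))⟩);
       (injection h with h; exact Or.inr ⟨by omega, Or.inr (Or.inr (Or.inr ⟨by omega, by omega⟩))⟩);
       (injection h with h; exact Or.inr ⟨by omega, Or.inl ⟨by omega, by omega⟩⟩);
       (injection h with h; exact Or.inr ⟨by omega, Or.inr (Or.inl ⟨by omega, by omega⟩)⟩);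
       (injection h with h; exact Or.inr ⟨by omega, Or.inr (Or.inr (Or.inl ⟨by omega, by omega⟩))⟩);
       (injection h with h; exact Or.inr ⟨by omega, Or.inr (Or.inr (Or.inr ⟨by omega, by omega⟩))⟩)]

lemma Bf_isSome {m r c : ℕ} :
    (Bf m r c).isSome = true ↔ (c + 2*m - 2*(r/2)) % (2*m) < 4 := by
  unfold Bf hval
  split_ifs <;> simp <;> omega

lemma Bf_at' {m i ro t : ℕ} (hm : 2 ≤ m) (hi : i < m) (hro : ro < 2) (ht : t < 4) :
    Bf m (2*i+ro) ((2*i+t) % (2*m)) = hval m ro i t := by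
  have h1 : (2*i+ro)/2 = i := by omega
  have h2 : (2*i+ro)%2 = ro := by omega
  unfold Bf
  rw [h1, h2]
  have h3 := mod2m (a := 2*i+t) (M := 2*m) (by omega)
  rw [h3]
  have h4 : ((if 2*i+t < 2*m then 2*i+t else 2*i+t - 2*m) + 2*m - 2*i) % (2*m) = t := by
    split_ifs <;> rw [mod2m (by omega)] <;> split_ifs <;> omega
  rw [h4]

lemma predm {m i' : ℕ} (hm : 2 ≤ m) (hi' : i' < m) :
    ((if i' = 0 then m-1 else i'-1) + 1) % m = i' := by
  split_ifs with h
  · have e : m-1+1 = m := by omega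
    rw [e, Nat.mod_self, h]
  · have e : i'-1+1 = i' := by omega
    rw [e, Nat.mod_eq_of_lt hi']

lemma Bf_pos_iff {m r c : ℕ} :
    (0 < (Bf m r c).getD 0) ↔ ((c + 2*m - 2*(r/2)) % (2*m) = 0 ∨ (c + 2*m - 2*(r/2)) % (2*m) = 3) := by
  unfold Bf hval
  split_ifs <;> simp only [Option.getD_some, Option.getD_none] <;> omega

lemma Bf_neg_iff {m r c : ℕ} :
    ((Bf m r c).getD 0 < 0) ↔ ((c + 2*m - 2*(r/2)) % (2*m) = 1 ∨ (c + 2*m - 2*(r/2)) % (2*m) = 2) := by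
  unfold Bf hval
  split_ifs <;> simp only [Option.getD_some, Option.getD_none] <;> omega

set_option maxHeartbeats 1600000 in
lemma abs_inj {m : ℕ} (hm : 2 ≤ m) {r c r' c' : ℕ} (hr : r < 2*m) (hc : c < 2*m)
    (hr' : r' < 2*m) (hc' : c' < 2*m) {y y' : ℤ}
    (hy : Bf m r c = some y) (hy' : Bf m r' c' = some y')
    (hab : y.natAbs = y'.natAbs) : r = r' ∧ c = c' ∧ y = y' := by
  obtain ⟨i, hi, i1, hi1, hii, H⟩ := Bsome hm hr hc hy
  obtain ⟨i', hi', i1', hi1', hii', H'⟩ := Bsome hm hr' hc' hy'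
  have e1 := succ_mod hi
  have e2 := succ_mod hi'
  rcases H with ⟨h1, ⟨h3,h4⟩|⟨h3,h4⟩|⟨h3,h4⟩|⟨h3,h4⟩⟩ | ⟨h1, ⟨h3,h4⟩|⟨h3,h4⟩|⟨h3,h4⟩|⟨h3,h4⟩⟩ <;>
    rcases H' with ⟨g1, ⟨g3,g4⟩|⟨g3,g4⟩|⟨g3,g4⟩|⟨g3,g4⟩⟩ | ⟨g1, ⟨g3,g4⟩|⟨g3,g4⟩|⟨g3,g4⟩|⟨g3,g4⟩⟩ <;>
    omega

def Arr (m : ℕ) : Fin (2*m) → Fin (2*m) → Option ℤ := fun r c => Bf m r c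

lemma row_sum_nat {m : ℕ} (hm : 2 ≤ m) {rv : ℕ} (hrv : rv < 2*m) :
    (Bf m rv ((2*(rv/2)+0)%(2*m))).getD 0 + ((Bf m rv ((2*(rv/2)+1)%(2*m))).getD 0 +
      ((Bf m rv ((2*(rv/2)+2)%(2*m))).getD 0 + (Bf m rv ((2*(rv/2)+3)%(2*m))).getD 0)) = 0 := by
  obtain ⟨i, ro, hro, rfl⟩ : ∃ i ro, ro < 2 ∧ rv = 2*i+ro := ⟨rv/2, rv%2, by omega, by omega⟩
  have hi : i < m := by omega
  rw [show (2*i+ro)/2 = i from by omega]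
  rw [Bf_at' hm hi hro (by omega), Bf_at' hm hi hro (by omega),
      Bf_at' hm hi hro (by omega), Bf_at' hm hi hro (by omega)]
  interval_cases ro <;> simp only [hval, reduceIte] <;> push_cast [Option.getD_some] <;> ring

lemma row_filter {m : ℕ} (hm : 2 ≤ m) (r : Fin (2*m)) :
    (Finset.univ.filter fun c => (Arr m r c).isSome) =
      ({⟨(2*((r:ℕ)/2)+0) % (2*m), Nat.mod_lt _ (by omega)⟩,
        ⟨(2*((r:ℕ)/2)+1) % (2*m), Nat.mod_lt _ (by omega)⟩,
        ⟨(2*((r:ℕ)/2)+2) % (2*m), Nat.mod_lt _ (by omega)⟩,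
        ⟨(2*((r:ℕ)/2)+3) % (2*m), Nat.mod_lt _ (by omega)⟩} : Finset (Fin (2*m))) := by
  ext c
  have h0 := mod2m (a := 2*((r:ℕ)/2)+0) (M := 2*m) (by omega)
  have h1 := mod2m (a := 2*((r:ℕ)/2)+1) (M := 2*m) (by omega)
  have h2 := mod2m (a := 2*((r:ℕ)/2)+2) (M := 2*m) (by omega)
  have h3 := mod2m (a := 2*((r:ℕ)/2)+3) (M := 2*m) (by omega)
  have hc := c.isLt
  have hr := r.isLt
  simp only [Finset.mem_filter, Finset.mem_univ, true_and, Finset.mem_insert,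
    Finset.mem_singleton, Fin.ext_iff, Arr, Bf_isSome, Tval hr hc]
  split_ifs at h0 h1 h2 h3 ⊢ <;> omega

lemma arr_rowFilled {m : ℕ} (hm : 2 ≤ m) (r : Fin (2*m)) : rowFilled (Arr m) r = 4 := by
  unfold rowFilled
  rw [row_filter hm r]
  have h0 := mod2m (a := 2*((r:ℕ)/2)+0) (M := 2*m) (by omega)
  have h1 := mod2m (a := 2*((r:ℕ)/2)+1) (M := 2*m) (by omega)
  have h2 := mod2m (a := 2*((r:ℕ)/2)+2) (M := 2*m) (by omega)
  have h3 := mod2m (a := 2*((r:ℕ)/2)+3) (M := 2*m) (by omega)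
  have hr := r.isLt
  rw [Finset.card_insert_of_notMem (by
        simp only [Finset.mem_insert, Finset.mem_singleton, Fin.ext_iff]
        split_ifs at h0 h1 h2 h3 <;> omega),
      Finset.card_insert_of_notMem (by
        simp only [Finset.mem_insert, Finset.mem_singleton, Fin.ext_iff]
        split_ifs at h1 h2 h3 <;> omega),
      Finset.card_insert_of_notMem (by
        simp only [Finset.mem_singleton, Fin.ext_iff]
        split_ifs at h2 h3 <;> omega),
      Finset.card_singleton]

lemma arr_rowSum {m : ℕ} (hm : 2 ≤ m) (r : Fin (2*m)) : rowSum (Arr m) r = 0 := by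
  unfold rowSum
  have h0 := mod2m (a := 2*((r:ℕ)/2)+0) (M := 2*m) (by omega)
  have h1 := mod2m (a := 2*((r:ℕ)/2)+1) (M := 2*m) (by omega)
  have h2 := mod2m (a := 2*((r:ℕ)/2)+2) (M := 2*m) (by omega)
  have h3 := mod2m (a := 2*((r:ℕ)/2)+3) (M := 2*m) (by omega)
  have hr := r.isLt
  rw [← Finset.sum_subset (Finset.subset_univ
      ({⟨(2*((r:ℕ)/2)+0) % (2*m), Nat.mod_lt _ (by omega)⟩,
        ⟨(2*((r:ℕ)/2)+1) % (2*m), Nat.mod_lt _ (by omega)⟩,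
        ⟨(2*((r:ℕ)/2)+2) % (2*m), Nat.mod_lt _ (by omega)⟩,
        ⟨(2*((r:ℕ)/2)+3) % (2*m), Nat.mod_lt _ (by omega)⟩} : Finset (Fin (2*m))))
      (by
        intro c _ hcm
        have hnm : ¬ ((Arr m r c).isSome = true) := by
          intro hs
          exact hcm ((row_filter hm r) ▸ Finset.mem_filter.mpr ⟨Finset.mem_univ c, hs⟩)
        rw [Option.not_isSome_iff_eq_none.mp hnm]
        rfl)]
  rw [Finset.sum_insert (by
        simp only [Finset.mem_insert, Finset.mem_singleton, Fin.ext_iff]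
        split_ifs at h0 h1 h2 h3 <;> omega),
      Finset.sum_insert (by
        simp only [Finset.mem_insert, Finset.mem_singleton, Fin.ext_iff]
        split_ifs at h1 h2 h3 <;> omega),
      Finset.sum_insert (by
        simp only [Finset.mem_singleton, Fin.ext_iff]
        split_ifs at h2 h3 <;> omega),
      Finset.sum_singleton]
  exact row_sum_nat hm hr
lemma col_cell_eq {m : ℕ} (hm : 2 ≤ m) {j u : ℕ} (hj : j < m) (hu : u < 2) :
    (2*(if j = 0 then m-1 else j-1)+(u+2)) % (2*m) = 2*j+u := by
  split_ifs with h <;> rw [mod2m (by omega)] <;> split_ifs <;> omega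

lemma col_sum_nat {m : ℕ} (hm : 2 ≤ m) {cv : ℕ} (hcv : cv < 2*m) :
    (Bf m (2*(cv/2)+0) cv).getD 0 + ((Bf m (2*(cv/2)+1) cv).getD 0 +
      ((Bf m (2*(if cv/2 = 0 then m-1 else cv/2-1)+0) cv).getD 0 +
       (Bf m (2*(if cv/2 = 0 then m-1 else cv/2-1)+1) cv).getD 0)) = 0 := by
  obtain ⟨j, u, hu, rfl⟩ : ∃ j u, u < 2 ∧ cv = 2*j+u := ⟨cv/2, cv%2, by omega, by omega⟩
  have hj : j < m := by omega
  rw [show (2*j+u)/2 = j from by omega]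
  have hjp : (if j = 0 then m-1 else j-1) < m := by split_ifs <;> omega
  have e3 : Bf m (2*j+0) (2*j+u) = hval m 0 j u := by
    rw [show (2*j+u : ℕ) = (2*j+u)%(2*m) from (Nat.mod_eq_of_lt hcv).symm]
    exact Bf_at' hm hj (by omega) (by omega)
  have e4 : Bf m (2*j+1) (2*j+u) = hval m 1 j u := by
    rw [show (2*j+u : ℕ) = (2*j+u)%(2*m) from (Nat.mod_eq_of_lt hcv).symm]
    exact Bf_at' hm hj (by omega) (by omega)
  have e1 : Bf m (2*(if j = 0 then m-1 else j-1)+0) (2*j+u) = hval m 0 (if j = 0 then m-1 else j-1) (u+2) := by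
    rw [show (2*j+u : ℕ) = (2*(if j = 0 then m-1 else j-1)+(u+2)) % (2*m) from (col_cell_eq hm hj hu).symm]
    exact Bf_at' hm hjp (by omega) (by omega)
  have e2 : Bf m (2*(if j = 0 then m-1 else j-1)+1) (2*j+u) = hval m 1 (if j = 0 then m-1 else j-1) (u+2) := by
    rw [show (2*j+u : ℕ) = (2*(if j = 0 then m-1 else j-1)+(u+2)) % (2*m) from (col_cell_eq hm hj hu).symm]
    exact Bf_at' hm hjp (by omega) (by omega)
  rw [e1, e2, e3, e4]
  have hpm := predm hm hj
  interval_cases u <;>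
    simp only [hval, reduceIte] <;> rw [hpm] <;> push_cast [Option.getD_some] <;> ring

lemma col_filter {m : ℕ} (hm : 2 ≤ m) (c : Fin (2*m)) :
    (Finset.univ.filter fun r => (Arr m r c).isSome) =
      ({⟨2*((c:ℕ)/2)+0, by have := c.isLt; omega⟩,
        ⟨2*((c:ℕ)/2)+1, by have := c.isLt; omega⟩,
        ⟨2*(if (c:ℕ)/2 = 0 then m-1 else (c:ℕ)/2-1)+0, by split_ifs <;> omega⟩,
        ⟨2*(if (c:ℕ)/2 = 0 then m-1 else (c:ℕ)/2-1)+1, by split_ifs <;> omega⟩} : Finset (Fin (2*m))) := by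
  ext r
  have hc := c.isLt
  have hr := r.isLt
  simp only [Finset.mem_filter, Finset.mem_univ, true_and, Finset.mem_insert,
    Finset.mem_singleton, Fin.ext_iff, Arr, Bf_isSome, Tval hr hc]
  split_ifs <;> omega

lemma arr_colFilled {m : ℕ} (hm : 2 ≤ m) (c : Fin (2*m)) : colFilled (Arr m) c = 4 := by
  unfold colFilled
  rw [col_filter hm c]
  have hc := c.isLt
  rw [Finset.card_insert_of_notMem (by
        simp only [Finset.mem_insert, Finset.mem_singleton, Fin.ext_iff]
        split_ifs <;> omega),
      Finset.card_insert_of_notMem (by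
        simp only [Finset.mem_insert, Finset.mem_singleton, Fin.ext_iff]
        split_ifs <;> omega),
      Finset.card_insert_of_notMem (by
        simp only [Finset.mem_singleton, Fin.ext_iff]
        split_ifs <;> omega),
      Finset.card_singleton]

lemma arr_colSum {m : ℕ} (hm : 2 ≤ m) (c : Fin (2*m)) : colSum (Arr m) c = 0 := by
  unfold colSum
  have hc := c.isLt
  rw [← Finset.sum_subset (Finset.subset_univ
      ({⟨2*((c:ℕ)/2)+0, by omega⟩,
        ⟨2*((c:ℕ)/2)+1, by omega⟩,
        ⟨2*(if (c:ℕ)/2 = 0 then m-1 else (c:ℕ)/2-1)+0, by split_ifs <;> omega⟩,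
        ⟨2*(if (c:ℕ)/2 = 0 then m-1 else (c:ℕ)/2-1)+1, by split_ifs <;> omega⟩} : Finset (Fin (2*m))))
      (by
        intro r _ hrm
        have hnm : ¬ ((Arr m r c).isSome = true) := by
          intro hs
          exact hrm ((col_filter hm c) ▸ Finset.mem_filter.mpr ⟨Finset.mem_univ r, hs⟩)
        rw [Option.not_isSome_iff_eq_none.mp hnm]
        rfl)]
  rw [Finset.sum_insert (by
        simp only [Finset.mem_insert, Finset.mem_singleton, Fin.ext_iff]
        split_ifs <;> omega),
      Finset.sum_insert (by
        simp only [Finset.mem_insert, Finset.mem_singleton, Fin.ext_iff]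
        split_ifs <;> omega),
      Finset.sum_insert (by
        simp only [Finset.mem_singleton, Fin.ext_iff]
        split_ifs <;> omega),
      Finset.sum_singleton]
  exact col_sum_nat hm hc
lemma arr_shift_row {m : ℕ} (hm : 2 ≤ m) (r : Fin (2*m)) :
    (Finset.univ.filter fun c => 0 < (Arr m r c).getD 0).card =
      (Finset.univ.filter fun c => (Arr m r c).getD 0 < 0).card := by
  have h0 := mod2m (a := 2*((r:ℕ)/2)+0) (M := 2*m) (by omega)
  have h1 := mod2m (a := 2*((r:ℕ)/2)+1) (M := 2*m) (by omega)
  have h2 := mod2m (a := 2*((r:ℕ)/2)+2) (M := 2*m) (by omega)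
  have h3 := mod2m (a := 2*((r:ℕ)/2)+3) (M := 2*m) (by omega)
  have hr := r.isLt
  have hpos : (Finset.univ.filter fun c => 0 < (Arr m r c).getD 0) =
      ({⟨(2*((r:ℕ)/2)+0) % (2*m), Nat.mod_lt _ (by omega)⟩,
        ⟨(2*((r:ℕ)/2)+3) % (2*m), Nat.mod_lt _ (by omega)⟩} : Finset (Fin (2*m))) := by
    ext c
    have hc := c.isLt
    simp only [Finset.mem_filter, Finset.mem_univ, true_and, Finset.mem_insert,
      Finset.mem_singleton, Fin.ext_iff, Arr, Bf_pos_iff, Tval hr hc]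
    split_ifs at h0 h3 ⊢ <;> omega
  have hneg : (Finset.univ.filter fun c => (Arr m r c).getD 0 < 0) =
      ({⟨(2*((r:ℕ)/2)+1) % (2*m), Nat.mod_lt _ (by omega)⟩,
        ⟨(2*((r:ℕ)/2)+2) % (2*m), Nat.mod_lt _ (by omega)⟩} : Finset (Fin (2*m))) := by
    ext c
    have hc := c.isLt
    simp only [Finset.mem_filter, Finset.mem_univ, true_and, Finset.mem_insert,
      Finset.mem_singleton, Fin.ext_iff, Arr, Bf_neg_iff, Tval hr hc]
    split_ifs at h1 h2 ⊢ <;> omega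
  rw [hpos, hneg,
    Finset.card_insert_of_notMem (by
      simp only [Finset.mem_singleton, Fin.ext_iff]
      split_ifs at h0 h3 <;> omega),
    Finset.card_insert_of_notMem (by
      simp only [Finset.mem_singleton, Fin.ext_iff]
      split_ifs at h1 h2 <;> omega),
    Finset.card_singleton, Finset.card_singleton]

lemma arr_shift_col {m : ℕ} (hm : 2 ≤ m) (c : Fin (2*m)) :
    (Finset.univ.filter fun r => 0 < (Arr m r c).getD 0).card =
      (Finset.univ.filter fun r => (Arr m r c).getD 0 < 0).card := by
  have hc := c.isLt
  have hu : (c:ℕ)%2 = 0 ∨ (c:ℕ)%2 = 1 := by omega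
  have hS0 : ∀ a b : ℕ, (ha : a < 2*m) → (hb : b < 2*m) → a ≠ b →
      (({⟨a, ha⟩, ⟨b, hb⟩} : Finset (Fin (2*m))).card = 2) := by
    intro a b ha hb hab
    rw [Finset.card_insert_of_notMem (by simp only [Finset.mem_singleton, Fin.ext_iff]; omega),
      Finset.card_singleton]
  rcases hu with hu | hu
  · have hpos : (Finset.univ.filter fun r => 0 < (Arr m r c).getD 0) =
        ({⟨2*((c:ℕ)/2)+0, by omega⟩, ⟨2*((c:ℕ)/2)+1, by omega⟩} : Finset (Fin (2*m))) := by
      ext r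
      have hr := r.isLt
      simp only [Finset.mem_filter, Finset.mem_univ, true_and, Finset.mem_insert,
        Finset.mem_singleton, Fin.ext_iff, Arr, Bf_pos_iff, Tval hr hc]
      split_ifs <;> omega
    have hneg : (Finset.univ.filter fun r => (Arr m r c).getD 0 < 0) =
        ({⟨2*(if (c:ℕ)/2 = 0 then m-1 else (c:ℕ)/2-1)+0, by split_ifs <;> omega⟩,
          ⟨2*(if (c:ℕ)/2 = 0 then m-1 else (c:ℕ)/2-1)+1, by split_ifs <;> omega⟩} : Finset (Fin (2*m))) := by
      ext r
      have hr := r.isLt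
      simp only [Finset.mem_filter, Finset.mem_univ, true_and, Finset.mem_insert,
        Finset.mem_singleton, Fin.ext_iff, Arr, Bf_neg_iff, Tval hr hc]
      split_ifs <;> omega
    rw [hpos, hneg, hS0 _ _ _ _ (by omega), hS0 _ _ _ _ (by omega)]
  · have hpos : (Finset.univ.filter fun r => 0 < (Arr m r c).getD 0) =
        ({⟨2*(if (c:ℕ)/2 = 0 then m-1 else (c:ℕ)/2-1)+0, by split_ifs <;> omega⟩,
          ⟨2*(if (c:ℕ)/2 = 0 then m-1 else (c:ℕ)/2-1)+1, by split_ifs <;> omega⟩} : Finset (Fin (2*m))) := by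
      ext r
      have hr := r.isLt
      simp only [Finset.mem_filter, Finset.mem_univ, true_and, Finset.mem_insert,
        Finset.mem_singleton, Fin.ext_iff, Arr, Bf_pos_iff, Tval hr hc]
      split_ifs <;> omega
    have hneg : (Finset.univ.filter fun r => (Arr m r c).getD 0 < 0) =
        ({⟨2*((c:ℕ)/2)+0, by omega⟩, ⟨2*((c:ℕ)/2)+1, by omega⟩} : Finset (Fin (2*m))) := by
      ext r
      have hr := r.isLt
      simp only [Finset.mem_filter, Finset.mem_univ, true_and, Finset.mem_insert,
        Finset.mem_singleton, Fin.ext_iff, Arr, Bf_neg_iff, Tval hr hc]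
      split_ifs <;> omega
    rw [hpos, hneg, hS0 _ _ _ _ (by split_ifs <;> omega), hS0 _ _ _ _ (by omega)]
lemma arr_bounds {m : ℕ} (hm : 2 ≤ m) {r c : Fin (2*m)} {x : ℤ} (hx : Arr m r c = some x) :
    1 ≤ x.natAbs ∧ x.natAbs ≤ 8*m+1 ∧ x.natAbs ≠ 4*m+1 := by
  have hx' : Bf m ↑r ↑c = some x := hx
  obtain ⟨i, hi, i1, hi1, hii, H⟩ := Bsome hm r.isLt c.isLt hx'
  have e1 := succ_mod hi
  rcases H with ⟨h1, ⟨h3,h4⟩|⟨h3,h4⟩|⟨h3,h4⟩|⟨h3,h4⟩⟩ | ⟨h1, ⟨h3,h4⟩|⟨h3,h4⟩|⟨h3,h4⟩|⟨h3,h4⟩⟩ <;>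
    omega

lemma arr_exu {m : ℕ} (hm : 2 ≤ m) (x : ℕ) (hx1 : 1 ≤ x) (hx2 : x ≤ 8*m+1) (hx3 : x ≠ 4*m+1) :
    ∃! p : Fin (2*m) × Fin (2*m),
      Arr m p.1 p.2 = some (x:ℤ) ∨ Arr m p.1 p.2 = some (-(x:ℤ)) := by
  have main : ∀ (R C : ℕ) (hR : R < 2*m) (hC : C < 2*m) (v : ℤ), Bf m R C = some v →
      v.natAbs = x → ∃! p : Fin (2*m) × Fin (2*m),
        Arr m p.1 p.2 = some (x:ℤ) ∨ Arr m p.1 p.2 = some (-(x:ℤ)) := by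
    intro R C hR hC v hv hvx
    refine ⟨(⟨R,hR⟩,⟨C,hC⟩), ?_, ?_⟩
    · have hvv : v = (x:ℤ) ∨ v = -(x:ℤ) := by omega
      rcases hvv with h|h
      · exact Or.inl (h ▸ hv)
      · exact Or.inr (h ▸ hv)
    · rintro ⟨q1,q2⟩ hq
      have hq' : Bf m ↑q1 ↑q2 = some ((x:ℤ)) ∨ Bf m ↑q1 ↑q2 = some (-(x:ℤ)) := hq
      rcases hq' with h|h
      · obtain ⟨e1,e2,-⟩ := abs_inj hm q1.isLt q2.isLt hR hC h hv (by omega)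
        exact Prod.ext (Fin.ext e1) (Fin.ext e2)
      · obtain ⟨e1,e2,-⟩ := abs_inj hm q1.isLt q2.isLt hR hC h hv (by omega)
        exact Prod.ext (Fin.ext e1) (Fin.ext e2)
  have hcase : (x%2 = 1 ∧ x < 2*m) ∨ (x%2 = 1 ∧ 2*m < x ∧ x < 4*m+1) ∨
      (x%2 = 1 ∧ 4*m+1 < x ∧ x < 6*m+2) ∨ (x%2 = 1 ∧ 6*m+2 < x) ∨
      (x%2 = 0 ∧ x ≤ 2*m) ∨ (x%2 = 0 ∧ 2*m < x ∧ x ≤ 4*m) ∨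
      (x%2 = 0 ∧ 4*m < x ∧ x ≤ 6*m) ∨ (x%2 = 0 ∧ 6*m < x) := by omega
  rcases hcase with ⟨hp,hR⟩|⟨hp,hR1,hR2⟩|⟨hp,hR1,hR2⟩|⟨hp,hR⟩|⟨hp,hR⟩|⟨hp,hR1,hR2⟩|⟨hp,hR1,hR2⟩|⟨hp,hR⟩
  · -- a : y = 2i+1, ro=0, t=0
    have hi : x/2 < m := by omega
    have hv : Bf m (2*(x/2)+0) ((2*(x/2)+0)%(2*m)) = some (((2*(x/2)+1 : ℕ) : ℤ)) := by
      rw [Bf_at' hm hi (by omega) (by omega)]; simp [hval]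
    exact main _ _ (by omega) (Nat.mod_lt _ (by omega)) _ hv (by omega)
  · -- b : y = -(2m+2i+1), ro=0, t=1
    have hi : x/2 - m < m := by omega
    have hv : Bf m (2*(x/2-m)+0) ((2*(x/2-m)+1)%(2*m)) = some (-((2*m+2*(x/2-m)+1 : ℕ) : ℤ)) := by
      rw [Bf_at' hm hi (by omega) (by omega)]; simp [hval]
    exact main _ _ (by omega) (Nat.mod_lt _ (by omega)) _ hv (by omega)
  · -- d : y = -(4m+2i+3), ro=1, t=1
    have hi : x/2 - 2*m - 1 < m := by omega
    have hv : Bf m (2*(x/2-2*m-1)+1) ((2*(x/2-2*m-1)+1)%(2*m)) = some (-((4*m+2*(x/2-2*m-1)+3 : ℕ) : ℤ)) := by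
      rw [Bf_at' hm hi (by omega) (by omega)]; simp [hval]
    exact main _ _ (by omega) (Nat.mod_lt _ (by omega)) _ hv (by omega)
  · -- c : y = 6m+2i+3, ro=1, t=0
    have hi : x/2 - 3*m - 1 < m := by omega
    have hv : Bf m (2*(x/2-3*m-1)+1) ((2*(x/2-3*m-1)+0)%(2*m)) = some (((6*m+2*(x/2-3*m-1)+3 : ℕ) : ℤ)) := by
      rw [Bf_at' hm hi (by omega) (by omega)]; simp [hval]
    exact main _ _ (by omega) (Nat.mod_lt _ (by omega)) _ hv (by omega)
  · -- e : y = -(2i'+2), ro=0, t=2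
    have hi' : x/2 - 1 < m := by omega
    obtain ⟨ip, hip, hipm⟩ : ∃ ip, ip < m ∧ (ip+1)%m = x/2-1 :=
      ⟨if x/2-1 = 0 then m-1 else x/2-1-1, by split_ifs <;> omega, predm hm hi'⟩
    have hv : Bf m (2*ip+0) ((2*ip+2)%(2*m)) = some (-((2*((ip+1)%m)+2 : ℕ) : ℤ)) := by
      rw [Bf_at' hm hip (by omega) (by omega)]; simp [hval]
    rw [hipm] at hv
    exact main _ _ (by omega) (Nat.mod_lt _ (by omega)) _ hv (by omega)
  · -- f : y = 2m+2i'+2, ro=0, t=3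
    have hi' : x/2 - m - 1 < m := by omega
    obtain ⟨ip, hip, hipm⟩ : ∃ ip, ip < m ∧ (ip+1)%m = x/2-m-1 :=
      ⟨if x/2-m-1 = 0 then m-1 else x/2-m-1-1, by split_ifs <;> omega, predm hm hi'⟩
    have hv : Bf m (2*ip+0) ((2*ip+3)%(2*m)) = some (((2*m+2*((ip+1)%m)+2 : ℕ) : ℤ)) := by
      rw [Bf_at' hm hip (by omega) (by omega)]; simp [hval]
    rw [hipm] at hv
    exact main _ _ (by omega) (Nat.mod_lt _ (by omega)) _ hv (by omega)
  · -- h : y = 4m+2i'+2, ro=1, t=3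
    have hi' : x/2 - 2*m - 1 < m := by omega
    obtain ⟨ip, hip, hipm⟩ : ∃ ip, ip < m ∧ (ip+1)%m = x/2-2*m-1 :=
      ⟨if x/2-2*m-1 = 0 then m-1 else x/2-2*m-1-1, by split_ifs <;> omega, predm hm hi'⟩
    have hv : Bf m (2*ip+1) ((2*ip+3)%(2*m)) = some (((4*m+2*((ip+1)%m)+2 : ℕ) : ℤ)) := by
      rw [Bf_at' hm hip (by omega) (by omega)]; simp [hval]
    rw [hipm] at hv
    exact main _ _ (by omega) (Nat.mod_lt _ (by omega)) _ hv (by omega)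
  · -- g : y = -(6m+2i'+2), ro=1, t=2
    have hi' : x/2 - 3*m - 1 < m := by omega
    obtain ⟨ip, hip, hipm⟩ : ∃ ip, ip < m ∧ (ip+1)%m = x/2-3*m-1 :=
      ⟨if x/2-3*m-1 = 0 then m-1 else x/2-3*m-1-1, by split_ifs <;> omega, predm hm hi'⟩
    have hv : Bf m (2*ip+1) ((2*ip+2)%(2*m)) = some (-((6*m+2*((ip+1)%m)+2 : ℕ) : ℤ)) := by
      rw [Bf_at' hm hip (by omega) (by omega)]; simp [hval]
    rw [hipm] at hv
    exact main _ _ (by omega) (Nat.mod_lt _ (by omega)) _ hv (by omega)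

lemma arr_cyc {m : ℕ} (hm : 2 ≤ m) : CycSKDiagonal 2 2 (Arr m) := by
  refine ⟨⟨m, rfl⟩, -1, 0, fun r c => ?_⟩
  have hr := r.isLt
  have hc := c.isLt
  have hc0 : ((c:ℕ)+0) % (2*m) = (c:ℕ) := by rw [Nat.add_zero]; exact Nat.mod_eq_of_lt hc
  have em : 2*m/2 = m := by omega
  have hs2 : (r:ℕ)/2 < m := by omega
  constructor
  · intro hs
    have hT : ((c:ℕ) + 2*m - 2*((r:ℕ)/2)) % (2*m) < 4 := Bf_isSome.mp hs
    rw [Tval hr hc] at hT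
    have hd : (c:ℕ)/2 = (r:ℕ)/2 ∨ (c:ℕ)/2 = ((r:ℕ)/2+1)%m := by
      have := succ_mod hs2
      split_ifs at hT <;> omega
    rcases hd with hd | hd
    · refine ⟨1, by omega, ?_⟩
      rw [hc0, hd]
      push_cast
      ring
    · refine ⟨0, by omega, ?_⟩
      rw [hc0, hd]
      have hcast : ((((r:ℕ)/2+1)%m : ℕ) : ZMod (2*m/2)) = ((((r:ℕ)/2+1 : ℕ) : ℕ) : ZMod (2*m/2)) := by
        rw [ZMod.natCast_eq_natCast_iff, em]
        exact Nat.mod_modEq _ m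
      rw [hcast]
      push_cast
      ring
  · rintro ⟨j, hj, hE⟩
    rw [hc0] at hE
    show (Bf m ↑r ↑c).isSome = true
    rw [Bf_isSome, Tval hr hc]
    have hsm := succ_mod hs2
    interval_cases j
    · have h2 : (((c:ℕ)/2 : ℕ) : ZMod (2*m/2)) = ((((r:ℕ)/2+1 : ℕ) : ℕ) : ZMod (2*m/2)) := by
        push_cast at hE ⊢
        linear_combination -hE
      rw [ZMod.natCast_eq_natCast_iff, em] at h2
      have h4 : (c:ℕ)/2 % m = ((r:ℕ)/2+1) % m := h2
      rw [Nat.mod_eq_of_lt (by omega)] at h4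
      split_ifs <;> omega
    · have h2 : (((c:ℕ)/2 : ℕ) : ZMod (2*m/2)) = ((((r:ℕ)/2 : ℕ) : ℕ) : ZMod (2*m/2)) := by
        push_cast at hE ⊢
        linear_combination -hE
      rw [ZMod.natCast_eq_natCast_iff, em] at h2
      have h4 : (c:ℕ)/2 % m = ((r:ℕ)/2) % m := h2
      rw [Nat.mod_eq_of_lt (by omega), Nat.mod_eq_of_lt (by omega)] at h4
      split_ifs <;> omega


/-- for every even `n ≥ 4` there exists a shiftable, integer,
cyclically `(2,2)`-diagonal `H_4(n;4)`. -/
theorem intHeffter_H4_cyc22diag (n : ℕ) (hn : 4 ≤ n) (hne : Even n) :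
    ∃ A : Fin n → Fin n → Option ℤ,
      IsIntHeffter n 4 4 A ∧ Shiftable A ∧ CycSKDiagonal 2 2 A := by
  obtain ⟨k, hk⟩ := hne
  obtain ⟨m, rfl⟩ : ∃ m, n = 2*m := ⟨k, by omega⟩
  have hm : 2 ≤ m := by omega
  refine ⟨Arr m, ⟨fun r => arr_rowFilled hm r, fun c => arr_colFilled hm c,
    fun r => arr_rowSum hm r, fun c => arr_colSum hm c, ?_, ?_⟩,
    ⟨fun r => arr_shift_row hm r, fun c => arr_shift_col hm c⟩, arr_cyc hm⟩
  · intro r c x hx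
    have h := arr_bounds hm hx
    have e2 : (2*(2*m)*4+4)/2 = 8*m+2 := by omega
    have e4 : (2*(2*m)*4+4)/4 = 4*m+1 := by omega
    refine ⟨h.1, by omega, ?_⟩
    rw [e4]
    rintro ⟨q, hq⟩
    have hq2 : q = 0 ∨ q = 1 ∨ 2 ≤ q := by omega
    rcases hq2 with hq2 | hq2 | hq2
    · subst hq2; omega
    · subst hq2; omega
    · have hmul : (4*m+1)*2 ≤ (4*m+1)*q := Nat.mul_le_mul_left _ hq2
      omega
  · intro x hx1 hx2 hx3
    have e2 : (2*(2*m)*4+4)/2 = 8*m+2 := by omega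
    have e4 : (2*(2*m)*4+4)/4 = 4*m+1 := by omega
    rw [e2] at hx2
    rw [e4] at hx3
    have hne1 : x ≠ 4*m+1 := fun h => hx3 ⟨1, by omega⟩
    have hne2 : x ≠ 8*m+2 := fun h => hx3 ⟨2, by omega⟩
    exact arr_exu hm x hx1 (by omega) hne1
end

section
/- For every integer n ≡ 0 (mod 4) with n ≥ 8, there exists an n×n shiftable, cyclically (2,3)-diagonal, partially filled integer array B whose entries have pairwise distinct absolute values such that: (1) supp(B) = [1, 6n+3] \ {n+1, 3n+2, 5n+3}; (2) the elements in every row and every column of B sum to 0 in Z. -/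
/-!
Write `n = 2m` and read `B` as an `m × m` array of `2 × 2` blocks indexed by `ℤ/m`, the block
`(i, j)` being filled iff `i - j ∈ {0, 1, 2}`. Every filled block has positive diagonal and
negative off-diagonal entries, which makes `B` shiftable. The block on diagonal `k` takes its
absolute values in `c_k ± [1, 2m]`, where `c_k = (4m+1)k + 2m + 1` runs through the omitted values
`n + 1, 3n + 2, 5n + 3`; the offsets are `2x + 1` and `2x + 2` for `x ∈ {i, i - 1, i - 2}`,
arranged so that, as `i` runs over `ℤ/m`, every offset occurs exactly once with each sign. This
uses that `m` is even: the parity of the representative of `i` then flips under `i ↦ i - 1`,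
also when wrapping around. Along every row and column the offsets cancel, so all line sums vanish.
Finally `B` has `12m` filled cells with distinct absolute values lying in a set of size `12m`,
which is therefore the support.
-/

open Finset

theorem suppSet_eq_of_distinctAbs {a b : ℕ} {A : Fin a → Fin b → Option ℤ} {S : Finset ℕ}
    (hA : DistinctAbs A) (hS : ∀ i j x, A i j = some x → x.natAbs ∈ S)
    (hcard : #S ≤ #(univ.filter fun p : Fin a × Fin b => (A p.1 p.2).isSome)) :
    suppSet A = S := by
  set F := univ.filter fun p : Fin a × Fin b => (A p.1 p.2).isSome
  set φ : Fin a × Fin b → ℕ := fun p => ((A p.1 p.2).getD 0).natAbs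
  have hφ : ∀ p x, A p.1 p.2 = some x → φ p = x.natAbs := fun p x hx => by simp [φ, hx]
  have hF : ∀ p, p ∈ F ↔ ∃ x, A p.1 p.2 = some x := fun p => by
    simp [F, Option.isSome_iff_exists]
  have hinj : Set.InjOn φ F := by
    intro p hp p' hp' h
    obtain ⟨x, hx⟩ := (hF p).1 hp
    obtain ⟨y, hy⟩ := (hF p').1 hp'
    exact hA _ _ _ _ x y hx hy (by rw [← hφ p x hx, ← hφ p' y hy, h])
  have himage : F.image φ = S := by
    refine eq_of_subset_of_card_le (fun a ha => ?_) (by rwa [card_image_of_injOn hinj])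
    obtain ⟨p, hp, rfl⟩ := mem_image.1 ha
    obtain ⟨x, hx⟩ := (hF p).1 hp
    rw [hφ p x hx]
    exact hS _ _ x hx
  ext c
  rw [← himage, coe_image]
  constructor
  · rintro ⟨i, j, x, hx, rfl⟩
    exact ⟨(i, j), (hF _).2 ⟨x, hx⟩, hφ (i, j) x hx⟩
  · rintro ⟨p, hp, rfl⟩
    obtain ⟨x, hx⟩ := (hF p).1 hp
    exact ⟨p.1, p.2, x, hx, (hφ p x hx).symm⟩

namespace ZMod

variable {m : ℕ} [NeZero m]

theorem val_sub_natCast_cases (i : ZMod m) {t : ℕ} (ht : t ≤ m) :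
    t ≤ i.val ∧ (i - t).val + t = i.val ∨ i.val < t ∧ (i - t).val + t = i.val + m := by
  have hi := i.val_lt
  have hcast : i - t = ((i.val + m - t : ℕ) : ZMod m) := by
    rw [Nat.cast_sub (by omega)]
    simp
  rw [hcast, val_natCast]
  rcases le_or_gt t i.val with h | h
  · rw [show i.val + m - t = m + (i.val - t) by omega, Nat.add_mod_left,
      Nat.mod_eq_of_lt (by omega)]
    omega
  · rw [Nat.mod_eq_of_lt (by omega)]
    omega

theorem val_add_natCast_cases (i : ZMod m) {t : ℕ} (ht : t ≤ m) :
    (i + t).val = i.val + t ∨ (i + t).val + m = i.val + t := by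
  have hi := i.val_lt
  rw [val_add, val_natCast]
  rcases lt_or_eq_of_le ht with ht | rfl
  · rw [Nat.mod_eq_of_lt ht]
    rcases lt_or_ge (i.val + t) m with h | h
    · left; exact Nat.mod_eq_of_lt h
    · right
      rw [show i.val + t = (i.val + t - m) + m by omega, Nat.add_mod_right,
        Nat.mod_eq_of_lt (by omega)]
  · right
    rw [Nat.mod_self, add_zero, Nat.mod_eq_of_lt hi]

theorem sum_ite_val_lt {M : Type*} [AddCommMonoid M] {s : ℕ} (hs : s ≤ m)
    (G : ZMod m → ℕ → M) :
    ∑ d : ZMod m, (if d.val < s then G d d.val else 0) = ∑ k ∈ range s, G k k := by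
  rw [← sum_filter]
  refine sum_nbij' val (fun k => (k : ZMod m)) ?_ ?_ ?_ ?_ ?_
  · intro d hd
    simp_all
  · intro k hk
    simp only [mem_range, mem_filter, mem_univ, true_and] at hk ⊢
    rwa [val_cast_of_lt (by omega)]
  · intro d _
    exact natCast_zmod_val d
  · intro k hk
    simp only [mem_range] at hk
    exact val_cast_of_lt (by omega)
  · intro d _
    rw [natCast_zmod_val]

end ZMod

section BlockArray

variable {m : ℕ} [NeZero m]

def pairEquiv (m : ℕ) [NeZero m] : Fin (2 * m) ≃ ZMod m × Fin 2 where
  toFun r := (((r : ℕ) / 2 : ℕ), ⟨(r : ℕ) % 2, Nat.mod_lt _ two_pos⟩)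
  invFun x := ⟨2 * x.1.val + x.2, by have := x.1.val_lt; have := x.2.isLt; omega⟩
  left_inv r := by
    have hr := r.isLt
    ext
    simp only [ZMod.val_natCast, Nat.mod_eq_of_lt (show (r : ℕ) / 2 < m by omega)]
    omega
  right_inv x := by
    have := x.2.isLt
    ext
    · simp [show (2 * x.1.val + x.2) / 2 = x.1.val by omega]
    · simp; omega

def blockEntry (E : ZMod m → ℕ → Matrix (Fin 2) (Fin 2) ℤ) (x y : ZMod m × Fin 2) :
    Option ℤ :=
  if (x.1 - y.1).val < 3 then some (E x.1 (x.1 - y.1).val x.2 y.2) else none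

def blockArray (E : ZMod m → ℕ → Matrix (Fin 2) (Fin 2) ℤ) (r c : Fin (2 * m)) : Option ℤ :=
  blockEntry E (pairEquiv m r) (pairEquiv m c)

variable (E : ZMod m → ℕ → Matrix (Fin 2) (Fin 2) ℤ)

theorem cycSKDiagonal_blockArray : CycSKDiagonal 2 3 (blockArray E) := by
  refine ⟨dvd_mul_right 2 m, ?_⟩
  rw [Nat.mul_div_cancel_left m two_pos]
  refine ⟨0, 0, fun r c => ?_⟩
  simp only [blockArray, blockEntry, pairEquiv, Equiv.coe_fn_mk, add_zero,
    Nat.mod_eq_of_lt c.isLt, zero_add]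
  split_ifs with h
  · exact iff_of_true (by simp [h]) ⟨_, h, (ZMod.natCast_zmod_val _).symm⟩
  · refine iff_of_false (by simp [h]) ?_
    rintro ⟨j, hj, hj'⟩
    rw [hj', ZMod.val_natCast] at h
    exact h (lt_of_le_of_lt (Nat.mod_le j m) hj)

variable {M : Type*} [AddCommMonoid M] (Φ : Option ℤ → M)

theorem sum_blockArray_row (hm : 3 ≤ m) (hΦ : Φ none = 0) (r : Fin (2 * m)) :
    ∑ c, Φ (blockArray E r c) =
      ∑ k ∈ range 3, ∑ q, Φ (some (E (pairEquiv m r).1 k (pairEquiv m r).2 q)) := by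
  set x := pairEquiv m r
  calc ∑ c, Φ (blockArray E r c)
      = ∑ j, ∑ q, Φ (blockEntry E x (j, q)) :=
        ((pairEquiv m).sum_comp fun z => Φ (blockEntry E x z)).trans (Fintype.sum_prod_type _)
    _ = ∑ d, ∑ q, Φ (blockEntry E x (x.1 - d, q)) :=
        (Fintype.sum_equiv (Equiv.subLeft x.1) _ _ fun _ => rfl).symm
    _ = ∑ d : ZMod m, if d.val < 3 then ∑ q, Φ (some (E x.1 d.val x.2 q)) else 0 := by
        refine Fintype.sum_congr _ _ fun d => ?_
        simp only [blockEntry, sub_sub_cancel]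
        split_ifs <;> simp [hΦ]
    _ = _ := ZMod.sum_ite_val_lt hm fun _ k => ∑ q, Φ (some (E x.1 k x.2 q))

theorem sum_blockArray_col (hm : 3 ≤ m) (hΦ : Φ none = 0) (c : Fin (2 * m)) :
    ∑ r, Φ (blockArray E r c) =
      ∑ k ∈ range 3, ∑ p, Φ (some (E ((pairEquiv m c).1 + k) k p (pairEquiv m c).2)) := by
  set y := pairEquiv m c
  calc ∑ r, Φ (blockArray E r c)
      = ∑ i, ∑ p, Φ (blockEntry E (i, p) y) :=
        ((pairEquiv m).sum_comp fun z => Φ (blockEntry E z y)).trans (Fintype.sum_prod_type _)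
    _ = ∑ d, ∑ p, Φ (blockEntry E (y.1 + d, p) y) :=
        (Fintype.sum_equiv (Equiv.addLeft y.1) _ _ fun _ => rfl).symm
    _ = ∑ d : ZMod m, if d.val < 3 then ∑ p, Φ (some (E (y.1 + d) d.val p y.2)) else 0 := by
        refine Fintype.sum_congr _ _ fun d => ?_
        simp only [blockEntry, add_sub_cancel_left]
        split_ifs <;> simp [hΦ]
    _ = _ := ZMod.sum_ite_val_lt hm fun d k => ∑ p, Φ (some (E (y.1 + d) k p y.2))

theorem rowSum_blockArray (hm : 3 ≤ m) (r : Fin (2 * m)) :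
    rowSum (blockArray E) r = ∑ k ∈ range 3, ∑ q, E (pairEquiv m r).1 k (pairEquiv m r).2 q := by
  simpa [rowSum] using sum_blockArray_row E (fun o => o.getD 0) hm rfl r

theorem colSum_blockArray (hm : 3 ≤ m) (c : Fin (2 * m)) :
    colSum (blockArray E) c =
      ∑ k ∈ range 3, ∑ p, E ((pairEquiv m c).1 + k) k p (pairEquiv m c).2 := by
  simpa [colSum] using sum_blockArray_col E (fun o => o.getD 0) hm rfl c

theorem card_filter_isSome_blockArray (hm : 3 ≤ m) :
    #(univ.filter fun p : Fin (2 * m) × Fin (2 * m) => (blockArray E p.1 p.2).isSome) = 12 * m := by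
  rw [card_filter, Fintype.sum_prod_type]
  simp_rw [sum_blockArray_row E (fun o => if o.isSome then 1 else 0) hm rfl]
  simp
  ring

theorem shiftable_blockArray (hm : 3 ≤ m)
    (hE : ∀ i k, k < 3 → 0 < E i k 0 0 ∧ E i k 0 1 < 0 ∧ E i k 1 0 < 0 ∧ 0 < E i k 1 1) :
    Shiftable (blockArray E) := by
  have hblock : ∀ i k, k ∈ range 3 → ∀ p : Fin 2,
      ∑ q, (if 0 < E i k p q then 1 else 0) = ∑ q, (if E i k p q < 0 then 1 else 0) ∧
      ∑ q, (if 0 < E i k q p then 1 else 0) = ∑ q, (if E i k q p < 0 then 1 else 0) := by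
    intro i k hk p
    obtain ⟨h00, h01, h10, h11⟩ := hE i k (mem_range.1 hk)
    fin_cases p <;> simp only [Fin.sum_univ_two] <;> simp [h00, h01, h10, h11, h00.not_gt,
      h01.not_gt, h10.not_gt, h11.not_gt]
  constructor
  · intro r
    rw [card_filter, card_filter,
      sum_blockArray_row E (fun o => if 0 < o.getD 0 then 1 else 0) hm rfl,
      sum_blockArray_row E (fun o => if o.getD 0 < 0 then 1 else 0) hm rfl]
    exact sum_congr rfl fun k hk => (hblock _ k hk _).1
  · intro c
    rw [card_filter, card_filter,
      sum_blockArray_col E (fun o => if 0 < o.getD 0 then 1 else 0) hm rfl,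
      sum_blockArray_col E (fun o => if o.getD 0 < 0 then 1 else 0) hm rfl]
    exact sum_congr rfl fun k hk => (hblock _ k hk _).2

theorem distinctAbs_blockArray
    (hE : ∀ i i' k k' p p' q q', k < 3 → k' < 3 →
      (E i k p q).natAbs = (E i' k' p' q').natAbs → i = i' ∧ k = k' ∧ p = p' ∧ q = q') :
    DistinctAbs (blockArray E) := by
  intro r c r' c' x y hx hy hxy
  simp only [blockArray, blockEntry] at hx hy
  split_ifs at hx hy with h h'
  cases hx; cases hy
  obtain ⟨hi, hk, hp, hq⟩ := hE _ _ _ _ _ _ _ _ h h' hxy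
  have hj : (pairEquiv m c).1 = (pairEquiv m c').1 := by
    rw [← sub_right_inj (a := (pairEquiv m r).1), ZMod.val_injective m hk, hi]
  rw [(pairEquiv m).injective (Prod.ext hi hp), (pairEquiv m).injective (Prod.ext hj hq)]

theorem exists_of_blockArray_eq_some {r c : Fin (2 * m)} {x : ℤ} (h : blockArray E r c = some x) :
    ∃ i k p q, k < 3 ∧ E i k p q = x := by
  simp only [blockArray, blockEntry] at h
  split_ifs at h with hk
  exact ⟨_, _, _, _, hk, Option.some_inj.1 h⟩

end BlockArray

section Cyc23Block

variable {m : ℕ}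

def oddLift (x : ZMod m) : ℤ := 2 * x.val + 1

def evenLift (x : ZMod m) : ℤ := 2 * x.val + 2

def cyc23Block (i : ZMod m) : ℕ → Matrix (Fin 2) (Fin 2) ℤ
  | 0 =>
    let c : ℤ := 2 * m + 1
    if i.val % 2 = 0 then
      !![c + oddLift i, -(c + evenLift (i - 1));
        -(c - evenLift (i - 1)), c - oddLift i]
    else
      !![c + oddLift i, -(c - evenLift (i - 1));
        -(c + evenLift (i - 1)), c - oddLift i]
  | 1 =>
    let c : ℤ := 6 * m + 2
    if i.val % 2 = 0 then
      !![c - oddLift i, -(c + evenLift (i - 2));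
        -(c - evenLift (i - 2)), c + oddLift i]
    else
      !![c - evenLift i, -(c - oddLift (i - 2));
        -(c + oddLift (i - 2)), c + evenLift i]
  | 2 =>
    let c : ℤ := 10 * m + 3
    if i.val % 2 = 0 then
      !![c + evenLift (i - 1), -(c - evenLift (i - 2));
        -(c + evenLift (i - 2)), c - evenLift (i - 1)]
    else
      !![c - oddLift (i - 2), -(c + oddLift (i - 1));
        -(c - oddLift (i - 1)), c + oddLift (i - 2)]
  | _ => 0

theorem cyc23Block_row_sum (i : ZMod m) (p : Fin 2) :
    ∑ k ∈ range 3, ∑ q, cyc23Block i k p q = 0 := by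
  by_cases h : i.val % 2 = 0 <;> fin_cases p <;>
    simp [cyc23Block, oddLift, evenLift, sum_range_succ, Fin.sum_univ_two, h] <;> ring

variable [NeZero m]

theorem cyc23Block_sign (i : ZMod m) {k : ℕ} (hk : k < 3) :
    0 < cyc23Block i k 0 0 ∧ cyc23Block i k 0 1 < 0 ∧ cyc23Block i k 1 0 < 0 ∧
      0 < cyc23Block i k 1 1 := by
  have := i.val_lt
  have := (i - 1).val_lt
  have := (i - 2).val_lt
  interval_cases k <;> by_cases h : i.val % 2 = 0 <;>
    simp [cyc23Block, oddLift, evenLift, h, -ZMod.natCast_val] <;> omega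

theorem cyc23Block_col_sum (hm : 2 ≤ m) (hm2 : m % 2 = 0) (j : ZMod m) (q : Fin 2) :
    ∑ k ∈ range 3, ∑ p, cyc23Block (j + (k : ZMod m)) k p q = 0 := by
  have h1 := j.val_add_natCast_cases (t := 1) (by omega)
  have h2 := j.val_add_natCast_cases (t := 2) (by omega)
  have := j.val_lt
  simp only [Nat.cast_one, Nat.cast_ofNat] at h1 h2
  have e2 : j + 1 - 2 = j - 1 := by ring
  have e3 : j + 2 - 1 = j + 1 := by ring
  have e4 : j + 2 - 2 = j := by ring
  simp only [sum_range_succ, sum_range_zero, Fin.sum_univ_two, Nat.cast_zero, Nat.cast_one,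
    Nat.cast_ofNat, add_zero, zero_add, cyc23Block, e2, e3, e4]
  fin_cases q <;> split_ifs <;> simp [oddLift, evenLift, -ZMod.natCast_val] <;> omega

theorem natAbs_cyc23Block_mem_band (i : ZMod m) {k : ℕ} (hk : k < 3) (p q : Fin 2) :
    (4 * m + 1) * k < (cyc23Block i k p q).natAbs ∧
      (cyc23Block i k p q).natAbs ≤ (4 * m + 1) * (k + 1) ∧
      (cyc23Block i k p q).natAbs ≠ (4 * m + 1) * k + 2 * m + 1 := by
  have := i.val_lt
  have := (i - 1).val_lt
  have := (i - 2).val_lt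
  interval_cases k <;> by_cases h : i.val % 2 = 0 <;> fin_cases p <;> fin_cases q <;>
    simp [cyc23Block, oddLift, evenLift, h, -ZMod.natCast_val] <;> omega

set_option maxHeartbeats 1000000 in
theorem eq_of_natAbs_cyc23Block_eq_of_diag_eq (hm : 2 ≤ m) (hm2 : m % 2 = 0) {i i' : ZMod m}
    {k : ℕ} (hk : k < 3) {p q p' q' : Fin 2}
    (h : (cyc23Block i k p q).natAbs = (cyc23Block i' k p' q').natAbs) :
    i = i' ∧ p = p' ∧ q = q' := by
  suffices i.val = i'.val ∧ p = p' ∧ q = q' from ⟨ZMod.val_injective m this.1, this.2⟩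
  have := i.val_lt
  have := i'.val_lt
  have a1 := i.val_sub_natCast_cases (t := 1) (by omega)
  have a2 := i.val_sub_natCast_cases (t := 2) (by omega)
  have b1 := i'.val_sub_natCast_cases (t := 1) (by omega)
  have b2 := i'.val_sub_natCast_cases (t := 2) (by omega)
  simp only [Nat.cast_one, Nat.cast_ofNat] at a1 a2 b1 b2
  rw [Int.natAbs_eq_natAbs_iff] at h
  interval_cases k <;> by_cases hi : i.val % 2 = 0 <;> by_cases hi' : i'.val % 2 = 0 <;>
    fin_cases p <;> fin_cases q <;> fin_cases p' <;> fin_cases q' <;>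
    simp only [cyc23Block, hi, hi', ↓reduceIte, Matrix.of_apply, Matrix.cons_val',
      Matrix.cons_val_zero, Matrix.cons_val_one, Matrix.cons_val_fin_one, oddLift, evenLift,
      Fin.zero_eta, Fin.mk_one, Fin.ext_iff, Fin.val_zero, Fin.val_one, and_true] at h ⊢ <;> omega

theorem natAbs_cyc23Block_mem (i : ZMod m) {k : ℕ} (hk : k < 3) (p q : Fin 2) :
    (cyc23Block i k p q).natAbs ∈ Icc 1 (12 * m + 3) \ {2 * m + 1, 6 * m + 2, 10 * m + 3} := by
  have := natAbs_cyc23Block_mem_band i hk p q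
  simp only [mem_sdiff, mem_Icc, mem_insert, mem_singleton]
  interval_cases k <;> omega

theorem eq_of_natAbs_cyc23Block_eq (hm : 2 ≤ m) (hm2 : m % 2 = 0) {i i' : ZMod m}
    {k k' : ℕ} (hk : k < 3) (hk' : k' < 3) {p q p' q' : Fin 2}
    (h : (cyc23Block i k p q).natAbs = (cyc23Block i' k' p' q').natAbs) :
    i = i' ∧ k = k' ∧ p = p' ∧ q = q' := by
  obtain rfl : k = k' := by
    have := natAbs_cyc23Block_mem_band i hk p q
    have := natAbs_cyc23Block_mem_band i' hk' p' q'
    interval_cases k <;> interval_cases k' <;> omega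
  obtain ⟨hi, hp, hq⟩ := eq_of_natAbs_cyc23Block_eq_of_diag_eq hm hm2 hk h
  exact ⟨hi, rfl, hp, hq⟩

end Cyc23Block

/-- for every `n ≡ 0 (mod 4)`, `n ≥ 8`, there is an `n × n`
shiftable, cyclically `(2,3)`-diagonal partially filled integer array with
pairwise distinct absolute values, support `[1,6n+3] \ {n+1, 3n+2, 5n+3}` and
zero row and column sums. -/
theorem shiftable_cyc23diag_aux (n : ℕ) (hn : 8 ≤ n) (hn4 : n % 4 = 0) :
    ∃ B : Fin n → Fin n → Option ℤ,
      Shiftable B ∧ CycSKDiagonal 2 3 B ∧ DistinctAbs B ∧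
      suppSet B =
        {a : ℕ | 1 ≤ a ∧ a ≤ 6 * n + 3 ∧ a ≠ n + 1 ∧ a ≠ 3 * n + 2 ∧ a ≠ 5 * n + 3} ∧
      (∀ i, rowSum B i = 0) ∧ (∀ j, colSum B j = 0) := by
  obtain ⟨m, rfl⟩ : ∃ m, n = 2 * m := ⟨n / 2, by omega⟩
  have : NeZero m := ⟨by omega⟩
  have hm : 3 ≤ m := by omega
  have hm2 : m % 2 = 0 := by omega
  have hdistinct : DistinctAbs (blockArray (cyc23Block (m := m))) :=
    distinctAbs_blockArray _ fun _ _ _ _ _ _ _ _ hk hk' h =>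
      eq_of_natAbs_cyc23Block_eq (by omega) hm2 hk hk' h
  refine ⟨blockArray cyc23Block, shiftable_blockArray _ hm fun i _ hk => cyc23Block_sign i hk,
    cycSKDiagonal_blockArray _, hdistinct, ?_, fun r => ?_, fun c => ?_⟩
  · have hcard : #(Icc 1 (12 * m + 3) \ {2 * m + 1, 6 * m + 2, 10 * m + 3}) = 12 * m := by
      rw [card_sdiff_of_subset (fun a => by simp; omega), Nat.card_Icc,
        card_eq_three.2 ⟨_, _, _, by omega, by omega, by omega, rfl⟩]
      omega
    rw [suppSet_eq_of_distinctAbs hdistinct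
      (fun r c x hx => by
        obtain ⟨i, k, p, q, hk, rfl⟩ := exists_of_blockArray_eq_some _ hx
        exact natAbs_cyc23Block_mem i hk p q)
      (by rw [hcard, card_filter_isSome_blockArray _ hm])]
    ext a
    simp
    omega
  · rw [rowSum_blockArray _ hm, cyc23Block_row_sum]
  · rw [colSum_blockArray _ hm, cyc23Block_col_sum (by omega) hm2]
end
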